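/- arXiv:math/0509207 — 5 statements merged into one kernel-verified Lean document; each statement's English description precedes it below -/
import Mathlib

section
/- Let f and g be standard real-rooted polynomials with g ⪯ f, and let a, b, c, d ≥ 0 with ad ≥ bc. Then cf + dg ⪯ af + bg; in particular g ⪯ af + bg ⪯ f. -/
set_option maxHeartbeats 1000000


open Polynomial Finset

/-- A real polynomial has only real zeros (all its zeros are real):
the number of real roots (with multiplicity) equals the degree. -/
def RealRooted (f : Polynomial ℝ) : Prop := f.roots.card = f.natDegree

/-- A real polynomial is standard if it is zero or has positive leading coefficient. -/
def Standard (f : Polynomial ℝ) : Prop := f = 0 ∨ 0 < f.leadingCoeff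

/-- `g` alternates left of `f`: both have the same degree `n`, both are real-rooted,
and with zeros listed in nonincreasing order `r 0 ≥ r 1 ≥ …` (for `f`) and
`s 0 ≥ s 1 ≥ …` (for `g`) we have `s n ≤ r n ≤ s (n-1) ≤ … ≤ s 0 ≤ r 0`. -/
def AltLeft (g f : Polynomial ℝ) : Prop :=
  ∃ n : ℕ, ∃ r s : Fin n → ℝ,
    f = Polynomial.C f.leadingCoeff * ∏ i, (Polynomial.X - Polynomial.C (r i)) ∧
    g = Polynomial.C g.leadingCoeff * ∏ i, (Polynomial.X - Polynomial.C (s i)) ∧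
    (∀ i : Fin n, s i ≤ r i) ∧
    (∀ (i : ℕ) (h : i + 1 < n), r ⟨i + 1, h⟩ ≤ s ⟨i, Nat.lt_of_succ_lt h⟩)

/-- `g` interlaces `f`: `deg f = deg g + 1` and the zeros weakly interleave. -/
def Interlaces (g f : Polynomial ℝ) : Prop :=
  ∃ n : ℕ, ∃ r : Fin (n + 1) → ℝ, ∃ s : Fin n → ℝ,
    f = Polynomial.C f.leadingCoeff * ∏ i, (Polynomial.X - Polynomial.C (r i)) ∧
    g = Polynomial.C g.leadingCoeff * ∏ i, (Polynomial.X - Polynomial.C (s i)) ∧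
    ∀ i : Fin n, r i.succ ≤ s i ∧ s i ≤ r i.castSucc

/-- `g ⪯ f` : `g` alternates left of `f` or `g` interlaces `f`. -/
def Prec (g f : Polynomial ℝ) : Prop := AltLeft g f ∨ Interlaces g f

/-- strict alternation -/
def StrictAltLeft (g f : Polynomial ℝ) : Prop :=
  ∃ n : ℕ, ∃ r s : Fin n → ℝ,
    f = Polynomial.C f.leadingCoeff * ∏ i, (Polynomial.X - Polynomial.C (r i)) ∧
    g = Polynomial.C g.leadingCoeff * ∏ i, (Polynomial.X - Polynomial.C (s i)) ∧
    (∀ i : Fin n, s i < r i) ∧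
    (∀ (i : ℕ) (h : i + 1 < n), r ⟨i + 1, h⟩ < s ⟨i, Nat.lt_of_succ_lt h⟩)

/-- strict interlacing -/
def StrictInterlaces (g f : Polynomial ℝ) : Prop :=
  ∃ n : ℕ, ∃ r : Fin (n + 1) → ℝ, ∃ s : Fin n → ℝ,
    f = Polynomial.C f.leadingCoeff * ∏ i, (Polynomial.X - Polynomial.C (r i)) ∧
    g = Polynomial.C g.leadingCoeff * ∏ i, (Polynomial.X - Polynomial.C (s i)) ∧
    ∀ i : Fin n, r i.succ < s i ∧ s i < r i.castSucc

/-- `g ≺ f` : strict alternation or strict interlacing. -/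
def SPrec (g f : Polynomial ℝ) : Prop := StrictAltLeft g f ∨ StrictInterlaces g f

/-- PF: nonnegative coefficients and only real zeros. -/
def PFpoly (f : Polynomial ℝ) : Prop := (∀ i, 0 ≤ f.coeff i) ∧ RealRooted f

noncomputable def Pr (n : ℕ) (v : ℕ → ℝ) : Polynomial ℝ :=
  ∏ j ∈ Finset.range n, (X - C (v j))

lemma Pr_monic (n : ℕ) (v : ℕ → ℝ) : (Pr n v).Monic :=
  monic_prod_of_monic _ _ fun i _ => monic_X_sub_C (v i)

lemma Pr_natDegree (n : ℕ) (v : ℕ → ℝ) : (Pr n v).natDegree = n := by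
  unfold Pr
  rw [natDegree_prod]
  · simp
  · intro i _; exact X_sub_C_ne_zero (v i)

lemma Pr_ne_zero (n v) : Pr n v ≠ 0 := (Pr_monic n v).ne_zero

lemma lc_CPr (n : ℕ) (v : ℕ → ℝ) (L : ℝ) : (C L * Pr n v).leadingCoeff = L := by
  rw [leadingCoeff_mul, (Pr_monic n v).leadingCoeff, leadingCoeff_C, mul_one]

lemma Pr_eval (n : ℕ) (v : ℕ → ℝ) (x : ℝ) :
    (Pr n v).eval x = ∏ j ∈ Finset.range n, (x - v j) := by
  unfold Pr; rw [eval_prod]; simp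

lemma Pr_eval_zero {n : ℕ} {i : ℕ} (hi : i < n) (v : ℕ → ℝ) :
    (Pr n v).eval (v i) = 0 := by
  rw [Pr_eval]
  exact Finset.prod_eq_zero (Finset.mem_range.2 hi) (by ring)

lemma neg_prod_pow (k : ℕ) (f : ℕ → ℝ) :
    (-1:ℝ)^k * ∏ j ∈ range k, f j = ∏ j ∈ range k, (-(f j)) := by
  have : ∀ j:ℕ, -(f j) = (-1) * f j := fun j => by ring
  simp only [this]
  rw [Finset.prod_mul_distrib, Finset.prod_const]
  simp

lemma prod_sign_pos {n k : ℕ} (hk : k ≤ n) (v : ℕ → ℝ) (x : ℝ)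
    (h1 : ∀ j, j < k → x < v j) (h2 : ∀ j, k ≤ j → j < n → v j < x) :
    0 < (-1:ℝ)^k * ∏ j ∈ range n, (x - v j) := by
  rw [← Finset.prod_range_mul_prod_Ico _ hk, ← mul_assoc, neg_prod_pow]
  apply mul_pos
  · exact Finset.prod_pos fun j hj => by
      have := h1 j (mem_range.1 hj); linarith
  · exact Finset.prod_pos fun j hj => by
      have hj' := Finset.mem_Ico.1 hj
      have := h2 j hj'.1 hj'.2; linarith

lemma prod_sign_nonneg {n k : ℕ} (hk : k ≤ n) (v : ℕ → ℝ) (x : ℝ)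
    (h1 : ∀ j, j < k → x ≤ v j) (h2 : ∀ j, k ≤ j → j < n → v j ≤ x) :
    0 ≤ (-1:ℝ)^k * ∏ j ∈ range n, (x - v j) := by
  rw [← Finset.prod_range_mul_prod_Ico _ hk, ← mul_assoc, neg_prod_pow]
  apply mul_nonneg
  · exact Finset.prod_nonneg fun j hj => by
      have := h1 j (mem_range.1 hj); linarith
  · exact Finset.prod_nonneg fun j hj => by
      have hj' := Finset.mem_Ico.1 hj
      have := h2 j hj'.1 hj'.2; linarith

/-- strictly decreasing from adjacent steps -/
lemma anti_of_step {m : ℕ} {v : ℕ → ℝ} (h : ∀ i, i + 1 < m → v (i+1) < v i) :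
    ∀ i j, i ≤ j → j < m → v j ≤ v i := by
  intro i j hij hjm
  induction j with
  | zero => simp_all
  | succ j ih =>
    rcases Nat.lt_or_ge i (j+1) with hlt | hge
    · have : v (j+1) < v j := h j hjm
      have := ih (Nat.lt_of_succ_le hlt |> Nat.le_of_lt_succ) (Nat.lt_of_succ_lt hjm)
      linarith
    · have : i = j + 1 := le_antisymm hij hge
      simp [this]

lemma anti_of_step_strict {m : ℕ} {v : ℕ → ℝ} (h : ∀ i, i + 1 < m → v (i+1) < v i) :
    ∀ i j, i < j → j < m → v j < v i := by
  intro i j hij hjm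
  have h1 : v j ≤ v (i+1) := anti_of_step h (i+1) j hij (by omega)
  have h2 : v (i+1) < v i := h i (by omega)
  linarith
def del (v : ℕ → ℝ) (i : ℕ) : ℕ → ℝ := fun j => if j < i then v j else v (j+1)
def ins (v : ℕ → ℝ) (i : ℕ) (x : ℝ) : ℕ → ℝ :=
  fun j => if j < i then v j else if j = i then x else v (j-1)

lemma del_ins (v : ℕ → ℝ) (i : ℕ) (x : ℝ) : del (ins v i x) i = v := by
  funext j
  unfold del ins
  by_cases h : j < i
  · simp [h]
  · have h1 : ¬ (j + 1 < i) := by omega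
    have h2 : j + 1 ≠ i := by omega
    simp [h, h1, h2]

lemma ins_apply_lt (v i x) {j : ℕ} (h : j < i) : ins v i x j = v j := by simp [ins, h]
lemma ins_apply_eq (v i x) : ins v i x i = x := by simp [ins]
lemma ins_apply_gt (v i x) {j : ℕ} (h : i < j) : ins v i x j = v (j-1) := by
  have h1 : ¬ j < i := by omega
  have h2 : j ≠ i := by omega
  simp [ins, h1, h2]
lemma del_apply_lt (v i) {j : ℕ} (h : j < i) : del v i j = v j := by simp [del, h]
lemma del_apply_ge (v i) {j : ℕ} (h : i ≤ j) : del v i j = v (j+1) := by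
  simp [del, Nat.not_lt.2 h]

lemma prod_del {M : Type*} [CommMonoid M] (f : ℕ → M) (m i : ℕ) (hi : i < m) :
    ∏ j ∈ range m, f j = f i * ∏ j ∈ range (m-1), (fun j => if j < i then f j else f (j+1)) j := by
  obtain ⟨m', rfl⟩ : ∃ m', m = m' + 1 := ⟨m - 1, by omega⟩
  simp only [Nat.add_sub_cancel]
  have hi' : i ≤ m' := by omega
  rw [← Finset.prod_range_mul_prod_Ico f (show i ≤ m'+1 by omega),
      Finset.prod_eq_prod_Ico_succ_bot (show i < m'+1 by omega) f,
      ← Finset.prod_range_mul_prod_Ico _ hi']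
  have e1 : ∏ j ∈ range i, (if j < i then f j else f (j+1)) = ∏ j ∈ range i, f j :=
    Finset.prod_congr rfl fun j hj => by simp [mem_range.1 hj]
  have e2 : ∏ j ∈ Ico i m', (if j < i then f j else f (j+1)) = ∏ j ∈ Ico (i+1) (m'+1), f j := by
    rw [Finset.prod_Ico_eq_prod_range, Finset.prod_Ico_eq_prod_range]
    apply Finset.prod_congr (by congr 1; omega)
    intro j _
    have : ¬ (i + j < i) := by omega
    simp only [this, if_false]
    congr 1
    omega
  rw [e1, e2, mul_left_comm]

lemma Pr_del (m i : ℕ) (hi : i < m) (v : ℕ → ℝ) :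
    Pr m v = (X - C (v i)) * Pr (m-1) (del v i) := by
  unfold Pr del
  have := prod_del (fun j => X - C (v j)) m i hi
  simp only [] at this
  rw [this]
  congr 1
  apply Finset.prod_congr rfl
  intro j _
  by_cases h : j < i <;> simp [h]
lemma lead_comb (m n : ℕ) (hnm : n ≤ m) (A B : ℝ) (r s : ℕ → ℝ)
    (hL : A + (if n = m then B else 0) ≠ 0) :
    (C A * Pr m r + C B * Pr n s).natDegree = m ∧
    (C A * Pr m r + C B * Pr n s).leadingCoeff = A + (if n = m then B else 0) := by
  set h := C A * Pr m r + C B * Pr n s with hh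
  have hcm : h.coeff m = A + (if n = m then B else 0) := by
    rw [hh, coeff_add, coeff_C_mul, coeff_C_mul]
    have h1 : (Pr m r).coeff m = 1 := by
      have := (Pr_monic m r).coeff_natDegree
      rwa [Pr_natDegree] at this
    have h2 : (Pr n s).coeff m = if n = m then 1 else 0 := by
      by_cases hc : n = m
      · subst hc
        have := (Pr_monic n s).coeff_natDegree
        rw [if_pos rfl]
        rwa [Pr_natDegree] at this
      · rw [if_neg hc]
        apply coeff_eq_zero_of_natDegree_lt
        rw [Pr_natDegree]; omega
    rw [h1, h2]
    by_cases hc : n = m <;> simp [hc]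
  have hdle : h.natDegree ≤ m := by
    apply le_trans (natDegree_add_le _ _)
    apply max_le
    · exact le_trans (natDegree_C_mul_le _ _) (le_of_eq (Pr_natDegree m r))
    · exact le_trans (natDegree_C_mul_le _ _) (le_trans (le_of_eq (Pr_natDegree n s)) hnm)
  have hcm' : h.coeff m ≠ 0 := by rw [hcm]; exact hL
  have hdeg : h.natDegree = m := le_antisymm hdle (le_natDegree_of_ne_zero hcm')
  exact ⟨hdeg, by rw [leadingCoeff, hdeg, hcm]⟩

lemma recon (h : Polynomial ℝ) (m : ℕ) (t : ℕ → ℝ) (hdeg : h.natDegree = m) (hne : h ≠ 0)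
    (hroots : ∀ i, i < m → h.eval (t i) = 0) (hinj : ∀ i j, i < j → j < m → t j < t i) :
    h = C h.leadingCoeff * Pr m t := by
  classical
  set T : Multiset ℝ := (Multiset.range m).map t with hT
  have hTnodup : T.Nodup := by
    apply Multiset.Nodup.map_on _ (Multiset.nodup_range m)
    intro x hx y hy hxy
    rw [Multiset.mem_range] at hx hy
    by_contra hne'
    rcases Nat.lt_or_ge x y with h' | h'
    · have := hinj x y h' hy; rw [hxy] at this; exact lt_irrefl _ this
    · have h'' : y < x := by omega
      have := hinj y x h'' hx; rw [hxy] at this; exact lt_irrefl _ this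
  have hTle : T ≤ h.roots := by
    rw [Multiset.le_iff_count]
    intro x
    by_cases hx : x ∈ T
    · have h1 : T.count x = 1 := (Multiset.count_eq_one_of_mem hTnodup hx)
      rw [h1]
      obtain ⟨i, hi, rfl⟩ := Multiset.mem_map.1 hx
      rw [Multiset.mem_range] at hi
      rw [count_roots]
      rw [Nat.succ_le_iff, rootMultiplicity_pos hne]
      exact hroots i hi
    · rw [Multiset.count_eq_zero_of_notMem hx]; omega
  have hTcard : Multiset.card T = m := by simp [hT]
  have hcard : Multiset.card h.roots ≤ Multiset.card T := by
    rw [hTcard, ← hdeg]; exact h.card_roots'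
  have hEq : T = h.roots := Multiset.eq_of_le_of_card_le hTle hcard
  obtain ⟨q, hq⟩ := h.prod_multiset_X_sub_C_dvd
  have hprodPr : (Multiset.map (fun a => X - C a) h.roots).prod = Pr m t := by
    rw [← hEq, hT, Multiset.map_map]
    unfold Pr
    rw [← Finset.range_val, Finset.prod]
    rfl
  rw [hprodPr] at hq
  have hPrne : Pr m t ≠ 0 := (Pr_monic m t).ne_zero
  have hqne : q ≠ 0 := by rintro rfl; simp at hq; exact hne hq
  have hqdeg : q.natDegree = 0 := by
    have := natDegree_mul hPrne hqne
    rw [← hq, hdeg, Pr_natDegree] at this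
    omega
  have hqC : q = C (q.coeff 0) := eq_C_of_natDegree_eq_zero hqdeg
  have hlc : h.leadingCoeff = q.coeff 0 := by
    rw [hq, leadingCoeff_mul, (Pr_monic m t).leadingCoeff, one_mul, hqC, leadingCoeff_C, coeff_C_zero]
  rw [hlc, mul_comm, ← hqC]
  exact hq

lemma IVT_zero (p : Polynomial ℝ) {x y : ℝ} (hxy : x < y) (hsign : p.eval x * p.eval y < 0) :
    ∃ z, x < z ∧ z < y ∧ p.eval z = 0 := by
  have hcont : ContinuousOn (fun z => p.eval z) (Set.Icc x y) := p.continuous.continuousOn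
  rcases mul_neg_iff.1 hsign with ⟨hx, hy⟩ | ⟨hx, hy⟩
  · obtain ⟨z, hz, hz0⟩ := intermediate_value_Ioo' (le_of_lt hxy) hcont ⟨hy, hx⟩
    exact ⟨z, hz.1, hz.2, hz0⟩
  · obtain ⟨z, hz, hz0⟩ := intermediate_value_Ioo (le_of_lt hxy) hcont ⟨hx, hy⟩
    exact ⟨z, hz.1, hz.2, hz0⟩

lemma neg_one_sq_pow (i : ℕ) : (-1:ℝ)^i * (-1:ℝ)^i = 1 := by
  rw [← pow_add]; exact Even.neg_one_pow ⟨i, rfl⟩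

lemma EX1_strict (n m : ℕ) (hm : m = n ∨ m = n + 1) (r s : ℕ → ℝ) (lf lg a b : ℝ)
    (hlf : 0 < lf) (hlg : 0 < lg) (ha : 0 < a) (hb : 0 < b)
    (hrs : ∀ i, i < n → s i < r i) (hsr : ∀ i, i + 1 < m → r (i+1) < s i) :
    ∃ t : ℕ → ℝ,
      0 < (C (a*lf) * Pr m r + C (b*lg) * Pr n s).leadingCoeff ∧
      C (a*lf) * Pr m r + C (b*lg) * Pr n s =
        C (C (a*lf) * Pr m r + C (b*lg) * Pr n s).leadingCoeff * Pr m t ∧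
      (∀ i, i < n → s i < t i) ∧ (∀ i, i < m → t i < r i) := by
  have hnm : n ≤ m := by omega
  set h := C (a*lf) * Pr m r + C (b*lg) * Pr n s with hh
  have hL0 : 0 < a*lf + (if n = m then b*lg else 0) := by
    by_cases hc : n = m <;> simp [hc] <;> positivity
  obtain ⟨hdeg, hlc⟩ := lead_comb m n hnm (a*lf) (b*lg) r s (ne_of_gt hL0)
  rw [← hh] at hdeg hlc
  have hlcpos : 0 < h.leadingCoeff := by rw [hlc]; exact hL0
  have hne : h ≠ 0 := fun h0 => by rw [h0, leadingCoeff_zero] at hlcpos; exact lt_irrefl _ hlcpos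
  -- monotonicity
  have hrstep : ∀ i, i + 1 < m → r (i+1) < r i := fun i hi =>
    lt_trans (hsr i hi) (hrs i (by omega))
  have hrdec : ∀ i j, i ≤ j → j < m → r j ≤ r i := anti_of_step hrstep
  have hsstep : ∀ i, i + 1 < n → s (i+1) < s i := fun i hi =>
    lt_trans (hrs (i+1) hi) (hsr i (by omega))
  have hsdec : ∀ i j, i ≤ j → j < n → s j ≤ s i := anti_of_step hsstep
  -- sign facts
  have hgs : ∀ i, i < m → 0 < (-1:ℝ)^i * (Pr n s).eval (r i) := by
    intro i hi
    rw [Pr_eval]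
    apply prod_sign_pos (by omega) s (r i)
    · intro j hj
      calc r i ≤ r (j+1) := hrdec (j+1) i (by omega) hi
        _ < s j := hsr j (by omega)
    · intro j hij hj
      calc s j ≤ s i := hsdec i j hij hj
        _ < r i := hrs i (by omega)
  have hfs : ∀ i, i < n → 0 < (-1:ℝ)^(i+1) * (Pr m r).eval (s i) := by
    intro i hi
    rw [Pr_eval]
    apply prod_sign_pos (by omega) r (s i)
    · intro j hj
      calc s i < r i := hrs i hi
        _ ≤ r j := hrdec j i (by omega) (by omega)
    · intro j hij hj
      calc r j ≤ r (i+1) := hrdec (i+1) j hij hj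
        _ < s i := hsr i (by omega)
  -- eval formulas
  have hevalh : ∀ x : ℝ, h.eval x = a*lf * (Pr m r).eval x + b*lg * (Pr n s).eval x := by
    intro x; rw [hh]; simp
  have key1 : ∀ i, i < n → ∃ y, s i < y ∧ y < r i ∧ h.eval y = 0 := by
    intro i hi
    have h1 : h.eval (s i) = a*lf * (Pr m r).eval (s i) := by
      rw [hevalh, Pr_eval_zero hi s, mul_zero, add_zero]
    have h2 : h.eval (r i) = b*lg * (Pr n s).eval (r i) := by
      rw [hevalh, Pr_eval_zero (by omega : i < m) r, mul_zero, zero_add]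
    apply IVT_zero h (hrs i hi)
    have A := hfs i hi
    have B := hgs i (by omega)
    have sq := neg_one_sq_pow i
    have hps : (-1:ℝ)^(i+1) = -((-1:ℝ)^i) := by rw [pow_succ]; ring
    rw [h1, h2]
    rw [hps] at A
    nlinarith [mul_pos A B, mul_pos (mul_pos ha hlf) (mul_pos hb hlg)]
  have key2 : n + 1 = m → ∃ y, y < r n ∧ h.eval y = 0 := by
    intro hmn
    set w := r n - 1 - (b*lg)/(a*lf) with hw
    have half : 0 < a * lf := mul_pos ha hlf
    have hwlt : w < r n := by
      rw [hw]
      have : 0 ≤ (b*lg)/(a*lf) := by positivity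
      linarith
    have hwr : ∀ j, j < m → w < r j := fun j hj => lt_of_lt_of_le hwlt (hrdec j n (by omega) (by omega))
    have hws : ∀ j, j < n → w < s j := by
      intro j hj
      calc w < r n := hwlt
        _ = r (j + (n - j)) := by congr 1; omega
        _ ≤ r (j+1) := by
            apply hrdec (j+1) (j + (n-j)) (by omega) (by omega)
        _ < s j := hsr j (by omega)
    -- products
    have E2 : (-1:ℝ)^m * (Pr m r).eval w = ∏ j ∈ range m, (r j - w) := by
      rw [Pr_eval, neg_prod_pow]
      exact Finset.prod_congr rfl fun j _ => by ring
    have E1 : (-1:ℝ)^n * (Pr n s).eval w = ∏ j ∈ range n, (s j - w) := by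
      rw [Pr_eval, neg_prod_pow]
      exact Finset.prod_congr rfl fun j _ => by ring
    have hAB : ∏ j ∈ range n, (s j - w) ≤ ∏ j ∈ range n, (r j - w) := by
      apply Finset.prod_le_prod
      · intro j hj; have := hws j (mem_range.1 hj); linarith
      · intro j hj; have := hrs j (mem_range.1 hj); linarith
    have hBpos : 0 < ∏ j ∈ range n, (s j - w) :=
      Finset.prod_pos fun j hj => by have := hws j (mem_range.1 hj); linarith
    have hsplit : ∏ j ∈ range m, (r j - w) = (∏ j ∈ range n, (r j - w)) * (r n - w) := by
      rw [← hmn, Finset.prod_range_succ]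
    have hrnw : r n - w = 1 + (b*lg)/(a*lf) := by rw [hw]; ring
    have hEv := hevalh w
    set PW := (Pr m r).eval w with hPW
    set QW := (Pr n s).eval w with hQW
    set A := ∏ j ∈ range n, (r j - w) with hA
    set B := ∏ j ∈ range n, (s j - w) with hB
    have hm1 : (-1:ℝ)^m = -((-1:ℝ)^n) := by rw [← hmn, pow_succ]; ring
    rw [hsplit] at E2
    have e3 : (-1:ℝ)^m * QW = -B := by rw [hm1]; linear_combination -(E1)
    have hrnwpos : 0 < r n - w := by linarith
    have keyf : a*lf * (1 + (b*lg)/(a*lf)) = a*lf + b*lg := by field_simp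
    have step1 : (-1:ℝ)^m * h.eval w = a*lf*(A*(r n - w)) - b*lg*B := by
      rw [hEv]; linear_combination (a*lf) * E2 + (b*lg) * e3
    have step2 : a*lf*(B*(r n - w)) ≤ a*lf*(A*(r n - w)) := by
      have h' : B*(r n - w) ≤ A*(r n - w) := mul_le_mul_of_nonneg_right hAB (le_of_lt hrnwpos)
      exact mul_le_mul_of_nonneg_left h' (le_of_lt half)
    have step3 : a*lf*(B*(r n - w)) - b*lg*B = B * (a*lf) := by
      rw [hrnw]; linear_combination B * keyf
    have hwpos : 0 < (-1:ℝ)^m * h.eval w := by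
      rw [step1]
      nlinarith [mul_pos hBpos half]
    have hrn : 0 < (-1:ℝ)^n * h.eval (r n) := by
      have h2 : h.eval (r n) = b*lg * (Pr n s).eval (r n) := by
        rw [hevalh, Pr_eval_zero (by omega : n < m) r, mul_zero, zero_add]
      have := hgs n (by omega)
      rw [h2]
      nlinarith [mul_pos hb hlg]
    have hprod : h.eval w * h.eval (r n) < 0 := by
      rw [hm1] at hwpos
      have sq := neg_one_sq_pow n
      nlinarith [mul_pos hwpos hrn]
    obtain ⟨z, _, hz2, hz3⟩ := IVT_zero h hwlt hprod
    exact ⟨z, hz2, hz3⟩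
  have key : ∀ i, ∃ y, (i < n → s i < y ∧ y < r i ∧ h.eval y = 0) ∧
      (n ≤ i → i < m → y < r i ∧ h.eval y = 0) := by
    intro i
    rcases Nat.lt_or_ge i n with hi | hi
    · obtain ⟨y, hy⟩ := key1 i hi
      exact ⟨y, fun _ => hy, fun hni _ => absurd hi (by omega)⟩
    · rcases Nat.lt_or_ge i m with him | him
      · have hieq : i = n := by omega
        have hmn : n + 1 = m := by omega
        obtain ⟨y, hy1, hy2⟩ := key2 hmn
        subst hieq
        exact ⟨y, fun hin => absurd hin (by omega), fun _ _ => ⟨hy1, hy2⟩⟩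
      · exact ⟨0, fun hin => absurd hin (by omega), fun _ him' => absurd him' (by omega)⟩
  choose t ht using key
  have htlt : ∀ i, i < m → t i < r i := by
    intro i hi
    rcases Nat.lt_or_ge i n with h' | h'
    · exact ((ht i).1 h').2.1
    · exact ((ht i).2 h' hi).1
  have htgt : ∀ i, i < n → s i < t i := fun i hi => ((ht i).1 hi).1
  have htroot : ∀ i, i < m → h.eval (t i) = 0 := by
    intro i hi
    rcases Nat.lt_or_ge i n with h' | h'
    · exact ((ht i).1 h').2.2
    · exact ((ht i).2 h' hi).2
  have htstep : ∀ i, i + 1 < m → t (i+1) < t i := by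
    intro i hi
    calc t (i+1) < r (i+1) := htlt (i+1) hi
      _ < s i := hsr i hi
      _ < t i := htgt i (by omega)
  have := recon h m t hdeg hne htroot (anti_of_step_strict htstep)
  exact ⟨t, hlcpos, this, htgt, htlt⟩

lemma EX2_strict (n m : ℕ) (hm : m = n ∨ m = n+1) (r s : ℕ → ℝ) (lf lg a b c d : ℝ)
    (hlf : 0 < lf) (hlg : 0 < lg) (ha : 0 < a) (hb : 0 < b) (hc : 0 < c) (hd : 0 < d)
    (hbc : b * c ≤ a * d)
    (hrs : ∀ i, i < n → s i < r i) (hsr : ∀ i, i + 1 < m → r (i+1) < s i) :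
    ∃ (t u : ℕ → ℝ) (L M : ℝ), 0 < L ∧ 0 < M ∧
      C (a*lf) * Pr m r + C (b*lg) * Pr n s = C L * Pr m t ∧
      C (c*lf) * Pr m r + C (d*lg) * Pr n s = C M * Pr m u ∧
      (∀ i, i < n → s i ≤ t i ∧ s i ≤ u i) ∧
      (∀ i, i < m → u i ≤ t i ∧ t i ≤ r i) := by
  obtain ⟨t, hL, hhe, hts, htr⟩ := EX1_strict n m hm r s lf lg a b hlf hlg ha hb hrs hsr
  obtain ⟨u, hM, hke, hus, hur⟩ := EX1_strict n m hm r s lf lg c d hlf hlg hc hd hrs hsr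
  set h := C (a*lf) * Pr m r + C (b*lg) * Pr n s with hh
  set k := C (c*lf) * Pr m r + C (d*lg) * Pr n s with hk
  have hrstep : ∀ i, i + 1 < m → r (i+1) < r i := fun i hi =>
    lt_trans (hsr i hi) (hrs i (by omega))
  have hrdec : ∀ i j, i ≤ j → j < m → r j ≤ r i := anti_of_step hrstep
  have hsstep : ∀ i, i + 1 < n → s (i+1) < s i := fun i hi =>
    lt_trans (hrs (i+1) hi) (hsr i (by omega))
  have hsdec : ∀ i j, i ≤ j → j < n → s j ≤ s i := anti_of_step hsstep
  have Hid : ∀ x : ℝ, a * k.eval x = c * h.eval x + ((a*d - b*c) * lg) * (Pr n s).eval x := by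
    intro x
    rw [hh, hk]
    simp only [eval_add, eval_mul, eval_C]
    ring
  have hcmp : ∀ i, i < m → u i ≤ t i := by
    intro i hi
    by_contra hti
    push_neg at hti
    have hzero : h.eval (t i) = 0 := by
      rw [hhe, eval_mul, eval_C, Pr_eval_zero hi t, mul_zero]
    have hid := Hid (t i)
    rw [hzero, mul_zero, zero_add] at hid
    have S1 : 0 ≤ (-1:ℝ)^i * (Pr n s).eval (t i) := by
      rw [Pr_eval]
      apply prod_sign_nonneg (by omega) s (t i)
      · intro j hj
        have h1 : t i < r i := htr i hi
        have h2 : r i ≤ r (j+1) := hrdec (j+1) i (by omega) hi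
        have h3 : r (j+1) < s j := hsr j (by omega)
        linarith
      · intro j hij hj
        have h1 : s j ≤ s i := hsdec i j hij hj
        have h2 : s i < t i := hts i (by omega)
        linarith
    have S2 : 0 < (-1:ℝ)^(i+1) * k.eval (t i) := by
      have hke' : k.eval (t i) = k.leadingCoeff * (Pr m u).eval (t i) := by
        conv_lhs => rw [hke]
        rw [eval_mul, eval_C]
      rw [hke', Pr_eval, ← mul_left_comm]
      apply mul_pos hM
      apply prod_sign_pos (by omega) u (t i)
      · intro j hj
        rcases Nat.lt_or_ge j i with h' | h'
        · have h1 : t i < r i := htr i hi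
          have h2 : r i ≤ r (j+1) := hrdec (j+1) i (by omega) hi
          have h3 : r (j+1) < s j := hsr j (by omega)
          have h4 : s j < u j := hus j (by omega)
          linarith
        · have : j = i := by omega
          rw [this]; exact hti
      · intro j hij hj
        have h1 : u j < r j := hur j hj
        have h2 : r j ≤ r (i+1) := hrdec (i+1) j hij hj
        have h3 : r (i+1) < s i := hsr i (by omega)
        have h4 : s i < t i := hts i (by omega)
        linarith
    have hda : 0 ≤ a*d - b*c := by linarith
    have S1' : 0 ≤ (-1:ℝ)^i * k.eval (t i) := by
      have e1 : (-1:ℝ)^i * (a * k.eval (t i)) =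
          ((a*d - b*c) * lg) * ((-1:ℝ)^i * (Pr n s).eval (t i)) := by
        rw [hid]; ring
      have e2 : 0 ≤ (-1:ℝ)^i * (a * k.eval (t i)) := by
        rw [e1]
        exact mul_nonneg (mul_nonneg hda (le_of_lt hlg)) S1
      nlinarith
    have hps : (-1:ℝ)^(i+1) = -((-1:ℝ)^i) := by rw [pow_succ]; ring
    rw [hps] at S2
    linarith
  refine ⟨t, u, _, _, hL, hM, hhe, hke, ?_, ?_⟩
  · exact fun i hi => ⟨le_of_lt (hts i hi), le_of_lt (hus i hi)⟩
  · exact fun i hi => ⟨hcmp i hi, le_of_lt (htr i hi)⟩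

lemma EX2 : ∀ N n m, n ≤ N → (m = n ∨ m = n + 1) → ∀ (r s : ℕ → ℝ) (lf lg a b c d : ℝ),
    0 < lf → 0 < lg → 0 < a → 0 < b → 0 < c → 0 < d → b * c ≤ a * d →
    (∀ i, i < n → s i ≤ r i) → (∀ i, i + 1 < m → r (i+1) ≤ s i) →
    ∃ (t u : ℕ → ℝ) (L M : ℝ), 0 < L ∧ 0 < M ∧
      C (a*lf) * Pr m r + C (b*lg) * Pr n s = C L * Pr m t ∧
      C (c*lf) * Pr m r + C (d*lg) * Pr n s = C M * Pr m u ∧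
      (∀ i, i < n → s i ≤ t i ∧ s i ≤ u i) ∧
      (∀ i, i < m → u i ≤ t i ∧ t i ≤ r i) := by
  intro N
  induction N with
  | zero =>
    intro n m hn hm r s lf lg a b c d hlf hlg ha hb hc hd hbc hrs hsr
    have hn0 : n = 0 := by omega
    subst hn0
    exact EX2_strict 0 m hm r s lf lg a b c d hlf hlg ha hb hc hd hbc
      (fun i hi => absurd hi (by omega)) (fun i hi => by omega)
  | succ N ih =>
    intro n m hn hm r s lf lg a b c d hlf hlg ha hb hc hd hbc hrs hsr
    by_cases hstrict : (∀ i, i < n → s i < r i) ∧ (∀ i, i + 1 < m → r (i+1) < s i)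
    · exact EX2_strict n m hm r s lf lg a b c d hlf hlg ha hb hc hd hbc hstrict.1 hstrict.2
    have hex : (∃ i, i < n ∧ s i = r i) ∨ (∃ i, i + 1 < m ∧ r (i+1) = s i) := by
      by_contra hcon
      push_neg at hcon
      apply hstrict
      constructor
      · intro i hi
        exact lt_of_le_of_ne (hrs i hi) (hcon.1 i hi)
      · intro i hi
        exact lt_of_le_of_ne (hsr i hi) (hcon.2 i hi)
    rcases hex with ⟨i, hi, heq⟩ | ⟨i, hi, heq⟩
    · -- Case A : s i = r i
      set x0 := r i with hx0
      set r' := del r i with hr'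
      set s' := del s i with hs'
      have hin : 1 ≤ n := by omega
      have him : i < m := by omega
      have hm' : m - 1 = n - 1 ∨ m - 1 = (n - 1) + 1 := by omega
      have hrs' : ∀ j, j < n - 1 → s' j ≤ r' j := by
        intro j hj
        rcases Nat.lt_or_ge j i with h' | h'
        · rw [hs', hr', del_apply_lt _ _ h', del_apply_lt _ _ h']
          exact hrs j (by omega)
        · rw [hs', hr', del_apply_ge _ _ h', del_apply_ge _ _ h']
          exact hrs (j+1) (by omega)
      have hsr' : ∀ j, j + 1 < m - 1 → r' (j+1) ≤ s' j := by
        intro j hj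
        rcases Nat.lt_trichotomy (j+1) i with h' | h' | h'
        · rw [hr', hs', del_apply_lt _ _ h', del_apply_lt _ _ (by omega : j < i)]
          exact hsr j (by omega)
        · have hi1 : 1 ≤ i := by omega
          rw [hr', hs', del_apply_ge _ _ (by omega : i ≤ j + 1), del_apply_lt _ _ (by omega : j < i)]
          have e0 : j + 1 + 1 = i + 1 := by omega
          rw [e0]
          have e1 : r (i+1) ≤ s i := hsr i (by omega)
          have e2 : s i = x0 := heq
          have e2' : x0 = r i := hx0
          have e3 : r i ≤ s j := by
            have h3 := hsr j (by omega : j + 1 < m)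
            rwa [h'] at h3
          linarith
        · rw [hr', hs', del_apply_ge _ _ (by omega : i ≤ j + 1), del_apply_ge _ _ (by omega : i ≤ j)]
          exact hsr (j+1) (by omega)
      obtain ⟨t', u', L, M, hL, hM, Eh, Ek, B1, B2⟩ :=
        ih (n-1) (m-1) (by omega) hm' r' s' lf lg a b c d hlf hlg ha hb hc hd hbc hrs' hsr'
      refine ⟨ins t' i x0, ins u' i x0, L, M, hL, hM, ?_, ?_, ?_, ?_⟩
      · rw [Pr_del m i him r, Pr_del n i hi s,
            Pr_del m i (by omega) (ins t' i x0)]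
        rw [ins_apply_eq, del_ins, ← hr']
        have hsx : s i = x0 := heq
        rw [hsx, ← hs', ← hx0]
        rw [show (C (a*lf) * ((X - C x0) * Pr (m-1) r') + C (b*lg) * ((X - C x0) * Pr (n-1) s'))
            = (X - C x0) * (C (a*lf) * Pr (m-1) r' + C (b*lg) * Pr (n-1) s') from by ring, Eh]
        ring
      · rw [Pr_del m i him r, Pr_del n i hi s,
            Pr_del m i (by omega) (ins u' i x0)]
        rw [ins_apply_eq, del_ins, ← hr']
        have hsx : s i = x0 := heq
        rw [hsx, ← hs', ← hx0]
        rw [show (C (c*lf) * ((X - C x0) * Pr (m-1) r') + C (d*lg) * ((X - C x0) * Pr (n-1) s'))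
            = (X - C x0) * (C (c*lf) * Pr (m-1) r' + C (d*lg) * Pr (n-1) s') from by ring, Ek]
        ring
      · intro j hj
        rcases Nat.lt_trichotomy j i with h' | h' | h'
        · rw [ins_apply_lt _ _ _ h', ins_apply_lt _ _ _ h']
          have := B1 j (by omega)
          rw [hs', del_apply_lt _ _ h'] at this
          exact this
        · subst h'
          rw [ins_apply_eq, ins_apply_eq]
          have : s j ≤ x0 := le_of_eq heq
          exact ⟨this, this⟩
        · rw [ins_apply_gt _ _ _ h', ins_apply_gt _ _ _ h']
          have := B1 (j-1) (by omega)
          rw [hs', del_apply_ge _ _ (by omega : i ≤ j - 1)] at this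
          have hj1 : j - 1 + 1 = j := by omega
          rwa [hj1] at this
      · intro j hj
        rcases Nat.lt_trichotomy j i with h' | h' | h'
        · rw [ins_apply_lt _ _ _ h', ins_apply_lt _ _ _ h']
          have := B2 j (by omega)
          rw [hr', del_apply_lt _ _ h'] at this
          exact this
        · subst h'
          rw [ins_apply_eq, ins_apply_eq]
          exact ⟨le_refl _, le_refl _⟩
        · rw [ins_apply_gt _ _ _ h', ins_apply_gt _ _ _ h']
          have := B2 (j-1) (by omega)
          rw [hr', del_apply_ge _ _ (by omega : i ≤ j - 1)] at this
          have hj1 : j - 1 + 1 = j := by omega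
          rwa [hj1] at this
    · -- Case B : r (i+1) = s i
      set x0 := s i with hx0
      have hin : i < n := by omega
      have hn1 : 1 ≤ n := by omega
      set r' := del r (i+1) with hr'
      set s' := del s i with hs'
      have hm' : m - 1 = n - 1 ∨ m - 1 = (n - 1) + 1 := by omega
      have hrx : r (i+1) = x0 := heq
      have hrs' : ∀ j, j < n - 1 → s' j ≤ r' j := by
        intro j hj
        rcases Nat.lt_trichotomy j i with h' | h' | h'
        · rw [hs', hr', del_apply_lt _ _ h', del_apply_lt _ _ (by omega : j < i + 1)]
          exact hrs j (by omega)
        · subst h'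
          rw [hs', hr', del_apply_ge _ _ (le_refl _), del_apply_lt _ _ (by omega : j < j + 1)]
          have e1 : s (j+1) ≤ r (j+1) := hrs (j+1) (by omega)
          have e2 : r (j+1) ≤ s j := hsr j (by omega)
          have e3 : s j ≤ r j := hrs j (by omega)
          linarith
        · rw [hs', hr', del_apply_ge _ _ (by omega : i ≤ j), del_apply_ge _ _ (by omega : i + 1 ≤ j)]
          exact hrs (j+1) (by omega)
      have hsr' : ∀ j, j + 1 < m - 1 → r' (j+1) ≤ s' j := by
        intro j hj
        rcases Nat.lt_or_ge j i with h' | h'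
        · rw [hr', hs', del_apply_lt _ _ (by omega : j + 1 < i + 1), del_apply_lt _ _ h']
          exact hsr j (by omega)
        · rw [hr', hs', del_apply_ge _ _ (by omega : i + 1 ≤ j + 1), del_apply_ge _ _ h']
          exact hsr (j+1) (by omega)
      obtain ⟨t', u', L, M, hL, hM, Eh, Ek, B1, B2⟩ :=
        ih (n-1) (m-1) (by omega) hm' r' s' lf lg a b c d hlf hlg ha hb hc hd hbc hrs' hsr'
      have him1 : i < m - 1 := by omega
      -- helper facts about t', u'
      have ht'r : ∀ j, j < m - 1 → t' j ≤ r' j := fun j hj => (B2 j hj).2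
      have hu't : ∀ j, j < m - 1 → u' j ≤ t' j := fun j hj => (B2 j hj).1
      have hs't : ∀ j, j < n - 1 → s' j ≤ t' j := fun j hj => (B1 j hj).1
      have hs'u : ∀ j, j < n - 1 → s' j ≤ u' j := fun j hj => (B1 j hj).2
      set pt := if x0 < t' i then i+1 else i with hpt
      set pu := if x0 < u' i then i+1 else i with hpu
      have hptm : pt < m := by rw [hpt]; split <;> omega
      have hpum : pu < m := by rw [hpu]; split <;> omega
      refine ⟨ins t' pt x0, ins u' pu x0, L, M, hL, hM, ?_, ?_, ?_, ?_⟩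
      · rw [Pr_del m (i+1) hi r, Pr_del n i hin s,
            Pr_del m pt hptm (ins t' pt x0)]
        rw [ins_apply_eq, del_ins, ← hr', hrx, ← hs', ← hx0]
        rw [show (C (a*lf) * ((X - C x0) * Pr (m-1) r') + C (b*lg) * ((X - C x0) * Pr (n-1) s'))
            = (X - C x0) * (C (a*lf) * Pr (m-1) r' + C (b*lg) * Pr (n-1) s') from by ring, Eh]
        ring
      · rw [Pr_del m (i+1) hi r, Pr_del n i hin s,
            Pr_del m pu hpum (ins u' pu x0)]
        rw [ins_apply_eq, del_ins, ← hr', hrx, ← hs', ← hx0]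
        rw [show (C (c*lf) * ((X - C x0) * Pr (m-1) r') + C (d*lg) * ((X - C x0) * Pr (n-1) s'))
            = (X - C x0) * (C (c*lf) * Pr (m-1) r' + C (d*lg) * Pr (n-1) s') from by ring, Ek]
        ring
      · -- s j ≤ t j ∧ s j ≤ u j
        have main : ∀ (v' : ℕ → ℝ) (p : ℕ), (p = i ∨ p = i+1) →
            (∀ j, j < n - 1 → s' j ≤ v' j) → (x0 < v' i ∨ p = i) →
            ∀ j, j < n → s j ≤ ins v' p x0 j := by
          intro v' p hp hsv hvc j hj
          rcases hp with hp1 | hp1 <;> rw [hp1]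
          · rcases Nat.lt_trichotomy j i with h' | h' | h'
            · rw [ins_apply_lt _ _ _ h']
              have := hsv j (by omega)
              rwa [hs', del_apply_lt _ _ h'] at this
            · rw [h', ins_apply_eq]
              all_goals exact le_of_eq hx0.symm
            · rw [ins_apply_gt _ _ _ h']
              have := hsv (j-1) (by omega)
              rw [hs', del_apply_ge _ _ (by omega : i ≤ j - 1)] at this
              have hj1 : j - 1 + 1 = j := by omega
              rwa [hj1] at this
          · rcases Nat.lt_trichotomy j i with h' | h' | h'
            · rw [ins_apply_lt _ _ _ (by omega : j < i + 1)]
              have := hsv j (by omega)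
              rwa [hs', del_apply_lt _ _ h'] at this
            · rw [h', ins_apply_lt _ _ _ (by omega : i < i + 1)]
              rcases hvc with hvc | hvc
              · calc s i = x0 := hx0.symm
                  _ ≤ v' i := le_of_lt hvc
              · omega
            · rcases Nat.lt_or_ge (i+1) j with h'' | h''
              · rw [ins_apply_gt _ _ _ h'']
                have := hsv (j-1) (by omega)
                rw [hs', del_apply_ge _ _ (by omega : i ≤ j - 1)] at this
                have hj1 : j - 1 + 1 = j := by omega
                rwa [hj1] at this
              · have hji : j = i + 1 := by omega
                rw [hji, ins_apply_eq]
                calc s (i+1) ≤ r (i+1) := hrs (i+1) (by omega)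
                  _ = x0 := hrx
        intro j hj
        constructor
        · apply main t' pt ?_ hs't ?_ j hj
          · rw [hpt]; split <;> simp
          · rw [hpt]; split
            · left; assumption
            · right; rfl
        · apply main u' pu ?_ hs'u ?_ j hj
          · rw [hpu]; split <;> simp
          · rw [hpu]; split
            · left; assumption
            · right; rfl
      · -- u j ≤ t j ∧ t j ≤ r j
        intro j hj
        constructor
        · -- u j ≤ t j : case on pt, pu
          by_cases hvt : x0 < t' i
          · have hptv : pt = i + 1 := by rw [hpt, if_pos hvt]
            by_cases hvu : x0 < u' i
            · have hpuv : pu = i + 1 := by rw [hpu, if_pos hvu]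
              rw [hptv, hpuv]
              rcases Nat.lt_trichotomy j (i+1) with h' | h' | h'
              · rw [ins_apply_lt _ _ _ h', ins_apply_lt _ _ _ h']
                exact hu't j (by omega)
              · subst h'; rw [ins_apply_eq, ins_apply_eq]
              · rw [ins_apply_gt _ _ _ h', ins_apply_gt _ _ _ h']
                exact hu't (j-1) (by omega)
            · have hpuv : pu = i := by rw [hpu, if_neg hvu]
              push_neg at hvu
              rw [hptv, hpuv]
              rcases Nat.lt_trichotomy j i with h' | h' | h'
              · rw [ins_apply_lt _ _ _ h', ins_apply_lt _ _ _ (by omega : j < i + 1)]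
                exact hu't j (by omega)
              · subst h'
                rw [ins_apply_eq, ins_apply_lt _ _ _ (by omega : j < j + 1)]
                exact le_of_lt hvt
              · rcases Nat.lt_or_ge (i+1) j with h'' | h''
                · rw [ins_apply_gt _ _ _ h'', ins_apply_gt _ _ _ (by omega : i < j)]
                  exact hu't (j-1) (by omega)
                · have : j = i + 1 := by omega
                  subst this
                  rw [ins_apply_eq, ins_apply_gt _ _ _ (by omega : i < i + 1)]
                  simpa using hvu
          · have hptv : pt = i := by rw [hpt, if_neg hvt]
            push_neg at hvt
            have hpuv : pu = i := by
              rw [hpu, if_neg]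
              push_neg
              calc u' i ≤ t' i := hu't i him1
                _ ≤ x0 := hvt
            rw [hptv, hpuv]
            rcases Nat.lt_trichotomy j i with h' | h' | h'
            · rw [ins_apply_lt _ _ _ h', ins_apply_lt _ _ _ h']
              exact hu't j (by omega)
            · subst h'; rw [ins_apply_eq, ins_apply_eq]
            · rw [ins_apply_gt _ _ _ h', ins_apply_gt _ _ _ h']
              exact hu't (j-1) (by omega)
        · -- t j ≤ r j
          by_cases hvt : x0 < t' i
          · have hptv : pt = i + 1 := by rw [hpt, if_pos hvt]
            rw [hptv]
            rcases Nat.lt_trichotomy j (i+1) with h' | h' | h'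
            · rw [ins_apply_lt _ _ _ h']
              have := ht'r j (by omega)
              rwa [hr', del_apply_lt _ _ h'] at this
            · subst h'
              rw [ins_apply_eq, ← hrx]
            · rw [ins_apply_gt _ _ _ h']
              have := ht'r (j-1) (by omega)
              rw [hr', del_apply_ge _ _ (by omega : i + 1 ≤ j - 1)] at this
              have hj1 : j - 1 + 1 = j := by omega
              rwa [hj1] at this
          · have hptv : pt = i := by rw [hpt, if_neg hvt]
            push_neg at hvt
            rw [hptv]
            rcases Nat.lt_trichotomy j i with h' | h' | h'
            · rw [ins_apply_lt _ _ _ h']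
              have := ht'r j (by omega)
              rwa [hr', del_apply_lt _ _ (by omega : j < i + 1)] at this
            · subst h'
              rw [ins_apply_eq, hx0]
              exact hrs j (by omega)
            · rcases Nat.lt_or_ge (i+1) j with h'' | h''
              · rw [ins_apply_gt _ _ _ (by omega : i < j)]
                have := ht'r (j-1) (by omega)
                rw [hr', del_apply_ge _ _ (by omega : i + 1 ≤ j - 1)] at this
                have hj1 : j - 1 + 1 = j := by omega
                rwa [hj1] at this
              · have : j = i + 1 := by omega
                subst this
                rw [ins_apply_gt _ _ _ (by omega : i < i + 1)]
                have e1 : t' (i + 1 - 1) ≤ x0 := by simpa using hvt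
                calc t' (i+1-1) ≤ x0 := e1
                  _ = r (i+1) := hrx.symm

def RepP (q : Polynomial ℝ) (nq : ℕ) (v : ℕ → ℝ) : Prop :=
  q = C q.leadingCoeff * Pr nq v

lemma repP_zero (nq : ℕ) (v : ℕ → ℝ) : RepP 0 nq v := by
  unfold RepP; simp

lemma repP_scale {q : Polynomial ℝ} {nq : ℕ} {v : ℕ → ℝ} (hq : RepP q nq v) (e : ℝ) :
    RepP (C e * q) nq v := by
  unfold RepP at *
  have h2 : C e * q = C (e * q.leadingCoeff) * Pr nq v := by
    conv_lhs => rw [hq]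
    rw [← mul_assoc, ← C_mul]
  have h3 : (C e * q).leadingCoeff = e * q.leadingCoeff := by rw [h2, lc_CPr]
  rw [h3]; exact h2

lemma repP_of_eq {q : Polynomial ℝ} {L : ℝ} {nq : ℕ} {v : ℕ → ℝ}
    (hq : q = C L * Pr nq v) : RepP q nq v := by
  have h3 : q.leadingCoeff = L := by rw [hq, lc_CPr]
  unfold RepP; rw [h3]; exact hq

lemma Pr_eq_fin_prod (n : ℕ) (v : ℕ → ℝ) :
    Pr n v = ∏ i : Fin n, (X - C (v i.1)) := by
  unfold Pr
  exact (Fin.prod_univ_eq_prod_range (fun j => X - C (v j)) n).symm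

lemma mkPrec {q p : Polynomial ℝ} {mp mq : ℕ} (hm : mp = mq ∨ mp = mq + 1)
    {rp rq : ℕ → ℝ} (hp : RepP p mp rp) (hq : RepP q mq rq)
    (h1 : ∀ i, i < mq → rq i ≤ rp i) (h2 : ∀ i, i + 1 < mp → rp (i+1) ≤ rq i) :
    Prec q p := by
  unfold RepP at hp hq
  rw [Pr_eq_fin_prod] at hp hq
  rcases hm with rfl | rfl
  · exact Or.inl ⟨mp, fun i => rp i.1, fun i => rq i.1, hp, hq,
      fun i => h1 i.1 i.2, fun i h => h2 i h⟩
  · exact Or.inr ⟨mq, fun i => rp i.1, fun i => rq i.1, hp, hq,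
      fun i => ⟨h2 i.1 (by omega), h1 i.1 i.2⟩⟩

lemma extractPrec {f g : Polynomial ℝ} (h : Prec g f) :
    ∃ (m n : ℕ) (r s : ℕ → ℝ), (m = n ∨ m = n + 1) ∧
      RepP f m r ∧ RepP g n s ∧
      (∀ i, i < n → s i ≤ r i) ∧ (∀ i, i + 1 < m → r (i+1) ≤ s i) := by
  rcases h with ⟨n, r, s, hfe, hge, hch1, hch2⟩ | ⟨n, r, s, hfe, hge, hch⟩
  · refine ⟨n, n, (fun j => if h : j < n then r ⟨j, h⟩ else 0),
      (fun j => if h : j < n then s ⟨j, h⟩ else 0), Or.inl rfl, ?_, ?_, ?_, ?_⟩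
    · apply repP_of_eq (L := f.leadingCoeff)
      conv_lhs => rw [hfe]
      congr 1
      rw [Pr_eq_fin_prod]
      exact Finset.prod_congr rfl fun i _ => by simp
    · apply repP_of_eq (L := g.leadingCoeff)
      conv_lhs => rw [hge]
      congr 1
      rw [Pr_eq_fin_prod]
      exact Finset.prod_congr rfl fun i _ => by simp
    · intro i hi
      simp only [dif_pos hi]
      exact hch1 ⟨i, hi⟩
    · intro i hi
      simp only [dif_pos hi, dif_pos (by omega : i < n)]
      exact hch2 i hi
  · refine ⟨n + 1, n, (fun j => if h : j < n + 1 then r ⟨j, h⟩ else 0),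
      (fun j => if h : j < n then s ⟨j, h⟩ else 0), Or.inr rfl, ?_, ?_, ?_, ?_⟩
    · apply repP_of_eq (L := f.leadingCoeff)
      conv_lhs => rw [hfe]
      congr 1
      rw [Pr_eq_fin_prod]
      exact Finset.prod_congr rfl fun i _ => by simp only [dif_pos i.isLt, Fin.eta]
    · apply repP_of_eq (L := g.leadingCoeff)
      conv_lhs => rw [hge]
      congr 1
      rw [Pr_eq_fin_prod]
      exact Finset.prod_congr rfl fun i _ => by simp
    · intro i hi
      simp only [dif_pos hi, dif_pos (by omega : i < n + 1)]
      have := (hch ⟨i, hi⟩).2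
      simpa [Fin.castSucc] using this
    · intro i hi
      simp only [dif_pos (by omega : i + 1 < n + 1), dif_pos (by omega : i < n)]
      have := (hch ⟨i, by omega⟩).1
      simpa [Fin.succ] using this

lemma combRep2 {f g : Polynomial ℝ} {m n : ℕ} {rN sN : ℕ → ℝ} (hm : m = n ∨ m = n+1)
    (hf : RepP f m rN) (hg : RepP g n sN)
    (hlf : 0 < f.leadingCoeff) (hlg : 0 < g.leadingCoeff)
    (hch1 : ∀ i, i < n → sN i ≤ rN i) (hch2 : ∀ i, i + 1 < m → rN (i+1) ≤ sN i)
    {a b c d : ℝ} (ha : 0 < a) (hb : 0 < b) (hc : 0 < c) (hd : 0 < d) (hbc : b*c ≤ a*d) :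
    ∃ t u : ℕ → ℝ,
      RepP (C a * f + C b * g) m t ∧ RepP (C c * f + C d * g) m u ∧
      (∀ i, i < n → sN i ≤ t i ∧ sN i ≤ u i) ∧
      (∀ i, i < m → u i ≤ t i ∧ t i ≤ rN i) := by
  obtain ⟨t, u, L, M, hL, hM, Eh, Ek, B1, B2⟩ :=
    EX2 n n m le_rfl hm rN sN f.leadingCoeff g.leadingCoeff a b c d hlf hlg ha hb hc hd hbc hch1 hch2
  have hf' : f = C f.leadingCoeff * Pr m rN := hf
  have hg' : g = C g.leadingCoeff * Pr n sN := hg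
  have ef : C a * f + C b * g
      = C (a*f.leadingCoeff) * Pr m rN + C (b*g.leadingCoeff) * Pr n sN := by
    conv_lhs => rw [hf', hg']
    rw [← mul_assoc, ← C_mul, ← mul_assoc, ← C_mul]
  have ek : C c * f + C d * g
      = C (c*f.leadingCoeff) * Pr m rN + C (d*g.leadingCoeff) * Pr n sN := by
    conv_lhs => rw [hf', hg']
    rw [← mul_assoc, ← C_mul, ← mul_assoc, ← C_mul]
  exact ⟨t, u, repP_of_eq (ef.trans Eh), repP_of_eq (ek.trans Ek), B1, B2⟩

lemma combRep {f g : Polynomial ℝ} {m n : ℕ} {rN sN : ℕ → ℝ} (hm : m = n ∨ m = n+1)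
    (hf : RepP f m rN) (hg : RepP g n sN)
    (hlf : 0 < f.leadingCoeff) (hlg : 0 < g.leadingCoeff)
    (hch1 : ∀ i, i < n → sN i ≤ rN i) (hch2 : ∀ i, i + 1 < m → rN (i+1) ≤ sN i)
    {a b : ℝ} (ha : 0 < a) (hb : 0 < b) :
    ∃ t : ℕ → ℝ,
      RepP (C a * f + C b * g) m t ∧
      (∀ i, i < n → sN i ≤ t i) ∧ (∀ i, i < m → t i ≤ rN i) := by
  obtain ⟨t, u, ht, hu, B1, B2⟩ := combRep2 hm hf hg hlf hlg hch1 hch2 ha hb ha hb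
    (le_of_eq (mul_comm b a))
  exact ⟨t, ht, fun i hi => (B1 i hi).1, fun i hi => (B2 i hi).2⟩


theorem cor_abcd_i (f g : Polynomial ℝ) (a b c d : ℝ)
    (ha : 0 ≤ a) (hb : 0 ≤ b) (hc : 0 ≤ c) (hd : 0 ≤ d)
    (hfs : Standard f) (hgs : Standard g)
    (hf : RealRooted f) (hg : RealRooted g) (hgf : Prec g f)
    (h : b * c ≤ a * d) :
    Prec (Polynomial.C c * f + Polynomial.C d * g) (Polynomial.C a * f + Polynomial.C b * g) ∧
    Prec g (Polynomial.C a * f + Polynomial.C b * g) ∧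
    Prec (Polynomial.C a * f + Polynomial.C b * g) f := by
  obtain ⟨m, n, rN, sN, hm, hfr, hgr, hch1, hch2⟩ := extractPrec hgf
  have hnm : n ≤ m := by omega
  have hrsort : ∀ i, i + 1 < m → rN (i+1) ≤ rN i := fun i hi =>
    le_trans (hch2 i hi) (hch1 i (by omega))
  have hssort : ∀ i, i + 1 < n → sN (i+1) ≤ sN i := fun i hi =>
    le_trans (hch1 (i+1) hi) (hch2 i (by omega))
  have triv0 : ∀ k : ℕ, ∀ p : ℕ → ℝ, ∀ i, i < 0 → p i ≤ p i := fun _ _ _ hi => absurd hi (by omega)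
  rcases hfs with hf0 | hlf
  · -- f = 0
    rcases hgs with hg0 | hlg
    · -- g = 0 as well
      subst hf0 hg0
      have P00 : Prec 0 0 := mkPrec (Or.inl rfl) (repP_zero 0 (fun _ => (0:ℝ)))
        (repP_zero 0 (fun _ => (0:ℝ))) (fun i hi => absurd hi (by omega))
        (fun i hi => absurd hi (by omega))
      simp only [mul_zero, add_zero]
      exact ⟨P00, P00, P00⟩
    · -- f = 0, g ≠ 0
      subst hf0
      simp only [mul_zero, zero_add]
      refine ⟨?_, ?_, ?_⟩
      · exact mkPrec (Or.inl rfl) (repP_scale hgr b) (repP_scale hgr d)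
          (fun i _ => le_refl _) hssort
      · exact mkPrec (Or.inl rfl) (repP_scale hgr b) hgr (fun i _ => le_refl _) hssort
      · exact mkPrec (Or.inl rfl) (repP_zero n sN) (repP_scale hgr b)
          (fun i _ => le_refl _) hssort
  · rcases hgs with hg0 | hlg
    · -- g = 0, f ≠ 0
      subst hg0
      simp only [mul_zero, add_zero]
      refine ⟨?_, ?_, ?_⟩
      · exact mkPrec (Or.inl rfl) (repP_scale hfr a) (repP_scale hfr c)
          (fun i _ => le_refl _) hrsort
      · exact mkPrec (Or.inl rfl) (repP_scale hfr a) (repP_zero m rN)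
          (fun i _ => le_refl _) hrsort
      · exact mkPrec (Or.inl rfl) hfr (repP_scale hfr a) (fun i _ => le_refl _) hrsort
    · -- main case : f ≠ 0, g ≠ 0
      rcases eq_or_lt_of_le ha with ha0 | hapos
      · -- a = 0
        rcases eq_or_lt_of_le hb with hb0 | hbpos
        · -- a = 0, b = 0 : h = 0
          rw [← ha0, ← hb0]
          simp only [map_zero, zero_mul, add_zero, zero_add]
          refine ⟨?_, ?_, ?_⟩
          · -- Prec k 0
            rcases eq_or_lt_of_le hc with hc0 | hcpos
            · rcases eq_or_lt_of_le hd with hd0 | hdpos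
              · rw [← hc0, ← hd0]
                simp only [map_zero, zero_mul, add_zero]
                exact mkPrec (Or.inl rfl) (repP_zero 0 (fun _ => (0:ℝ)))
                  (repP_zero 0 (fun _ => (0:ℝ))) (fun i hi => absurd hi (by omega))
                  (fun i hi => absurd hi (by omega))
              · rw [← hc0]
                simp only [map_zero, zero_mul, zero_add]
                exact mkPrec (Or.inl rfl) (repP_zero n sN) (repP_scale hgr d)
                  (fun i _ => le_refl _) hssort
            · rcases eq_or_lt_of_le hd with hd0 | hdpos
              · rw [← hd0]
                simp only [map_zero, zero_mul, add_zero]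
                exact mkPrec (Or.inl rfl) (repP_zero m rN) (repP_scale hfr c)
                  (fun i _ => le_refl _) hrsort
              · obtain ⟨u, hu, B1, B2⟩ := combRep hm hfr hgr hlf hlg hch1 hch2 hcpos hdpos
                have husort : ∀ i, i + 1 < m → u (i+1) ≤ u i := by
                  intro i hi
                  calc u (i+1) ≤ rN (i+1) := B2 (i+1) hi
                    _ ≤ sN i := hch2 i hi
                    _ ≤ u i := B1 i (by omega)
                exact mkPrec (Or.inl rfl) (repP_zero m u) hu (fun i _ => le_refl _) husort
          · -- Prec g 0
            exact mkPrec (Or.inl rfl) (repP_zero n sN) hgr (fun i _ => le_refl _) hssort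
          · -- Prec 0 f
            exact mkPrec (Or.inl rfl) hfr (repP_zero m rN) (fun i _ => le_refl _) hrsort
        · -- a = 0, b > 0 : c = 0 forced
          have hc0 : c = 0 := by nlinarith
          rw [← ha0, hc0]
          simp only [map_zero, zero_mul, zero_add]
          refine ⟨?_, ?_, ?_⟩
          · exact mkPrec (Or.inl rfl) (repP_scale hgr b) (repP_scale hgr d)
              (fun i _ => le_refl _) hssort
          · exact mkPrec (Or.inl rfl) (repP_scale hgr b) hgr (fun i _ => le_refl _) hssort
          · exact mkPrec hm hfr (repP_scale hgr b) hch1 hch2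
      · -- a > 0
        rcases eq_or_lt_of_le hb with hb0 | hbpos
        · -- a > 0, b = 0 : h = C a * f
          rw [← hb0]
          simp only [map_zero, zero_mul, add_zero]
          refine ⟨?_, ?_, ?_⟩
          · -- Prec k (C a * f)
            rcases eq_or_lt_of_le hc with hc0 | hcpos
            · rcases eq_or_lt_of_le hd with hd0 | hdpos
              · rw [← hc0, ← hd0]
                simp only [map_zero, zero_mul, add_zero]
                exact mkPrec (Or.inl rfl) (repP_scale hfr a) (repP_zero m rN)
                  (fun i _ => le_refl _) hrsort
              · rw [← hc0]
                simp only [map_zero, zero_mul, zero_add]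
                exact mkPrec hm (repP_scale hfr a) (repP_scale hgr d) hch1 hch2
            · rcases eq_or_lt_of_le hd with hd0 | hdpos
              · rw [← hd0]
                simp only [map_zero, zero_mul, add_zero]
                exact mkPrec (Or.inl rfl) (repP_scale hfr a) (repP_scale hfr c)
                  (fun i _ => le_refl _) hrsort
              · obtain ⟨u, hu, B1, B2⟩ := combRep hm hfr hgr hlf hlg hch1 hch2 hcpos hdpos
                refine mkPrec (Or.inl rfl) (repP_scale hfr a) hu B2 ?_
                intro i hi
                calc rN (i+1) ≤ sN i := hch2 i hi
                  _ ≤ u i := B1 i (by omega)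
          · exact mkPrec hm (repP_scale hfr a) hgr hch1 hch2
          · exact mkPrec (Or.inl rfl) hfr (repP_scale hfr a) (fun i _ => le_refl _) hrsort
        · -- a > 0, b > 0
          obtain ⟨t, hrept, Bt1, Bt2⟩ := combRep hm hfr hgr hlf hlg hch1 hch2 hapos hbpos
          have htsort : ∀ i, i + 1 < m → t (i+1) ≤ t i := by
            intro i hi
            calc t (i+1) ≤ rN (i+1) := Bt2 (i+1) hi
              _ ≤ sN i := hch2 i hi
              _ ≤ t i := Bt1 i (by omega)
          refine ⟨?_, ?_, ?_⟩
          · -- Prec k h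
            rcases eq_or_lt_of_le hc with hc0 | hcpos
            · rcases eq_or_lt_of_le hd with hd0 | hdpos
              · rw [← hc0, ← hd0]
                simp only [map_zero, zero_mul, add_zero]
                exact mkPrec (Or.inl rfl) hrept (repP_zero m t)
                  (fun i _ => le_refl _) htsort
              · rw [← hc0]
                simp only [map_zero, zero_mul, zero_add]
                refine mkPrec hm hrept (repP_scale hgr d) Bt1 ?_
                intro i hi
                calc t (i+1) ≤ rN (i+1) := Bt2 (i+1) hi
                  _ ≤ sN i := hch2 i hi
            · rcases eq_or_lt_of_le hd with hd0 | hdpos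
              · exfalso
                rw [← hd0] at h
                nlinarith
              · obtain ⟨t2, u, ht2, hu, B1, B2⟩ :=
                  combRep2 hm hfr hgr hlf hlg hch1 hch2 hapos hbpos hcpos hdpos h
                refine mkPrec (Or.inl rfl) ht2 hu (fun i hi => (B2 i hi).1) ?_
                intro i hi
                calc t2 (i+1) ≤ rN (i+1) := (B2 (i+1) hi).2
                  _ ≤ sN i := hch2 i hi
                  _ ≤ u i := (B1 i (by omega)).2
          · -- Prec g h
            refine mkPrec hm hrept hgr Bt1 ?_
            intro i hi
            calc t (i+1) ≤ rN (i+1) := Bt2 (i+1) hi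
              _ ≤ sN i := hch2 i hi
          · -- Prec h f
            refine mkPrec (Or.inl rfl) hfr hrept Bt2 ?_
            intro i hi
            calc rN (i+1) ≤ sN i := hch2 i hi
              _ ≤ t i := Bt1 i (by omega)
end

section
/- Let f, g be standard real-rooted polynomials with g ⪯ f and a, b, c, d ≥ 0. If af − bg is standard, then cf + dg ⪯ af − bg; in particular f ⪯ af − bg and g ⪯ af − bg. -/
open Polynomial Finset

namespace CorAbcd
open Filter



/-- descending helper -/
lemma desc_le {f : ℕ → ℝ} {m : ℕ} (h : ∀ i, i + 1 < m → f (i+1) ≤ f i) :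
    ∀ j k, j ≤ k → k < m → f k ≤ f j := by
  intro j k hjk hk
  induction k with
  | zero => simp_all
  | succ k ih =>
    rcases Nat.lt_or_ge j (k+1) with hj | hj
    · exact le_trans (h k hk) (ih (Nat.lt_succ_iff.mp hj) (Nat.lt_of_succ_lt hk))
    · have : j = k + 1 := le_antisymm hjk hj
      simp [this]

lemma desc_lt {f : ℕ → ℝ} {m : ℕ} (h : ∀ i, i + 1 < m → f (i+1) < f i) :
    ∀ j k, j < k → k < m → f k < f j := by
  intro j k hjk hk
  induction k with
  | zero => omega
  | succ k ih =>
    rcases Nat.lt_or_ge j k with hj | hj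
    · exact lt_trans (h k hk) (ih hj (Nat.lt_of_succ_lt hk))
    · have : j = k := by omega
      subst this; exact h j hk

/-- delete one index from a product over range -/
lemma prod_delete {M : Type*} [CommMonoid M] (f : ℕ → M) (m j : ℕ) (hj : j < m) :
    ∏ k ∈ range m, f k = f j * ∏ k ∈ range (m-1), f (if k < j then k else k+1) := by
  induction m with
  | zero => omega
  | succ m ih =>
    rcases Nat.lt_or_ge j m with hj' | hj'
    · rw [Finset.prod_range_succ, ih hj', mul_assoc]
      congr 1
      rw [show m + 1 - 1 = (m-1) + 1 by omega, Finset.prod_range_succ]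
      have : ¬ (m - 1 < j) := by omega
      rw [if_neg this, show m - 1 + 1 = m by omega, mul_comm]
    · have : j = m := by omega
      subst this
      rw [Finset.prod_range_succ, mul_comm]
      congr 1
      apply Finset.prod_congr (by simp)
      intro k hk
      simp at hk
      rw [if_pos (by omega)]

noncomputable def ins (x : ℕ → ℝ) (q : ℕ) (w : ℝ) : ℕ → ℝ :=
  fun k => if k < q then x k else if k = q then w else x (k-1)

lemma ins_lt {x q w k} (h : k < q) : ins x q w k = x k := by simp [ins, h]
lemma ins_eq {x q w} : ins x q w q = w := by simp [ins]
lemma ins_gt {x q w k} (h : q < k) : ins x q w k = x (k-1) := by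
  have h1 : ¬ k < q := by omega
  have h2 : ¬ k = q := by omega
  simp [ins, h1, h2]

/-- existence of insertion position for a descending sequence -/
lemma exists_pos (x : ℕ → ℝ) (M : ℕ) (hx : ∀ k, k + 1 < M → x (k+1) ≤ x k) (w : ℝ) :
    ∃ q, q ≤ M ∧ (∀ k, k < q → w < x k) ∧ (∀ k, q ≤ k → k < M → x k ≤ w) := by
  by_cases H : ∀ k, k < M → w < x k
  · exact ⟨M, le_refl M, fun k hk => H k hk, fun k h1 h2 => by omega⟩
  · push_neg at H
    obtain ⟨k₀, hk₀, hle⟩ := H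
    have hex : ∃ k, k < M ∧ x k ≤ w := ⟨k₀, hk₀, hle⟩
    classical
    let q := Nat.find hex
    refine ⟨q, ?_, ?_, ?_⟩
    · exact le_of_lt (Nat.find_spec hex).1
    · intro k hk
      have := Nat.find_min hex hk
      push_neg at this
      by_cases hkM : k < M
      · exact this hkM
      · exact absurd (lt_of_lt_of_le hk (le_of_lt (Nat.find_spec hex).1)) (by omega)
    · intro k h1 h2
      exact le_trans (desc_le hx q k h1 h2) (Nat.find_spec hex).2
lemma ins_lower {ρ x' : ℕ → ℝ} {N M j q : ℕ} {w : ℝ}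
    (hjN : j ≤ N) (hqM : q ≤ M) (hNM : N ≤ M)
    (hρdesc : ∀ k, k + 1 ≤ N → ρ (k+1) ≤ ρ k)
    (hρj : ρ j = w)
    (halign : ∀ k, k < N → (if k < j then ρ k else ρ (k+1)) ≤ x' k)
    (hx'desc : ∀ k, k + 1 < M → x' (k+1) ≤ x' k)
    (hq1 : ∀ k, k < q → w < x' k)
    (hq2 : ∀ k, q ≤ k → k < M → x' k ≤ w) :
    ∀ k, k ≤ N → ρ k ≤ ins x' q w k := by
  have hρ : ∀ i, i + 1 < N + 1 → ρ (i+1) ≤ ρ i := fun i hi => hρdesc i (by omega)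
  intro k hk
  rcases lt_trichotomy k q with h | h | h
  · rw [ins_lt h]
    rcases Nat.lt_or_ge k j with hkj | hkj
    · have := halign k (by omega); rwa [if_pos hkj] at this
    · calc ρ k ≤ ρ j := desc_le hρ j k hkj (by omega)
        _ = w := hρj
        _ ≤ x' k := le_of_lt (hq1 k h)
  · subst h; rw [ins_eq]
    rcases Nat.lt_or_ge k j with hkj | hkj
    · have h1 := halign k (by omega); rw [if_pos hkj] at h1
      exact le_trans h1 (hq2 k le_rfl (by omega))
    · calc ρ k ≤ ρ j := desc_le hρ j k hkj (by omega)
        _ = w := hρj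
  · rw [ins_gt h]
    rcases Nat.lt_or_ge k j with hkj | hkj
    · rcases Nat.lt_or_ge (k-1) j with hkj' | hkj'
      · -- k ≤ j here; k < j
        have h1 := halign k (by omega); rw [if_pos hkj] at h1
        have h2 : x' k ≤ x' (k-1) := by
          have := hx'desc (k-1) (by omega)
          rwa [show k - 1 + 1 = k by omega] at this
        exact le_trans h1 h2
      · omega
    · -- k ≥ j, k > q
      rcases Nat.eq_or_lt_of_le hkj with he | hlt
      · -- k = j
        have hj1 : 1 ≤ k := by omega
        have h1 := halign (k-1) (by omega)
        rw [if_pos (by omega : k - 1 < j)] at h1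
        have h2 : ρ k ≤ ρ (k-1) := by
          have := hρ (k-1) (by omega)
          rwa [show k - 1 + 1 = k by omega] at this
        exact le_trans h2 h1
      · have h1 := halign (k-1) (by omega)
        rw [if_neg (by omega : ¬ k - 1 < j), show k - 1 + 1 = k by omega] at h1
        exact h1

lemma ins_upper0 {σ x' : ℕ → ℝ} {N j q : ℕ} {w : ℝ}
    (hjN : j ≤ N) (hqN : q ≤ N)
    (hσdesc : ∀ k, k + 1 ≤ N → σ (k+1) ≤ σ k)
    (hσj : σ j = w)
    (halign : ∀ k, k < N → x' k ≤ (if k < j then σ k else σ (k+1)))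
    (hq1 : ∀ k, k < q → w < x' k)
    (hq2 : ∀ k, q ≤ k → k < N → x' k ≤ w) :
    ∀ k, k ≤ N → ins x' q w k ≤ σ k := by
  have hσ : ∀ i, i + 1 < N + 1 → σ (i+1) ≤ σ i := fun i hi => hσdesc i (by omega)
  intro k hk
  rcases lt_trichotomy k q with h | h | h
  · rw [ins_lt h]
    rcases Nat.lt_or_ge k j with hkj | hkj
    · have := halign k (by omega); rwa [if_pos hkj] at this
    · have h1 := halign k (by omega); rw [if_neg (by omega)] at h1
      exact le_trans h1 (hσ k (by omega))
  · subst h; rw [ins_eq]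
    rcases le_or_gt k j with hkj | hkj
    · calc w = σ j := hσj.symm
        _ ≤ σ k := desc_le hσ k j hkj (by omega)
    · have h1 := halign (k-1) (by omega)
      rw [if_neg (by omega : ¬ k - 1 < j), show k - 1 + 1 = k by omega] at h1
      exact le_trans (le_of_lt (hq1 (k-1) (by omega))) h1
  · rw [ins_gt h]
    rcases le_or_gt k j with hkj | hkj
    · have h1 : x' (k-1) ≤ w := hq2 (k-1) (by omega) (by omega)
      calc x' (k-1) ≤ w := h1
        _ = σ j := hσj.symm
        _ ≤ σ k := desc_le hσ k j hkj (by omega)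
    · have h1 := halign (k-1) (by omega)
      rw [if_neg (by omega : ¬ k - 1 < j), show k - 1 + 1 = k by omega] at h1
      exact h1

lemma ins_upper1 {σ x' : ℕ → ℝ} {N M j q : ℕ} {w : ℝ}
    (hjN : j ≤ N) (hqM : q ≤ M) (hMN : M ≤ N + 1)
    (hσdesc : ∀ k, k + 1 ≤ N → σ (k+1) ≤ σ k)
    (hσj : σ j = w)
    (halign : ∀ k, k < N → k + 1 < M → x' (k+1) ≤ (if k < j then σ k else σ (k+1)))
    (hq1 : ∀ k, k < q → w < x' k)
    (hq2 : ∀ k, q ≤ k → k < M → x' k ≤ w) :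
    ∀ k, k ≤ N → k + 1 ≤ M → ins x' q w (k+1) ≤ σ k := by
  have hσ : ∀ i, i + 1 < N + 1 → σ (i+1) ≤ σ i := fun i hi => hσdesc i (by omega)
  intro k hk hkM
  rcases lt_trichotomy (k+1) q with h | h | h
  · rw [ins_lt h]
    have h1 := halign k (by omega) (by omega)
    rcases Nat.lt_or_ge k j with hkj | hkj
    · rwa [if_pos hkj] at h1
    · rw [if_neg (by omega)] at h1
      exact le_trans h1 (hσ k (by omega))
  · rw [h, ins_eq]
    rcases Nat.lt_trichotomy k j with hkj | hkj | hkj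
    · calc w = σ j := hσj.symm
        _ ≤ σ k := desc_le hσ k j (by omega) (by omega)
    · rw [← hkj] at hσj; exact le_of_eq hσj.symm
    · have h1 := halign (k-1) (by omega) (by omega)
      rw [if_neg (by omega : ¬ k - 1 < j), show k - 1 + 1 = k by omega] at h1
      exact le_trans (le_of_lt (hq1 k (by omega))) h1
  · rw [ins_gt h, show k + 1 - 1 = k by omega]
    have h2 : x' k ≤ w := hq2 k (by omega) (by omega)
    rcases le_or_gt k j with hkj | hkj
    · calc x' k ≤ w := h2
        _ = σ j := hσj.symm
        _ ≤ σ k := desc_le hσ k j hkj (by omega)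
    · have h1 := halign (k-1) (by omega) (by omega)
      rw [if_neg (by omega : ¬ k - 1 < j), show k - 1 + 1 = k by omega] at h1
      exact h1
lemma prod_sign {x : ℝ} {r : ℕ → ℝ} {m k : ℕ} (hk : k ≤ m)
    (h1 : ∀ j, j < k → x < r j) (h2 : ∀ j, k ≤ j → j < m → r j < x) :
    0 < (-1 : ℝ)^k * ∏ j ∈ range m, (x - r j) := by
  have hsplit : ∏ j ∈ range m, (x - r j)
      = (∏ j ∈ range k, (x - r j)) * ∏ j ∈ Ico k m, (x - r j) :=
    (Finset.prod_range_mul_prod_Ico _ hk).symm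
  have hneg : (-1 : ℝ)^k * ∏ j ∈ range k, (x - r j) = ∏ j ∈ range k, (r j - x) := by
    have h0 : ((-1 : ℝ))^k = ∏ _j ∈ range k, (-1 : ℝ) := by
      rw [Finset.prod_const, Finset.card_range]
    rw [h0, ← Finset.prod_mul_distrib]
    apply Finset.prod_congr rfl; intro j _; ring
  have hpos1 : 0 < ∏ j ∈ range k, (r j - x) := by
    apply Finset.prod_pos; intro j hj; simp only [Finset.mem_range] at hj
    linarith [h1 j hj]
  have hpos2 : 0 < ∏ j ∈ Ico k m, (x - r j) := by
    apply Finset.prod_pos; intro j hj; simp only [Finset.mem_Ico] at hj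
    linarith [h2 j hj.1 hj.2]
  calc (0:ℝ) < (∏ j ∈ range k, (r j - x)) * ∏ j ∈ Ico k m, (x - r j) :=
        mul_pos hpos1 hpos2
    _ = (-1 : ℝ)^k * ∏ j ∈ range m, (x - r j) := by rw [hsplit, ← hneg]; ring

lemma eval_prods (x : ℝ) (r : ℕ → ℝ) (m : ℕ) (e : ℝ) :
    eval x (C e * ∏ j ∈ range m, (X - C (r j))) = e * ∏ j ∈ range m, (x - r j) := by
  simp [eval_prod]

lemma prod_monic (r : ℕ → ℝ) (m : ℕ) :
    (∏ j ∈ range m, (X - C (r j))).Monic :=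
  monic_prod_of_monic _ _ (fun j _ => monic_X_sub_C (r j))

lemma prod_natDegree (r : ℕ → ℝ) (m : ℕ) :
    (∏ j ∈ range m, (X - C (r j))).natDegree = m := by
  rw [natDegree_prod_of_monic _ _ (fun j _ => monic_X_sub_C (r j))]
  simp

lemma cmul_coeff (e : ℝ) (r : ℕ → ℝ) (m : ℕ) :
    (C e * ∏ j ∈ range m, (X - C (r j))).coeff m = e := by
  have h1 : (∏ j ∈ range m, (X - C (r j))).coeff m = 1 := by
    have h := (prod_monic r m).leadingCoeff
    rwa [leadingCoeff, prod_natDegree] at h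
  rw [coeff_C_mul, h1, mul_one]

lemma cmul_coeff_zero {e : ℝ} {r : ℕ → ℝ} {n m : ℕ} (h : n < m) :
    (C e * ∏ j ∈ range n, (X - C (r j))).coeff m = 0 := by
  rw [coeff_C_mul, coeff_eq_zero_of_natDegree_lt, mul_zero]
  rw [prod_natDegree]; exact h

lemma cmul_degree_le (e : ℝ) (r : ℕ → ℝ) (m : ℕ) :
    (C e * ∏ j ∈ range m, (X - C (r j))).degree ≤ (m : WithBot ℕ) := by
  calc (C e * ∏ j ∈ range m, (X - C (r j))).degree
      ≤ (C e).degree + (∏ j ∈ range m, (X - C (r j))).degree := degree_mul_le _ _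
    _ ≤ 0 + (m : WithBot ℕ) := by
        apply add_le_add degree_C_le
        apply le_trans (degree_le_natDegree)
        rw [prod_natDegree]
    _ = (m : WithBot ℕ) := by rw [zero_add]

lemma combo_facts {A B L : ℝ} {r s : ℕ → ℝ} {m n : ℕ} (hn : n ≤ m)
    (hL : L = A - (if n = m then B else 0)) (hL0 : L ≠ 0) :
    (C A * ∏ j ∈ range m, (X - C (r j)) - C B * ∏ j ∈ range n, (X - C (s j))).natDegree = m ∧
    (C A * ∏ j ∈ range m, (X - C (r j)) - C B * ∏ j ∈ range n, (X - C (s j))).leadingCoeff = L ∧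
    (C A * ∏ j ∈ range m, (X - C (r j)) - C B * ∏ j ∈ range n, (X - C (s j))) ≠ 0 := by
  set h := C A * ∏ j ∈ range m, (X - C (r j)) - C B * ∏ j ∈ range n, (X - C (s j)) with hh
  have hcoeff : h.coeff m = L := by
    rw [hh, coeff_sub, cmul_coeff]
    rcases Nat.eq_or_lt_of_le hn with he | hlt
    · subst he; rw [cmul_coeff, hL, if_pos rfl]
    · rw [cmul_coeff_zero hlt, hL, if_neg (by omega)]
  have hne : h ≠ 0 := fun h0 => hL0 (by rw [← hcoeff, h0, coeff_zero])
  have hdegle : h.degree ≤ (m : WithBot ℕ) := by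
    apply le_trans (degree_sub_le _ _)
    apply max_le (cmul_degree_le _ _ _)
    exact le_trans (cmul_degree_le _ _ _) (by exact_mod_cast Nat.cast_le.mpr hn)
  have hnd : h.natDegree = m := by
    apply le_antisymm (natDegree_le_iff_degree_le.mpr hdegle)
    exact le_natDegree_of_ne_zero (by rw [hcoeff]; exact hL0)
  refine ⟨hnd, ?_, hne⟩
  rw [leadingCoeff, hnd, hcoeff]

lemma combo_facts_add {A B L : ℝ} {r s : ℕ → ℝ} {m n : ℕ} (hn : n ≤ m)
    (hL : L = A + (if n = m then B else 0)) (hL0 : L ≠ 0) :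
    (C A * ∏ j ∈ range m, (X - C (r j)) + C B * ∏ j ∈ range n, (X - C (s j))).natDegree = m ∧
    (C A * ∏ j ∈ range m, (X - C (r j)) + C B * ∏ j ∈ range n, (X - C (s j))).leadingCoeff = L ∧
    (C A * ∏ j ∈ range m, (X - C (r j)) + C B * ∏ j ∈ range n, (X - C (s j))) ≠ 0 := by
  have key : C A * ∏ j ∈ range m, (X - C (r j)) + C B * ∏ j ∈ range n, (X - C (s j))
      = C A * ∏ j ∈ range m, (X - C (r j)) - C (-B) * ∏ j ∈ range n, (X - C (s j)) := by
    rw [map_neg]; ring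
  rw [key]
  exact combo_facts hn (by rw [hL]; split <;> ring) hL0
lemma poly_ivt (p : Polynomial ℝ) {x y : ℝ} (hxy : x < y) (hsign : eval x p * eval y p < 0) :
    ∃ z, x < z ∧ z < y ∧ eval z p = 0 := by
  have hc : ContinuousOn (fun t => eval t p) (Set.Icc x y) :=
    (Polynomial.continuous p).continuousOn
  rcases lt_or_ge (eval x p) 0 with hx | hx
  · have hy : 0 < eval y p := by nlinarith
    have h0 : (0:ℝ) ∈ Set.Ioo (eval x p) (eval y p) := ⟨hx, hy⟩
    obtain ⟨z, hz, hz0⟩ := intermediate_value_Ioo (le_of_lt hxy) hc h0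
    exact ⟨z, hz.1, hz.2, hz0⟩
  · have hx' : 0 < eval x p := by
      rcases lt_or_eq_of_le hx with h | h
      · exact h
      · exfalso; rw [← h] at hsign; simp at hsign
    have hy : eval y p < 0 := by nlinarith
    have h0 : (0:ℝ) ∈ Set.Ioo (eval y p) (eval x p) := ⟨hy, hx'⟩
    obtain ⟨z, hz, hz0⟩ := intermediate_value_Ioo' (le_of_lt hxy) hc h0
    exact ⟨z, hz.1, hz.2, hz0⟩

lemma exists_pos_above (p : Polynomial ℝ) (hdeg : 0 < p.degree) (hlead : 0 < p.leadingCoeff)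
    (x0 : ℝ) : ∃ x, x0 < x ∧ 0 < eval x p := by
  have ht : Tendsto (fun x => eval x p) atTop atTop :=
    p.tendsto_atTop_of_leadingCoeff_nonneg hdeg (le_of_lt hlead)
  have h1 : ∀ᶠ x in atTop, 0 < eval x p := ht.eventually_gt_atTop 0
  have h2 : ∀ᶠ (x : ℝ) in atTop, x0 < x := eventually_gt_atTop x0
  obtain ⟨x, hx1, hx2⟩ := (h1.and h2).exists
  exact ⟨x, hx2, hx1⟩

lemma exists_sign_below (p : Polynomial ℝ) (hdeg : 0 < p.degree) (hlead : 0 < p.leadingCoeff)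
    (x0 : ℝ) : ∃ x, x < x0 ∧ 0 < (-1 : ℝ)^(p.natDegree) * eval x p := by
  set q : Polynomial ℝ := p.comp (-X) with hq
  have hX : (-X : Polynomial ℝ).natDegree = 1 := by simp
  have hqnd : q.natDegree = p.natDegree := by
    rw [hq, natDegree_comp, hX, mul_one]
  have hql : q.leadingCoeff = p.leadingCoeff * (-1)^(p.natDegree) := by
    rw [hq, leadingCoeff_comp (by rw [hX]; omega)]
    congr 1
    rw [leadingCoeff_neg, leadingCoeff_X]
  have hqdeg : 0 < q.degree := by
    have hp0 : p ≠ 0 := fun h => by simp [h] at hdeg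
    have hq0 : q ≠ 0 := by
      intro h
      have := hql
      rw [h, leadingCoeff_zero] at this
      have h2 : p.leadingCoeff ≠ 0 := leadingCoeff_ne_zero.mpr hp0
      have h3 : ((-1 : ℝ))^(p.natDegree) ≠ 0 := by positivity
      exact absurd this.symm (by exact mul_ne_zero h2 h3)
    rw [degree_eq_natDegree hq0, hqnd]
    rw [degree_eq_natDegree hp0] at hdeg
    exact_mod_cast hdeg
  have heval : ∀ x : ℝ, eval x q = eval (-x) p := by
    intro x; rw [hq, eval_comp]; simp
  rcases Nat.even_or_odd p.natDegree with he | ho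
  · have hl : 0 < q.leadingCoeff := by
      rw [hql, he.neg_one_pow, mul_one]; exact hlead
    obtain ⟨x, hx1, hx2⟩ := exists_pos_above q hqdeg hl (-x0)
    refine ⟨-x, by linarith, ?_⟩
    rw [he.neg_one_pow, one_mul, ← heval]; simpa using hx2
  · have hl : q.leadingCoeff < 0 := by
      rw [hql, ho.neg_one_pow, mul_neg_one]; linarith
    have ht : Tendsto (fun x => eval x q) atTop atBot :=
      q.tendsto_atBot_of_leadingCoeff_nonpos hqdeg (le_of_lt hl)
    have h1 : ∀ᶠ x in atTop, eval x q < 0 := ht.eventually_lt_atBot 0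
    have h2 : ∀ᶠ (x : ℝ) in atTop, -x0 < x := eventually_gt_atTop (-x0)
    obtain ⟨x, hx1, hx2⟩ := (h1.and h2).exists
    refine ⟨-x, by linarith, ?_⟩
    rw [ho.neg_one_pow, ← heval]
    nlinarith
lemma eq_prod_of_distinct_roots (p : Polynomial ℝ) (m : ℕ) (u : ℕ → ℝ)
    (hne : p ≠ 0) (hdeg : p.natDegree = m)
    (hu : ∀ i, i + 1 < m → u (i+1) < u i)
    (hroot : ∀ i, i < m → eval (u i) p = 0) :
    p = C p.leadingCoeff * ∏ k ∈ range m, (X - C (u k)) := by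
  classical
  have huinj : ∀ i j, i < j → j < m → u j < u i := desc_lt hu
  set Mu : Multiset ℝ := (Finset.range m).val.map u with hMu
  have hnodup : Mu.Nodup := by
    rw [hMu]
    apply Multiset.Nodup.map_on ?_ (Finset.range m).nodup
    intro i hi j hj hij
    simp only [Finset.mem_range, Finset.mem_val] at hi hj
    by_contra hne'
    rcases Nat.lt_or_ge i j with h | h
    · exact absurd hij (ne_of_gt (huinj i j h hj))
    · have : j < i := by omega
      exact absurd hij.symm (ne_of_gt (huinj j i (by omega) hi))
  have hMucard : Multiset.card Mu = m := by
    rw [hMu, Multiset.card_map]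
    exact Finset.card_range m
  have hsub : Mu ≤ p.roots := by
    apply (Multiset.le_iff_subset hnodup).mpr
    intro x hx
    rw [hMu] at hx
    obtain ⟨i, hi, rfl⟩ := Multiset.mem_map.mp hx
    simp only [Finset.mem_val, Finset.mem_range] at hi
    rw [mem_roots hne]
    exact hroot i hi
  have hcard : Multiset.card p.roots ≤ Multiset.card Mu := by
    rw [hMucard, ← hdeg]
    exact p.card_roots'
  have heq : Mu = p.roots := Multiset.eq_of_le_of_card_le hsub hcard
  have hsplits : p.Splits := by
    apply splits_iff_card_roots.mpr
    rw [← heq, hMucard, hdeg]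
  have hfin := hsplits.eq_prod_roots
  calc p = C p.leadingCoeff * (p.roots.map fun a => X - C a).prod := hfin
    _ = C p.leadingCoeff * ∏ k ∈ range m, (X - C (u k)) := by
        rw [← heq, hMu, Multiset.map_map, Finset.prod_eq_multiset_prod]
        rfl
lemma sign_mul_neg {k : ℕ} {e1 e2 : ℝ} (h1 : 0 < (-1:ℝ)^(k+1) * e1)
    (h2 : 0 < (-1:ℝ)^k * e2) : e1 * e2 < 0 := by
  rcases Nat.even_or_odd k with h | h
  · rw [Even.neg_one_pow h] at h2; rw [pow_succ, Even.neg_one_pow h] at h1; nlinarith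
  · rw [Odd.neg_one_pow h] at h2; rw [pow_succ, Odd.neg_one_pow h] at h1; nlinarith

lemma strict_case (n m : ℕ) (hm : m = n ∨ m = n + 1)
    (r s : ℕ → ℝ) (A B Cc D L : ℝ)
    (hB : 0 ≤ B) (hCc : 0 < Cc) (hD : 0 < D)
    (hrs : ∀ i, i < n → s i < r i) (hsr : ∀ i, i + 1 < m → r (i+1) < s i)
    (hLdef : L = if m = n then A - B else A) (hL : 0 < L) :
    ∃ t v : ℕ → ℝ,
      (C A * ∏ k ∈ range m, (X - C (r k)) - C B * ∏ k ∈ range n, (X - C (s k))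
        = C L * ∏ k ∈ range m, (X - C (t k))) ∧
      (C Cc * ∏ k ∈ range m, (X - C (r k)) + C D * ∏ k ∈ range n, (X - C (s k))
        = C (if m = n then Cc + D else Cc) * ∏ k ∈ range m, (X - C (v k))) ∧
      (∀ k, k < m → r k ≤ t k) ∧ (∀ k, k + 1 < m → t (k+1) ≤ s k) ∧
      (∀ k, k < m → v k ≤ r k) ∧ (∀ k, k < n → s k ≤ v k) := by
  have hnm : n ≤ m := by omega
  have hA : 0 < A := by
    rcases hm with h | h
    · rw [h, if_pos rfl] at hLdef; linarith
    · rw [h] at hLdef; rw [hLdef] at hL; simpa [Nat.succ_ne_self] using hL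
  have hL' : L = A - (if n = m then B else 0) := by
    rcases hm with h | h
    · subst h; simpa using hLdef
    · subst h
      rw [if_neg (by omega)] at hLdef
      rw [if_neg (by omega), hLdef]; ring
  -- the case m = 0
  rcases Nat.eq_zero_or_pos m with hm0 | hm1
  · have hn0 : n = 0 := by omega
    subst hm0; subst hn0
    refine ⟨fun _ => 0, fun _ => 0, ?_, ?_, fun k hk => absurd hk (by omega),
      fun k hk => absurd hk (by omega), fun k hk => absurd hk (by omega),
      fun k hk => absurd hk (by omega)⟩
    · simp only [Finset.range_zero, Finset.prod_empty, mul_one, ← map_sub]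
      rw [hLdef]; norm_num
    · simp only [Finset.range_zero, Finset.prod_empty, mul_one, ← map_add]
      norm_num
  -- weak descending facts
  have hrd : ∀ k, k + 1 < m → r (k+1) ≤ r k := by
    intro k hk
    have h1 := hsr k hk
    have h2 := hrs k (by omega)
    linarith
  have hsd : ∀ k, k + 1 < n → s (k+1) ≤ s k := by
    intro k hk
    have h1 := hrs (k+1) hk
    have h2 := hsr k (by omega)
    linarith
  set Pr := ∏ k ∈ range m, (X - C (r k)) with hPr
  set Ps := ∏ k ∈ range n, (X - C (s k)) with hPs
  set h := C A * Pr - C B * Ps with hh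
  set Lp := if m = n then Cc + D else Cc with hLp
  set p := C Cc * Pr + C D * Ps with hp
  have hLp0 : 0 < Lp := by rw [hLp]; split <;> [linarith; linarith]
  obtain ⟨hhnd, hhlead, hhne⟩ : h.natDegree = m ∧ h.leadingCoeff = L ∧ h ≠ 0 :=
    combo_facts (A := A) (B := B) (r := r) (s := s) hnm hL' (ne_of_gt hL)
  have hLp' : Lp = Cc + (if n = m then D else 0) := by
    rw [hLp]; rcases hm with h' | h'
    · subst h'; simp
    · subst h'; rw [if_neg (by omega), if_neg (by omega)]; ring
  obtain ⟨hpnd, hplead, hpne⟩ : p.natDegree = m ∧ p.leadingCoeff = Lp ∧ p ≠ 0 :=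
    combo_facts_add (A := Cc) (B := D) (r := r) (s := s) hnm hLp' (ne_of_gt hLp0)
  -- eval expressions
  have heval_h : ∀ x : ℝ, eval x h
      = A * ∏ j ∈ range m, (x - r j) - B * ∏ j ∈ range n, (x - s j) := by
    intro x; rw [hh, eval_sub, hPr, hPs, eval_prods, eval_prods]
  have heval_p : ∀ x : ℝ, eval x p
      = Cc * ∏ j ∈ range m, (x - r j) + D * ∏ j ∈ range n, (x - s j) := by
    intro x; rw [hp, eval_add, hPr, hPs, eval_prods, eval_prods]
  have hzero_r : ∀ i, i < m → (∏ j ∈ range m, (r i - r j)) = 0 := by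
    intro i hi
    apply Finset.prod_eq_zero (Finset.mem_range.mpr hi)
    ring
  have hzero_s : ∀ i, i < n → (∏ j ∈ range n, (s i - s j)) = 0 := by
    intro i hi
    apply Finset.prod_eq_zero (Finset.mem_range.mpr hi)
    ring
  -- sign of the big product at r i and s i
  have hprod_r : ∀ i, i < m → 0 < (-1:ℝ)^i * ∏ j ∈ range n, (r i - s j) := by
    intro i hi
    apply prod_sign (by omega : i ≤ n)
    · intro j hj
      have h1 : r (j+1) < s j := hsr j (by omega)
      have h2 : r i ≤ r (j+1) := desc_le hrd (j+1) i (by omega) hi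
      linarith
    · intro j hj1 hj2
      have h1 : s j ≤ s i := desc_le hsd i j hj1 hj2
      have h2 : s i < r i := hrs i (by omega)
      linarith
  have hprod_s : ∀ i, i < n → 0 < (-1:ℝ)^(i+1) * ∏ j ∈ range m, (s i - r j) := by
    intro i hi
    apply prod_sign (by omega : i + 1 ≤ m)
    · intro j hj
      have h1 : r i ≤ r j := desc_le hrd j i (by omega) (by omega)
      have h2 : s i < r i := hrs i hi
      linarith
    · intro j hj1 hj2
      have h1 : r j ≤ r (i+1) := desc_le hrd (i+1) j hj1 hj2
      have h2 : r (i+1) < s i := hsr i (by omega)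
      linarith
  have hsign_s_p : ∀ i, i < n → 0 < (-1:ℝ)^(i+1) * eval (s i) p := by
    intro i hi
    have he : eval (s i) p = Cc * ∏ j ∈ range m, (s i - r j) := by
      rw [heval_p, hzero_s i hi, mul_zero, add_zero]
    have hps := hprod_s i hi
    rw [he]
    calc (0:ℝ) < Cc * ((-1:ℝ)^(i+1) * ∏ j ∈ range m, (s i - r j)) := mul_pos hCc hps
      _ = (-1:ℝ)^(i+1) * (Cc * ∏ j ∈ range m, (s i - r j)) := by ring
  have hsign_r_p : ∀ i, i < m → 0 < (-1:ℝ)^i * eval (r i) p := by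
    intro i hi
    have he : eval (r i) p = D * ∏ j ∈ range n, (r i - s j) := by
      rw [heval_p, hzero_r i hi, mul_zero, zero_add]
    have hps := hprod_r i hi
    rw [he]
    calc (0:ℝ) < D * ((-1:ℝ)^i * ∏ j ∈ range n, (r i - s j)) := mul_pos hD hps
      _ = (-1:ℝ)^i * (D * ∏ j ∈ range n, (r i - s j)) := by ring
  -- construct v
  have hpdeg : 0 < p.degree := by
    rw [degree_eq_natDegree hpne, hpnd]
    exact_mod_cast hm1
  have Hv : ∀ i, ∃ z, (i < n → s i < z ∧ z < r i ∧ eval z p = 0)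
      ∧ (n ≤ i → i < m → z < r i ∧ eval z p = 0) := by
    intro i
    by_cases hi : i < n
    · have h1 := hsign_s_p i hi
      have h2 := hsign_r_p i (by omega)
      have hlt : s i < r i := hrs i hi
      obtain ⟨z, hz1, hz2, hz3⟩ := poly_ivt p hlt (sign_mul_neg h1 h2)
      exact ⟨z, fun _ => ⟨hz1, hz2, hz3⟩, fun h' _ => absurd hi (by omega)⟩
    · by_cases hi2 : i < m
      · have hieq : i = n := by omega
        have hmeq : m = n + 1 := by rcases hm with h' | h' <;> omega
        obtain ⟨x, hx1, hx2⟩ := exists_sign_below p hpdeg (by rw [hplead]; exact hLp0) (r i)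
        rw [hpnd, hmeq, ← hieq] at hx2
        have h2 := hsign_r_p i hi2
        rw [show i + 1 = i + 1 from rfl] at hx2
        obtain ⟨z, hz1, hz2, hz3⟩ := poly_ivt p hx1 (sign_mul_neg hx2 h2)
        exact ⟨z, fun h' => absurd h' (by omega), fun _ _ => ⟨hz2, hz3⟩⟩
      · exact ⟨0, fun h' => absurd h' (by omega), fun _ h' => absurd h' hi2⟩
  choose v hv1 hv2 using Hv
  have hvr : ∀ k, k < m → v k < r k := by
    intro k hk
    by_cases hkn : k < n
    · exact (hv1 k hkn).2.1
    · exact (hv2 k (by omega) hk).1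
  have hvroot : ∀ k, k < m → eval (v k) p = 0 := by
    intro k hk
    by_cases hkn : k < n
    · exact (hv1 k hkn).2.2
    · exact (hv2 k (by omega) hk).2
  have hvdesc : ∀ k, k + 1 < m → v (k+1) < v k := by
    intro k hk
    have h1 : v (k+1) < r (k+1) := hvr (k+1) hk
    have h2 : r (k+1) < s k := hsr k hk
    have h3 : s k < v k := (hv1 k (by omega)).1
    linarith
  have hpeq : p = C Lp * ∏ k ∈ range m, (X - C (v k)) := by
    have := eq_prod_of_distinct_roots p m v hpne hpnd hvdesc hvroot
    rwa [hplead] at this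
  -- construct t
  rcases eq_or_lt_of_le hB with hB0 | hBpos
  · -- B = 0 : t = r
    refine ⟨r, v, ?_, hpeq, fun k _ => le_refl _, fun k hk => le_of_lt (hsr k hk), 
      fun k hk => le_of_lt (hvr k hk), fun k hk => le_of_lt ((hv1 k hk).1)⟩
    rw [hh, ← hB0, map_zero, zero_mul, sub_zero]
    have hLA : L = A := by
      rcases hm with h' | h'
      · rw [hLdef, if_pos h', ← hB0]; ring
      · rw [hLdef, if_neg (by omega)]
    rw [hLA]
  · have hsign_s_h : ∀ i, i < n → 0 < (-1:ℝ)^(i+1) * eval (s i) h := by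
      intro i hi
      have he : eval (s i) h = A * ∏ j ∈ range m, (s i - r j) := by
        rw [heval_h, hzero_s i hi, mul_zero, sub_zero]
      have hps := hprod_s i hi
      rw [he]
      calc (0:ℝ) < A * ((-1:ℝ)^(i+1) * ∏ j ∈ range m, (s i - r j)) := mul_pos hA hps
        _ = (-1:ℝ)^(i+1) * (A * ∏ j ∈ range m, (s i - r j)) := by ring
    have hsign_r_h : ∀ i, i < m → 0 < (-1:ℝ)^(i+1) * eval (r i) h := by
      intro i hi
      have he : eval (r i) h = -(B * ∏ j ∈ range n, (r i - s j)) := by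
        rw [heval_h, hzero_r i hi, mul_zero, zero_sub]
      have hps := hprod_r i hi
      rw [he]
      calc (0:ℝ) < B * ((-1:ℝ)^i * ∏ j ∈ range n, (r i - s j)) := mul_pos hBpos hps
        _ = (-1:ℝ)^(i+1) * -(B * ∏ j ∈ range n, (r i - s j)) := by rw [pow_succ]; ring
    have hhdeg : 0 < h.degree := by
      rw [degree_eq_natDegree hhne, hhnd]
      exact_mod_cast hm1
    have Ht : ∀ i, ∃ z, (i = 0 → r 0 < z ∧ eval z h = 0)
        ∧ (1 ≤ i → i < m → r i < z ∧ z < s (i-1) ∧ eval z h = 0) := by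
      intro i
      rcases Nat.eq_zero_or_pos i with hi0 | hi1
      · subst hi0
        obtain ⟨x, hx1, hx2⟩ := exists_pos_above h hhdeg (by rw [hhlead]; exact hL) (r 0)
        have h2 := hsign_r_h 0 hm1
        have hsgn : eval (r 0) h * eval x h < 0 := by
          have h2' : eval (r 0) h < 0 := by
            have : (-1:ℝ)^(0+1) = -1 := by norm_num
            rw [this] at h2; linarith
          nlinarith
        obtain ⟨z, hz1, hz2, hz3⟩ := poly_ivt h hx1 hsgn
        exact ⟨z, fun _ => ⟨hz1, hz3⟩, fun h' _ => by omega⟩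
      · by_cases hi2 : i < m
        · have h1 := hsign_r_h i hi2
          have h2 := hsign_s_h (i-1) (by omega)
          rw [show i - 1 + 1 = i by omega] at h2
          have hlt : r i < s (i-1) := by
            have := hsr (i-1) (by rw [show i - 1 + 1 = i by omega]; exact hi2)
            rwa [show i - 1 + 1 = i by omega] at this
          obtain ⟨z, hz1, hz2, hz3⟩ := poly_ivt h hlt (sign_mul_neg h1 h2)
          exact ⟨z, fun h' => by omega, fun _ _ => ⟨hz1, hz2, hz3⟩⟩
        · exact ⟨0, fun h' => by omega, fun _ h' => absurd h' hi2⟩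
    choose t ht1 ht2 using Ht
    have htr : ∀ k, k < m → r k < t k := by
      intro k hk
      rcases Nat.eq_zero_or_pos k with h0 | h1
      · subst h0; exact (ht1 0 rfl).1
      · exact (ht2 k h1 hk).1
    have htroot : ∀ k, k < m → eval (t k) h = 0 := by
      intro k hk
      rcases Nat.eq_zero_or_pos k with h0 | h1
      · subst h0; exact (ht1 0 rfl).2
      · exact (ht2 k h1 hk).2.2
    have hts : ∀ k, k + 1 < m → t (k+1) < s k := by
      intro k hk
      have := (ht2 (k+1) (by omega) hk).2.1
      rwa [show k + 1 - 1 = k by omega] at this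
    have htdesc : ∀ k, k + 1 < m → t (k+1) < t k := by
      intro k hk
      have h1 : t (k+1) < s k := hts k hk
      have h2 : s k < r k := hrs k (by omega)
      have h3 : r k < t k := htr k (by omega)
      linarith
    have hheq : h = C L * ∏ k ∈ range m, (X - C (t k)) := by
      have := eq_prod_of_distinct_roots h m t hhne hhnd htdesc htroot
      rwa [hhlead] at this
    exact ⟨t, v, hheq, hpeq, fun k hk => le_of_lt (htr k hk),
      fun k hk => le_of_lt (hts k hk), fun k hk => le_of_lt (hvr k hk),
      fun k hk => le_of_lt ((hv1 k hk).1)⟩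
lemma master : ∀ (n m : ℕ), (m = n ∨ m = n + 1) → ∀ (r s : ℕ → ℝ) (A B Cc D L : ℝ),
    0 ≤ B → 0 < Cc → 0 < D →
    (∀ i, i < n → s i ≤ r i) → (∀ i, i + 1 < m → r (i+1) ≤ s i) →
    L = (if m = n then A - B else A) → 0 < L →
    ∃ t v : ℕ → ℝ,
      (C A * ∏ k ∈ range m, (X - C (r k)) - C B * ∏ k ∈ range n, (X - C (s k))
        = C L * ∏ k ∈ range m, (X - C (t k))) ∧
      (C Cc * ∏ k ∈ range m, (X - C (r k)) + C D * ∏ k ∈ range n, (X - C (s k))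
        = C (if m = n then Cc + D else Cc) * ∏ k ∈ range m, (X - C (v k))) ∧
      (∀ k, k < m → r k ≤ t k) ∧ (∀ k, k + 1 < m → t (k+1) ≤ s k) ∧
      (∀ k, k < m → v k ≤ r k) ∧ (∀ k, k < n → s k ≤ v k) := by
  intro n
  induction n with
  | zero =>
    intro m hm r s A B Cc D L hB hCc hD hrs hsr hLdef hL
    exact strict_case 0 m hm r s A B Cc D L hB hCc hD
      (fun i hi => absurd hi (by omega))
      (fun i hi => absurd hi (by omega)) hLdef hL
  | succ n ih =>
    intro m hm r s A B Cc D L hB hCc hD hrs hsr hLdef hL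
    by_cases hstrict : (∀ i, i < n + 1 → s i < r i) ∧ (∀ i, i + 1 < m → r (i+1) < s i)
    · exact strict_case (n+1) m hm r s A B Cc D L hB hCc hD hstrict.1 hstrict.2 hLdef hL
    have hm1 : n + 1 ≤ m := by omega
    have hrd : ∀ k, k + 1 < m → r (k+1) ≤ r k := by
      intro k hk
      have h1 := hsr k hk
      have h2 := hrs k (by omega)
      linarith
    have hsd : ∀ k, k + 1 < n + 1 → s (k+1) ≤ s k := by
      intro k hk
      have h1 := hrs (k+1) hk
      have h2 := hsr k (by omega)
      linarith
    -- find a coincidence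
    have hkey : ∃ i j, i < n + 1 ∧ j < m ∧ (j = i ∨ j = i + 1) ∧ r j = s i := by
      rcases not_and_or.mp hstrict with h1 | h1
      · push_neg at h1
        obtain ⟨i, hi, hle⟩ := h1
        exact ⟨i, i, hi, by omega, Or.inl rfl, le_antisymm hle (hrs i hi)⟩
      · push_neg at h1
        obtain ⟨i, hi, hle⟩ := h1
        exact ⟨i, i + 1, by omega, hi, Or.inr rfl, le_antisymm (hsr i hi) hle⟩
    obtain ⟨i, j, hin, hjm, hji, hw⟩ := hkey
    -- new configuration
    have hm' : m - 1 = n ∨ m - 1 = n + 1 := by omega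
    have hcfg1 : ∀ k, k < n → s (if k < i then k else k + 1) ≤ r (if k < j then k else k + 1) := by
      intro k hk
      rcases Nat.lt_or_ge k i with hki | hki <;> rcases Nat.lt_or_ge k j with hkj | hkj
      · rw [if_pos hki, if_pos hkj]; exact hrs k (by omega)
      · omega
      · -- k ≥ i, k < j : j = i + 1, k = i
        have hj' : j = i + 1 := by omega
        have hk' : k = i := by omega
        rw [if_neg (by omega), if_pos hkj, hk']
        have h1 : s (i+1) ≤ r (i+1) := hrs (i+1) (by omega)
        have h2 : r (i+1) ≤ r i := hrd i (by omega)
        linarith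
      · rw [if_neg (by omega), if_neg (by omega)]
        exact hrs (k+1) (by omega)
    have hcfg2 : ∀ k, k + 1 < m - 1 →
        r (if k + 1 < j then k + 1 else k + 2) ≤ s (if k < i then k else k + 1) := by
      intro k hk
      rcases Nat.lt_or_ge (k+1) j with hkj | hkj <;> rcases Nat.lt_or_ge k i with hki | hki
      · rw [if_pos hkj, if_pos hki]; exact hsr k (by omega)
      · omega
      · -- k + 1 ≥ j, k < i : j = i, k + 1 = i
        have hj' : j = i := by omega
        have hk' : k + 1 = i := by omega
        rw [if_neg (by omega), if_pos hki]
        have h1 : r (k+2) ≤ s (k+1) := hsr (k+1) (by omega)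
        have h2 : s (k+1) ≤ s k := hsd k (by omega)
        linarith
      · rw [if_neg (by omega), if_neg (by omega)]
        exact hsr (k+1) (by omega)
    have hLdef' : L = (if m - 1 = n then A - B else A) := by
      rcases hm with h' | h' <;> rw [hLdef]
      · rw [if_pos h', if_pos (by omega)]
      · rw [if_neg (by omega), if_neg (by omega)]
    obtain ⟨t', v', heq_t, heq_v, inv1, inv2, inv3, inv4⟩ :=
      ih (m-1) hm' (fun k => r (if k < j then k else k + 1))
        (fun k => s (if k < i then k else k + 1)) A B Cc D L hB hCc hD hcfg1 hcfg2 hLdef' hL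
    -- descending facts for t' and v'
    have ht'desc : ∀ k, k + 1 < m - 1 → t' (k+1) ≤ t' k := by
      intro k hk
      have h1 := inv2 k hk
      have h2 := hcfg1 k (by omega)
      have h3 := inv1 k (by omega)
      linarith
    have hv'desc : ∀ k, k + 1 < m - 1 → v' (k+1) ≤ v' k := by
      intro k hk
      have h1 := inv3 (k+1) hk
      have h2 := hcfg2 k hk
      have h3 := inv4 k (by omega)
      linarith
    obtain ⟨q, hqM, hq1, hq2⟩ := exists_pos t' (m-1) ht'desc (s i)
    obtain ⟨qv, hqvM, hqv1, hqv2⟩ := exists_pos v' (m-1) hv'desc (s i)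
    -- product splitting
    have hsplit_r : ∏ k ∈ range m, (X - C (r k))
        = (X - C (s i)) * ∏ k ∈ range (m-1), (X - C (r (if k < j then k else k + 1))) := by
      have h0 := prod_delete (fun k => X - C (r k)) m j hjm
      beta_reduce at h0
      rw [h0, hw]
    have hsplit_s : ∏ k ∈ range (n+1), (X - C (s k))
        = (X - C (s i)) * ∏ k ∈ range n, (X - C (s (if k < i then k else k + 1))) := by
      have h0 := prod_delete (fun k => X - C (s k)) (n+1) i (by omega)
      beta_reduce at h0
      rw [h0]
      norm_num
    have hsplit_t : ∏ k ∈ range m, (X - C (ins t' q (s i) k))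
        = (X - C (s i)) * ∏ k ∈ range (m-1), (X - C (t' k)) := by
      have h0 := prod_delete (fun k => X - C (ins t' q (s i) k)) m q (by omega)
      beta_reduce at h0
      rw [h0, ins_eq]
      congr 1
      apply Finset.prod_congr rfl
      intro k hk
      rcases Nat.lt_or_ge k q with h' | h'
      · rw [if_pos h', ins_lt h']
      · rw [if_neg (by omega), ins_gt (by omega : q < k + 1), Nat.add_sub_cancel]
    have hsplit_v : ∏ k ∈ range m, (X - C (ins v' qv (s i) k))
        = (X - C (s i)) * ∏ k ∈ range (m-1), (X - C (v' k)) := by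
      have h0 := prod_delete (fun k => X - C (ins v' qv (s i) k)) m qv (by omega)
      beta_reduce at h0
      rw [h0, ins_eq]
      congr 1
      apply Finset.prod_congr rfl
      intro k hk
      rcases Nat.lt_or_ge k qv with h' | h'
      · rw [if_pos h', ins_lt h']
      · rw [if_neg (by omega), ins_gt (by omega : qv < k + 1), Nat.add_sub_cancel]
    refine ⟨ins t' q (s i), ins v' qv (s i), ?_, ?_, ?_, ?_, ?_, ?_⟩
    · rw [hsplit_r, hsplit_s, hsplit_t]
      calc C A * ((X - C (s i)) * ∏ k ∈ range (m-1), (X - C (r (if k < j then k else k + 1))))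
            - C B * ((X - C (s i)) * ∏ k ∈ range n, (X - C (s (if k < i then k else k + 1))))
          = (X - C (s i)) * (C A * ∏ k ∈ range (m-1), (X - C (r (if k < j then k else k + 1)))
            - C B * ∏ k ∈ range n, (X - C (s (if k < i then k else k + 1)))) := by ring
        _ = (X - C (s i)) * (C L * ∏ k ∈ range (m-1), (X - C (t' k))) := by rw [heq_t]
        _ = C L * ((X - C (s i)) * ∏ k ∈ range (m-1), (X - C (t' k))) := by ring
    · rw [hsplit_r, hsplit_s, hsplit_v]
      have hif : (if m = n + 1 then Cc + D else Cc) = (if m - 1 = n then Cc + D else Cc) := by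
        rcases hm with h' | h'
        · rw [if_pos h', if_pos (by omega)]
        · rw [if_neg (by omega), if_neg (by omega)]
      calc C Cc * ((X - C (s i)) * ∏ k ∈ range (m-1), (X - C (r (if k < j then k else k + 1))))
            + C D * ((X - C (s i)) * ∏ k ∈ range n, (X - C (s (if k < i then k else k + 1))))
          = (X - C (s i)) * (C Cc * ∏ k ∈ range (m-1), (X - C (r (if k < j then k else k + 1)))
            + C D * ∏ k ∈ range n, (X - C (s (if k < i then k else k + 1)))) := by ring
        _ = (X - C (s i)) * (C (if m - 1 = n then Cc + D else Cc) * ∏ k ∈ range (m-1), (X - C (v' k))) := by rw [heq_v]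
        _ = C (if m = n + 1 then Cc + D else Cc) * ((X - C (s i)) * ∏ k ∈ range (m-1), (X - C (v' k))) := by
            rw [hif]; ring
    · -- r k ≤ t k
      intro k hk
      have := ins_lower (ρ := r) (x' := t') (N := m-1) (M := m-1) (j := j) (q := q) (w := s i)
        (by omega) hqM (le_refl _)
        (fun k hk => hrd k (by omega)) hw
        (fun k hk => by rw [← apply_ite r]; exact inv1 k hk) ht'desc hq1 hq2
      exact this k (by omega)
    · -- t (k+1) ≤ s k
      intro k hk
      have := ins_upper1 (σ := s) (x' := t') (N := n) (M := m-1) (j := i) (q := q) (w := s i)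
        (by omega) hqM (by omega)
        (fun k hk => hsd k (by omega)) rfl
        (fun k hk1 hk2 => by rw [← apply_ite s]; exact inv2 k hk2) hq1 hq2
      exact this k (by omega) (by omega)
    · -- v k ≤ r k
      intro k hk
      have := ins_upper0 (σ := r) (x' := v') (N := m-1) (j := j) (q := qv) (w := s i)
        (by omega) hqvM
        (fun k hk => hrd k (by omega)) hw
        (fun k hk => by rw [← apply_ite r]; exact inv3 k hk) hqv1 hqv2
      exact this k (by omega)
    · -- s k ≤ v k
      intro k hk
      have := ins_lower (ρ := s) (x' := v') (N := n) (M := m-1) (j := i) (q := qv) (w := s i)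
        (by omega) hqvM (by omega)
        (fun k hk => hsd k (by omega)) rfl
        (fun k hk => by rw [← apply_ite s]; exact inv4 k hk) hv'desc hqv1 hqv2
      exact this k (by omega)
lemma cmul_leadingCoeff (e : ℝ) (r : ℕ → ℝ) (m : ℕ) :
    (C e * ∏ j ∈ range m, (X - C (r j))).leadingCoeff = e := by
  rw [leadingCoeff_mul, leadingCoeff_C, (prod_monic r m).leadingCoeff, mul_one]

lemma fin_to_range {N : ℕ} (r : Fin N → ℝ) :
    (∏ i : Fin N, (X - C (r i))) = ∏ k ∈ range N, (X - C (if h : k < N then r ⟨k, h⟩ else 0)) := by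
  rw [← Fin.prod_univ_eq_prod_range (fun k => X - C (if h : k < N then r ⟨k,h⟩ else 0)) N]
  apply Finset.prod_congr rfl
  intro i _
  rw [dif_pos i.isLt]

lemma range_to_fin (u : ℕ → ℝ) (N : ℕ) :
    ∏ k ∈ range N, (X - C (u k)) = ∏ i : Fin N, (X - C (u i.val)) :=
  (Fin.prod_univ_eq_prod_range (fun k => X - C (u k)) N).symm

lemma scale_lead (e : ℝ) (f : Polynomial ℝ) :
    (C e * f).leadingCoeff = e * f.leadingCoeff := by
  rw [leadingCoeff_mul, leadingCoeff_C]
lemma altLeft_of_range {g f : Polynomial ℝ} (N : ℕ) (u w : ℕ → ℝ)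
    (hf : f = C f.leadingCoeff * ∏ k ∈ range N, (X - C (u k)))
    (hg : g = C g.leadingCoeff * ∏ k ∈ range N, (X - C (w k)))
    (h1 : ∀ k, k < N → w k ≤ u k) (h2 : ∀ k, k + 1 < N → u (k+1) ≤ w k) :
    AltLeft g f := by
  refine ⟨N, fun i => u i.val, fun i => w i.val, ?_, ?_,
    fun i => h1 i.val i.isLt, fun i hi => h2 i hi⟩
  · beta_reduce; rw [← range_to_fin]; exact hf
  · beta_reduce; rw [← range_to_fin]; exact hg

lemma interlaces_of_range {g f : Polynomial ℝ} (N : ℕ) (u w : ℕ → ℝ)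
    (hf : f = C f.leadingCoeff * ∏ k ∈ range (N+1), (X - C (u k)))
    (hg : g = C g.leadingCoeff * ∏ k ∈ range N, (X - C (w k)))
    (h1 : ∀ k, k < N → w k ≤ u k) (h2 : ∀ k, k + 1 < N + 1 → u (k+1) ≤ w k) :
    Interlaces g f := by
  refine ⟨N, fun i => u i.val, fun i => w i.val,
    by beta_reduce; rw [← range_to_fin]; exact hf,
    by beta_reduce; rw [← range_to_fin]; exact hg, ?_⟩
  intro i
  constructor
  · have := h2 i.val (by omega)
    simpa using this
  · exact h1 i.val i.isLt

lemma prec_zero (p : Polynomial ℝ) (N : ℕ) (u : ℕ → ℝ)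
    (heq : p = C p.leadingCoeff * ∏ k ∈ range N, (X - C (u k)))
    (hdesc : ∀ k, k + 1 < N → u (k+1) ≤ u k) : Prec p 0 :=
  Or.inl (altLeft_of_range N u u (by rw [leadingCoeff_zero, map_zero, zero_mul])
    heq (fun k _ => le_refl _) hdesc)

lemma standard_eventually_nonpos {h : Polynomial ℝ} (hstd : Standard h) (x0 : ℝ)
    (hev : ∀ x, x0 < x → eval x h ≤ 0) : h = 0 := by
  rcases hstd with h0 | hpos
  · exact h0
  by_contra hne
  rcases le_or_gt h.degree 0 with hd | hd
  · have hC : h = C (h.coeff 0) := eq_C_of_degree_le_zero hd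
    have hnd : h.natDegree = 0 := natDegree_eq_zero_iff_degree_le_zero.mpr hd
    have hl : h.leadingCoeff = h.coeff 0 := by rw [leadingCoeff, hnd]
    have := hev (x0+1) (by linarith)
    rw [hC, eval_C] at this
    rw [hl] at hpos
    linarith
  · obtain ⟨x, hx1, hx2⟩ := exists_pos_above h hd hpos x0
    linarith [hev x hx1]

lemma prec_extract {g f : Polynomial ℝ} (h : Prec g f) :
    ∃ (n m : ℕ) (R S : ℕ → ℝ), (m = n ∨ m = n + 1) ∧
      f = C f.leadingCoeff * ∏ k ∈ range m, (X - C (R k)) ∧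
      g = C g.leadingCoeff * ∏ k ∈ range n, (X - C (S k)) ∧
      (∀ k, k < n → S k ≤ R k) ∧ (∀ k, k + 1 < m → R (k+1) ≤ S k) := by
  rcases h with ⟨N, r, s, hf, hg, h1, h2⟩ | ⟨N, r, s, hf, hg, h12⟩
  · refine ⟨N, N, fun k => if h : k < N then r ⟨k,h⟩ else 0,
      fun k => if h : k < N then s ⟨k,h⟩ else 0, Or.inl rfl, ?_, ?_, ?_, ?_⟩
    · beta_reduce; conv_rhs => rw [← fin_to_range r]
      exact hf
    · beta_reduce; conv_rhs => rw [← fin_to_range s]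
      exact hg
    · intro k hk; beta_reduce; rw [dif_pos hk, dif_pos hk]; exact h1 ⟨k, hk⟩
    · intro k hk
      beta_reduce
      rw [dif_pos hk, dif_pos (by omega : k < N)]
      exact h2 k hk
  · refine ⟨N, N+1, fun k => if h : k < N+1 then r ⟨k,h⟩ else 0,
      fun k => if h : k < N then s ⟨k,h⟩ else 0, Or.inr rfl, ?_, ?_, ?_, ?_⟩
    · beta_reduce; conv_rhs => rw [← fin_to_range r]
      exact hf
    · beta_reduce; conv_rhs => rw [← fin_to_range s]
      exact hg
    · intro k hk
      beta_reduce
      rw [dif_pos hk, dif_pos (by omega : k < N+1)]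
      have := (h12 ⟨k, hk⟩).2
      simpa using this
    · intro k hk
      beta_reduce
      rw [dif_pos (by omega : k + 1 < N + 1), dif_pos (by omega : k < N)]
      have := (h12 ⟨k, by omega⟩).1
      simpa using this
end CorAbcd


open CorAbcd in
theorem cor_abcd_ii (f g : Polynomial ℝ) (a b c d : ℝ)
    (ha : 0 ≤ a) (hb : 0 ≤ b) (hc : 0 ≤ c) (hd : 0 ≤ d)
    (hfs : Standard f) (hgs : Standard g)
    (hf : RealRooted f) (hg : RealRooted g) (hgf : Prec g f)
    (hstd : Standard (Polynomial.C a * f - Polynomial.C b * g)) :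
    Prec (Polynomial.C c * f + Polynomial.C d * g) (Polynomial.C a * f - Polynomial.C b * g) ∧
    Prec f (Polynomial.C a * f - Polynomial.C b * g) ∧
    Prec g (Polynomial.C a * f - Polynomial.C b * g) := by
  classical
  obtain ⟨n, m, R, S, hm, hfeq, hgeq, hcfg1, hcfg2⟩ := prec_extract hgf
  have hRd : ∀ k, k + 1 < m → R (k+1) ≤ R k := fun k hk =>
    le_trans (hcfg2 k hk) (hcfg1 k (by omega))
  have hSd : ∀ k, k + 1 < n → S (k+1) ≤ S k := by
    intro k hk
    have h1 := hcfg1 (k+1) hk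
    have h2 := hcfg2 k (by omega)
    linarith
  have hcf : ∀ e : ℝ, C e * f = C ((C e * f).leadingCoeff) * ∏ k ∈ range m, (X - C (R k)) := by
    intro e
    rw [scale_lead]
    conv_lhs => rw [hfeq]
    rw [← mul_assoc, ← C_mul]
  have hcg : ∀ e : ℝ, C e * g = C ((C e * g).leadingCoeff) * ∏ k ∈ range n, (X - C (S k)) := by
    intro e
    rw [scale_lead]
    conv_lhs => rw [hgeq]
    rw [← mul_assoc, ← C_mul]
  have hz00 : Prec (0 : Polynomial ℝ) 0 :=
    prec_zero 0 0 (fun _ => 0) (by simp) (fun k hk => absurd hk (by omega))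
  rcases hfs with hf0 | hlf
  · subst hf0
    rcases hgs with hg0 | hlg
    · subst hg0
      have h1 : C a * (0:Polynomial ℝ) - C b * 0 = 0 := by ring
      have h2 : C c * (0:Polynomial ℝ) + C d * 0 = 0 := by ring
      rw [h1, h2]
      exact ⟨hz00, hz00, hz00⟩
    · have hbg : C a * (0:Polynomial ℝ) - C b * g = 0 := by
        rcases hstd with h0 | hpos
        · exact h0
        · exfalso
          have hlead : (C a * (0:Polynomial ℝ) - C b * g).leadingCoeff
              = -(b * g.leadingCoeff) := by
            rw [show C a * (0:Polynomial ℝ) - C b * g = -(C b * g) by ring,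
              leadingCoeff_neg, scale_lead]
          rw [hlead] at hpos
          nlinarith
      rw [hbg]
      have hp : C c * (0:Polynomial ℝ) + C d * g = C d * g := by ring
      rw [hp]
      exact ⟨prec_zero _ n S (hcg d) hSd, hz00, prec_zero g n S hgeq hSd⟩
  rcases hgs with hg0 | hlg
  · subst hg0
    have hH : C a * f - C b * 0 = C a * f := by ring
    have hP : C c * f + C d * 0 = C c * f := by ring
    rw [hH, hP]
    exact ⟨Or.inl (altLeft_of_range m R R (hcf a) (hcf c) (fun k _ => le_refl _) hRd),
      Or.inl (altLeft_of_range m R R (hcf a) hfeq (fun k _ => le_refl _) hRd),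
      Or.inl (altLeft_of_range m R R (hcf a)
        (by rw [leadingCoeff_zero, map_zero, zero_mul]) (fun k _ => le_refl _) hRd)⟩
  · -- main case
    set A := a * f.leadingCoeff with hAdef
    set B := b * g.leadingCoeff with hBdef
    have hA0 : 0 ≤ A := mul_nonneg ha (le_of_lt hlf)
    have hB0 : 0 ≤ B := mul_nonneg hb (le_of_lt hlg)
    have hH : C a * f - C b * g
        = C A * ∏ k ∈ range m, (X - C (R k)) - C B * ∏ k ∈ range n, (X - C (S k)) := by
      conv_lhs => rw [hfeq, hgeq]
      rw [← mul_assoc, ← C_mul, ← mul_assoc, ← C_mul]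
    set L := if m = n then A - B else A with hLdef
    rcases le_or_gt L 0 with hL0 | hLpos
    · -- degenerate : h = 0
      have hzero : C a * f - C b * g = 0 := by
        apply standard_eventually_nonpos hstd (max (R 0) (S 0))
        intro x hx
        have hxR : ∀ k, k < m → R k < x := by
          intro k hk
          have h1 := desc_le hRd 0 k (by omega) hk
          have h2 := le_max_left (R 0) (S 0)
          linarith
        have hxS : ∀ k, k < n → S k < x := by
          intro k hk
          have h1 := desc_le hSd 0 k (by omega) hk
          have h2 := le_max_right (R 0) (S 0)
          linarith
        rw [hH, eval_sub, eval_prods, eval_prods]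
        have hprodR : (0:ℝ) ≤ ∏ j ∈ range m, (x - R j) :=
          Finset.prod_nonneg fun j hj => by
            have := hxR j (Finset.mem_range.mp hj); linarith
        have hprodS : (0:ℝ) ≤ ∏ j ∈ range n, (x - S j) :=
          Finset.prod_nonneg fun j hj => by
            have := hxS j (Finset.mem_range.mp hj); linarith
        rcases hm with hmeq | hmeq
        · have hAB : A ≤ B := by
            rw [hLdef, if_pos hmeq] at hL0; linarith
          have hmono : ∏ j ∈ range m, (x - R j) ≤ ∏ j ∈ range n, (x - S j) := by
            subst hmeq
            apply Finset.prod_le_prod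
            · intro j hj
              have := hxR j (Finset.mem_range.mp hj); linarith
            · intro j hj
              have := hcfg1 j (Finset.mem_range.mp hj); linarith
          have h1 : A * ∏ j ∈ range m, (x - R j) ≤ A * ∏ j ∈ range n, (x - S j) :=
            mul_le_mul_of_nonneg_left hmono hA0
          have h2 : A * ∏ j ∈ range n, (x - S j) ≤ B * ∏ j ∈ range n, (x - S j) :=
            mul_le_mul_of_nonneg_right hAB hprodS
          linarith
        · have hAz : A = 0 := by
            rw [hLdef, if_neg (by omega)] at hL0; linarith
          rw [hAz, zero_mul, zero_sub]
          have := mul_nonneg hB0 hprodS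
          linarith
      rw [hzero]
      refine ⟨?_, prec_zero f m R hfeq hRd, prec_zero g n S hgeq hSd⟩
      rcases eq_or_lt_of_le hd with hd0 | hd0
      · have hP : C c * f + C d * g = C c * f := by rw [← hd0, map_zero]; ring
        rw [hP]; exact prec_zero _ m R (hcf c) hRd
      rcases eq_or_lt_of_le hc with hc0 | hc0
      · have hP : C c * f + C d * g = C d * g := by rw [← hc0, map_zero]; ring
        rw [hP]; exact prec_zero _ n S (hcg d) hSd
      · obtain ⟨t, v, _, heq_v, _, _, inv3, inv4⟩ := master n m hm R S f.leadingCoeff 0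
          (c * f.leadingCoeff) (d * g.leadingCoeff) f.leadingCoeff (le_refl 0)
          (mul_pos hc0 hlf) (mul_pos hd0 hlg) hcfg1 hcfg2 (by split <;> ring) hlf
        have hP : C c * f + C d * g
            = C (if m = n then c * f.leadingCoeff + d * g.leadingCoeff
                else c * f.leadingCoeff) * ∏ k ∈ range m, (X - C (v k)) := by
          conv_lhs => rw [hfeq, hgeq]
          rw [← mul_assoc, ← C_mul, ← mul_assoc, ← C_mul]
          exact heq_v
        have hvd : ∀ k, k + 1 < m → v (k+1) ≤ v k := by
          intro k hk
          have h1 := inv3 (k+1) hk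
          have h2 := hcfg2 k hk
          have h3 := inv4 k (by omega)
          linarith
        apply prec_zero _ m v ?_ hvd
        rw [hP, cmul_leadingCoeff]
    · -- h has positive leading coefficient
      have build : ∀ t : ℕ → ℝ,
          (C A * ∏ k ∈ range m, (X - C (R k)) - C B * ∏ k ∈ range n, (X - C (S k))
            = C L * ∏ k ∈ range m, (X - C (t k))) →
          (∀ k, k < m → R k ≤ t k) → (∀ k, k + 1 < m → t (k+1) ≤ S k) →
          (C a * f - C b * g
            = C ((C a * f - C b * g).leadingCoeff) * ∏ k ∈ range m, (X - C (t k)))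
            ∧ Prec f (C a * f - C b * g) ∧ Prec g (C a * f - C b * g) := by
        intro t heqt inv1 inv2
        have hHt : C a * f - C b * g = C L * ∏ k ∈ range m, (X - C (t k)) := by
          rw [hH]; exact heqt
        have hfact : C a * f - C b * g
            = C ((C a * f - C b * g).leadingCoeff) * ∏ k ∈ range m, (X - C (t k)) := by
          rw [hHt, cmul_leadingCoeff]
        have hts : ∀ k, k + 1 < m → t (k+1) ≤ R k := fun k hk =>
          le_trans (inv2 k hk) (hcfg1 k (by omega))
        refine ⟨hfact, Or.inl (altLeft_of_range m t R hfact hfeq inv1 hts), ?_⟩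
        rcases hm with hmeq | hmeq
        · subst hmeq
          exact Or.inl (altLeft_of_range m t S hfact hgeq
            (fun k hk => le_trans (hcfg1 k hk) (inv1 k (by omega))) inv2)
        · subst hmeq
          exact Or.inr (interlaces_of_range n t S hfact hgeq
            (fun k hk => le_trans (hcfg1 k hk) (inv1 k (by omega))) inv2)
      rcases eq_or_lt_of_le hd with hd0 | hd0
      · obtain ⟨t, v, heq_t, _, inv1, inv2, _, _⟩ := master n m hm R S A B 1 1 L
          hB0 one_pos one_pos hcfg1 hcfg2 hLdef hLpos
        obtain ⟨hfact, c2, c3⟩ := build t heq_t inv1 inv2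
        refine ⟨?_, c2, c3⟩
        have hP : C c * f + C d * g = C c * f := by rw [← hd0, map_zero]; ring
        rw [hP]
        exact Or.inl (altLeft_of_range m t R hfact (hcf c) inv1
          (fun k hk => le_trans (inv2 k hk) (hcfg1 k (by omega))))
      rcases eq_or_lt_of_le hc with hc0 | hc0
      · obtain ⟨t, v, heq_t, _, inv1, inv2, _, _⟩ := master n m hm R S A B 1 1 L
          hB0 one_pos one_pos hcfg1 hcfg2 hLdef hLpos
        obtain ⟨hfact, c2, c3⟩ := build t heq_t inv1 inv2
        refine ⟨?_, c2, c3⟩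
        have hP : C c * f + C d * g = C d * g := by rw [← hc0, map_zero]; ring
        rw [hP]
        rcases hm with hmeq | hmeq
        · subst hmeq
          exact Or.inl (altLeft_of_range m t S hfact (hcg d)
            (fun k hk => le_trans (hcfg1 k hk) (inv1 k (by omega))) inv2)
        · subst hmeq
          exact Or.inr (interlaces_of_range n t S hfact (hcg d)
            (fun k hk => le_trans (hcfg1 k hk) (inv1 k (by omega))) inv2)
      · obtain ⟨t, v, heq_t, heq_v, inv1, inv2, inv3, inv4⟩ := master n m hm R S A B
          (c * f.leadingCoeff) (d * g.leadingCoeff) L hB0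
          (mul_pos hc0 hlf) (mul_pos hd0 hlg) hcfg1 hcfg2 hLdef hLpos
        obtain ⟨hfact, c2, c3⟩ := build t heq_t inv1 inv2
        refine ⟨?_, c2, c3⟩
        have hP : C c * f + C d * g
            = C (if m = n then c * f.leadingCoeff + d * g.leadingCoeff
                else c * f.leadingCoeff) * ∏ k ∈ range m, (X - C (v k)) := by
          conv_lhs => rw [hfeq, hgeq]
          rw [← mul_assoc, ← C_mul, ← mul_assoc, ← C_mul]
          exact heq_v
        have hfact_p : C c * f + C d * g
            = C ((C c * f + C d * g).leadingCoeff) * ∏ k ∈ range m, (X - C (v k)) := by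
          rw [hP, cmul_leadingCoeff]
        exact Or.inl (altLeft_of_range m t v hfact hfact_p
          (fun k hk => le_trans (inv3 k hk) (inv1 k hk))
          (fun k hk => le_trans (inv2 k hk) (inv4 k (by omega))))
end

section
/- Let f, g ∈ PF (real polynomials with nonnegative coefficients and only real zeros) with g interlacing f, and let a, b, c, d be real numbers with ad ≥ bc. Then (ax+b) f(x) + x(cx+d) g(x) has only real zeros. -/
open Polynomial Finset

section ArgLemmas

private lemma arg_two_pi {x y : ℂ} (hx : x ≠ 0) (hy : y ≠ 0) :
    ∃ k : ℤ, (x*y).arg - (x.arg + y.arg) = 2 * Real.pi * k := by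
  apply Real.Angle.angle_eq_iff_two_pi_dvd_sub.mp
  rw [Real.Angle.coe_add]
  exact Complex.arg_mul_coe_angle hx hy

private lemma k_zero {t : ℝ} (hk : ∃ k : ℤ, t = 2 * Real.pi * k)
    (h1 : -(2*Real.pi) < t) (h2 : t ≤ Real.pi) : t = 0 := by
  obtain ⟨k, hk⟩ := hk
  have hπ := Real.pi_pos
  have hk1 : -1 < (k:ℝ) := by nlinarith
  have hk2 : (k:ℝ) < 1 := by nlinarith
  have hk1' : -1 < k := by exact_mod_cast hk1
  have hk2' : k < 1 := by exact_mod_cast hk2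
  have : k = 0 := by omega
  rw [hk, this]; simp

private lemma arg_mul_eq_add_of_sum_lt {x y : ℂ} (hx : x ≠ 0) (hy : y ≠ 0)
    (h1 : 0 ≤ x.arg) (h2 : 0 ≤ y.arg) (h3 : x.arg + y.arg < Real.pi) :
    (x*y).arg = x.arg + y.arg := by
  obtain ⟨k, hk⟩ := arg_two_pi hx hy
  have e1 := Complex.neg_pi_lt_arg (x*y)
  have e2 := Complex.arg_le_pi (x*y)
  have := k_zero ⟨k, hk⟩ (by linarith) (by linarith)
  linarith

private lemma arg_mul_eq_add_of_prod_nonneg {x y : ℂ} (hx : x ≠ 0) (hy : y ≠ 0)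
    (h1 : 0 ≤ x.arg) (h2 : 0 ≤ y.arg) (hy2 : y.arg < Real.pi) (h3 : 0 ≤ (x*y).arg) :
    (x*y).arg = x.arg + y.arg := by
  obtain ⟨k, hk⟩ := arg_two_pi hx hy
  have e2 := Complex.arg_le_pi (x*y)
  have e3 := Complex.arg_le_pi x
  have := k_zero ⟨k, hk⟩ (by linarith) (by linarith)
  linarith

private lemma arg_pos_of_im {w : ℂ} (h : 0 < w.im) : 0 < w.arg := by
  have h0 : 0 ≤ w.arg := Complex.arg_nonneg_iff.mpr h.le
  rcases h0.lt_or_eq with h' | h'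
  · exact h'
  · exfalso
    have := (Complex.arg_eq_zero_iff.mp h'.symm).2
    linarith

private lemma arg_lt_pi_of_im {w : ℂ} (h : 0 < w.im) : w.arg < Real.pi := by
  rcases (Complex.arg_le_pi w).lt_or_eq with h' | h'
  · exact h'
  · exfalso
    have := (Complex.arg_eq_pi_iff.mp h').2
    linarith

private lemma im_pos_of_arg {w : ℂ} (hw : w ≠ 0) (h1 : 0 < w.arg) (h2 : w.arg < Real.pi) :
    0 < w.im := by
  have := Complex.norm_mul_sin_arg w
  rw [← this]
  exact mul_pos (norm_pos_iff.mpr hw) (Real.sin_pos_of_pos_of_lt_pi h1 h2)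

private lemma sub_real_ne {z : ℂ} (hz : 0 < z.im) (t : ℝ) : z - (t:ℂ) ≠ 0 := by
  intro h
  have : (z - (t:ℂ)).im = 0 := by rw [h]; simp
  simp [Complex.sub_im] at this
  linarith

private lemma quot_arg {z : ℂ} (hz : 0 < z.im) (sv rv : ℝ) (hsr : rv ≤ sv) :
    ((z - sv)/(z - rv)).arg = (z - sv).arg - (z - rv).arg ∧
    0 ≤ ((z - sv)/(z - rv)).arg ∧ (rv < sv → 0 < ((z - sv)/(z - rv)).arg) := by
  have hsne := sub_real_ne hz sv
  have hrne := sub_real_ne hz rv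
  have hqne : (z - sv)/(z - rv) ≠ 0 := div_ne_zero hsne hrne
  have hnsq : 0 < Complex.normSq (z - rv) := Complex.normSq_pos.mpr hrne
  have him : ((z - (sv:ℂ))/(z - rv)).im = z.im * (sv - rv) / Complex.normSq (z - rv) := by
    rw [Complex.div_im]
    simp only [Complex.sub_im, Complex.sub_re, Complex.ofReal_im, Complex.ofReal_re]
    ring
  have hnn : 0 ≤ ((z - sv)/(z - rv)).arg := by
    apply Complex.arg_nonneg_iff.mpr
    rw [him]
    apply div_nonneg (mul_nonneg hz.le (by linarith)) hnsq.le
  have hpos : rv < sv → 0 < ((z - sv)/(z - rv)).arg := by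
    intro h
    apply arg_pos_of_im
    rw [him]
    exact div_pos (mul_pos hz (by linarith)) hnsq
  have hlt : ((z - sv)/(z - rv)).arg < Real.pi := by
    rcases (Complex.arg_le_pi _).lt_or_eq with h' | h'
    · exact h'
    · exfalso
      have h2 := Complex.arg_eq_pi_iff.mp h'
      rw [him] at h2
      have h9 : z.im * (sv - rv) / Complex.normSq (z - (rv:ℂ)) = 0 := h2.2
      have h10 : z.im * (sv - rv) = 0 := by
        rcases div_eq_zero_iff.mp h9 with h | h
        · exact h
        · exact absurd h hnsq.ne'
      have hsv : sv = rv := by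
        rcases mul_eq_zero.mp h10 with h | h
        · linarith
        · linarith
      rw [hsv, div_self hrne] at h2
      simp at h2
      linarith
  refine ⟨?_, hnn, hpos⟩
  have hxy : ((z - sv)/(z - rv)) * (z - rv) = z - sv := div_mul_cancel₀ _ hrne
  have harg : 0 < (z - (rv:ℂ)).arg := arg_pos_of_im (by simp [Complex.sub_im, hz])
  have harg2 : (z - (rv:ℂ)).arg < Real.pi := arg_lt_pi_of_im (by simp [Complex.sub_im, hz])
  have hargs : 0 ≤ (z - (sv:ℂ)).arg := Complex.arg_nonneg_iff.mpr (by simp [Complex.sub_im, hz.le])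
  have := arg_mul_eq_add_of_prod_nonneg hqne hrne hnn harg.le harg2 (by rw [hxy]; exact hargs)
  rw [hxy] at this
  linarith

private lemma key_lemma {z : ℂ} (hz : 0 < z.im) (rr ss : ℕ → ℝ) (hr0 : rr 0 ≤ 0) :
    ∀ m : ℕ, (∀ i, i < m → rr (i+1) ≤ ss i ∧ ss i ≤ rr i) →
      0 ≤ ((z * ∏ i ∈ Finset.range m, (z - (ss i : ℂ))) /
            (∏ i ∈ Finset.range (m+1), (z - (rr i : ℂ)))).arg ∧
      ((z * ∏ i ∈ Finset.range m, (z - (ss i : ℂ))) /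
            (∏ i ∈ Finset.range (m+1), (z - (rr i : ℂ)))).arg + (z - (rr m : ℂ)).arg ≤ z.arg ∧
      ((rr 0 < 0 ∨ ∃ j, j < m ∧ rr (j+1) < ss j) →
        0 < ((z * ∏ i ∈ Finset.range m, (z - (ss i : ℂ))) /
            (∏ i ∈ Finset.range (m+1), (z - (rr i : ℂ)))).arg) := by
  have hz0 : z ≠ 0 := by intro h; rw [h] at hz; simp at hz
  intro m
  induction m with
  | zero =>
    intro _
    have hq := quot_arg hz 0 (rr 0) hr0
    have hrw : (z * ∏ i ∈ Finset.range 0, (z - (ss i : ℂ))) /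
        (∏ i ∈ Finset.range 1, (z - (rr i : ℂ))) = (z - ((0:ℝ):ℂ))/(z - (rr 0 : ℂ)) := by
      simp
    rw [hrw]
    have hz' : z - ((0:ℝ):ℂ) = z := by simp
    refine ⟨hq.2.1, ?_, ?_⟩
    · rw [hq.1, hz']; linarith
    · rintro (h | ⟨j, hj, _⟩)
      · exact hq.2.2 h
      · omega
  | succ m ih =>
    intro hch
    have ihm := ih (fun i hi => hch i (by omega))
    set um := (z * ∏ i ∈ Finset.range m, (z - (ss i : ℂ))) /
        (∏ i ∈ Finset.range (m+1), (z - (rr i : ℂ))) with hum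
    set t := (z - (ss m : ℂ))/(z - (rr (m+1) : ℂ)) with ht
    have hchm := hch m (by omega)
    have humne : um ≠ 0 := by
      apply div_ne_zero
      · exact mul_ne_zero hz0 (Finset.prod_ne_zero_iff.mpr fun i _ => sub_real_ne hz _)
      · exact Finset.prod_ne_zero_iff.mpr fun i _ => sub_real_ne hz _
    have htne : t ≠ 0 := div_ne_zero (sub_real_ne hz _) (sub_real_ne hz _)
    have hq1 := quot_arg hz (ss m) (rr (m+1)) hchm.1
    have hq2 := quot_arg hz (rr m) (ss m) hchm.2
    have hmono : (z - ((ss m : ℝ):ℂ)).arg ≤ (z - ((rr m : ℝ):ℂ)).arg := by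
      have := hq2.1; have := hq2.2.1; linarith
    have hargz : z.arg < Real.pi := arg_lt_pi_of_im hz
    have hargr : 0 < (z - ((rr (m+1) : ℝ):ℂ)).arg := arg_pos_of_im (by simp [Complex.sub_im, hz])
    have hsum : um.arg + t.arg ≤ z.arg - (z - ((rr (m+1) : ℝ):ℂ)).arg := by
      have h1 := ihm.2.1
      have h2 := hq1.1
      rw [← ht] at h2
      linarith
    have hsumlt : um.arg + t.arg < Real.pi := by linarith
    have hrw : (z * ∏ i ∈ Finset.range (m+1), (z - (ss i : ℂ))) /
        (∏ i ∈ Finset.range (m+2), (z - (rr i : ℂ))) = um * t := by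
      rw [Finset.prod_range_succ (fun i => z - (ss i : ℂ)) m,
        Finset.prod_range_succ (fun i => z - (rr i : ℂ)) (m+1), hum, ht, div_mul_div_comm]
      ring
    have harg : (um * t).arg = um.arg + t.arg :=
      arg_mul_eq_add_of_sum_lt humne htne ihm.1 (by rw [ht]; exact hq1.2.1) hsumlt
    rw [hrw, harg]
    refine ⟨by have := hq1.2.1; rw [← ht] at this; linarith [ihm.1], by linarith, ?_⟩
    rintro (h | ⟨j, hj, hstr⟩)
    · have := ihm.2.2 (Or.inl h)
      have h2 := hq1.2.1; rw [← ht] at h2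
      linarith
    · rcases Nat.lt_or_ge j m with hjm | hjm
      · have := ihm.2.2 (Or.inr ⟨j, hjm, hstr⟩)
        have h2 := hq1.2.1; rw [← ht] at h2
        linarith
      · have hjeq : j = m := by omega
        subst hjeq
        have := hq1.2.2 hstr
        rw [← ht] at this
        linarith [ihm.1]

end ArgLemmas

section PolyLemmas

private lemma realRooted_zero' : RealRooted 0 := by simp [RealRooted]

private lemma realRooted_mul' {p q : Polynomial ℝ} (hp : RealRooted p) (hq : RealRooted q) :
    RealRooted (p * q) := by
  by_cases h : p * q = 0
  · rw [h]; exact realRooted_zero'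
  · have hp0 : p ≠ 0 := left_ne_zero_of_mul h
    have hq0 : q ≠ 0 := right_ne_zero_of_mul h
    unfold RealRooted at *
    rw [Polynomial.roots_mul h, Polynomial.natDegree_mul hp0 hq0, Multiset.card_add, hp, hq]

private lemma realRooted_deg_le_one {p : Polynomial ℝ} (h : p.natDegree ≤ 1) : RealRooted p :=
  (Polynomial.splits_iff_card_roots).mp (Polynomial.Splits.of_natDegree_le_one h)

private lemma realRooted_prod' {ι : Type} (t : Finset ι) (v : ι → ℝ) :
    RealRooted (∏ i ∈ t, (Polynomial.X - Polynomial.C (v i))) := by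
  classical
  induction t using Finset.induction with
  | empty => simpa using realRooted_deg_le_one (p := 1) (by simp)
  | insert _ _ h ih =>
    rw [Finset.prod_insert h]
    exact realRooted_mul' (realRooted_deg_le_one (Polynomial.natDegree_X_sub_C_le _)) ih

private lemma realRooted_of_forall_im : ∀ (N : ℕ) (F : Polynomial ℝ), F.natDegree ≤ N →
    (∀ z : ℂ, Polynomial.aeval z F = 0 → z.im = 0) → RealRooted F := by
  intro N
  induction N with
  | zero =>
    intro F hdeg _
    have := Polynomial.card_roots' F
    unfold RealRooted
    omega
  | succ N ih =>
    intro F hdeg h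
    by_cases h0 : F.natDegree = 0
    · have := Polynomial.card_roots' F
      unfold RealRooted
      omega
    have hF : F ≠ 0 := fun hh => h0 (by rw [hh]; simp)
    have hmapne : F.map (algebraMap ℝ ℂ) ≠ 0 :=
      (Polynomial.map_ne_zero_iff (algebraMap ℝ ℂ).injective).mpr hF
    have hdegeq : (F.map (algebraMap ℝ ℂ)).natDegree = F.natDegree :=
      Polynomial.natDegree_map (algebraMap ℝ ℂ)
    have hdegpos : 0 < (F.map (algebraMap ℝ ℂ)).degree := by
      apply Polynomial.natDegree_pos_iff_degree_pos.mp
      omega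
    obtain ⟨z, hzroot⟩ := Complex.exists_root hdegpos
    have hz0 : Polynomial.aeval z F = 0 := by
      rwa [Polynomial.aeval_def, ← Polynomial.eval_map]
    have hzim := h z hz0
    have hx : ((z.re : ℝ) : ℂ) = z := by
      apply Complex.ext <;> simp [hzim]
    have h2 : (algebraMap ℝ ℂ) (F.eval z.re) = 0 := by
      rw [← Polynomial.eval₂_at_apply, ← Polynomial.aeval_def]
      have : (algebraMap ℝ ℂ) z.re = z := by rw [Complex.coe_algebraMap]; exact hx
      rw [this]
      exact hz0
    have hroot : F.IsRoot z.re := by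
      have : F.eval z.re = 0 := by
        have := h2
        rw [Complex.coe_algebraMap] at this
        exact_mod_cast this
      exact this
    obtain ⟨G, hG⟩ := Polynomial.dvd_iff_isRoot.mpr hroot
    have hXC : (Polynomial.X - Polynomial.C z.re) ≠ 0 := Polynomial.X_sub_C_ne_zero z.re
    have hG0 : G ≠ 0 := by rintro rfl; rw [mul_zero] at hG; exact hF hG
    have hdegF : F.natDegree = 1 + G.natDegree := by
      rw [hG, Polynomial.natDegree_mul hXC hG0, Polynomial.natDegree_X_sub_C]
    have hGdeg : G.natDegree ≤ N := by omega
    have hGh : ∀ w : ℂ, Polynomial.aeval w G = 0 → w.im = 0 := by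
      intro w hw
      apply h w
      rw [hG, map_mul, hw, mul_zero]
    have ihG := ih G hGdeg hGh
    unfold RealRooted at *
    rw [hG, Polynomial.roots_mul (hG ▸ hF), Polynomial.roots_X_sub_C, Multiset.card_add,
      Polynomial.natDegree_mul hXC hG0, Polynomial.natDegree_X_sub_C]
    simp [ihG]

private lemma eval_pos_of_nonneg_coeff (f : Polynomial ℝ) (hc : ∀ i, 0 ≤ f.coeff i)
    (hlc : 0 < f.leadingCoeff) {t : ℝ} (ht : 0 < t) : 0 < f.eval t := by
  rw [Polynomial.eval_eq_sum_range]
  apply Finset.sum_pos' (fun i _ => mul_nonneg (hc i) (pow_nonneg ht.le i))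
  exact ⟨f.natDegree, Finset.self_mem_range_succ _, mul_pos hlc (pow_pos ht _)⟩

end PolyLemmas

theorem wang_yeh_cor (f g : Polynomial ℝ) (a b c d : ℝ)
    (hf : PFpoly f) (hg : PFpoly g) (hgf : Interlaces g f)
    (h : b * c ≤ a * d) :
    RealRooted ((Polynomial.C a * Polynomial.X + Polynomial.C b) * f +
      Polynomial.X * (Polynomial.C c * Polynomial.X + Polynomial.C d) * g) := by
  classical
  set F := (Polynomial.C a * Polynomial.X + Polynomial.C b) * f +
      Polynomial.X * (Polynomial.C c * Polynomial.X + Polynomial.C d) * g with hFdef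
  obtain ⟨n, r, s, hfact, hgact, hrs⟩ := hgf
  by_cases hA : f.leadingCoeff = 0
  · have hf0 : f = 0 := Polynomial.leadingCoeff_eq_zero.mp hA
    have hFeq : F = Polynomial.X * ((Polynomial.C c * Polynomial.X + Polynomial.C d) * g) := by
      rw [hFdef, hf0]; ring
    rw [hFeq]
    exact realRooted_mul' (realRooted_deg_le_one Polynomial.natDegree_X_le)
      (realRooted_mul' (realRooted_deg_le_one Polynomial.natDegree_linear_le) hg.2)
  by_cases hB : g.leadingCoeff = 0
  · have hg0 : g = 0 := Polynomial.leadingCoeff_eq_zero.mp hB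
    have hFeq : F = (Polynomial.C a * Polynomial.X + Polynomial.C b) * f := by
      rw [hFdef, hg0]; ring
    rw [hFeq]
    exact realRooted_mul' (realRooted_deg_le_one Polynomial.natDegree_linear_le) hf.2
  have hA' : 0 < f.leadingCoeff := lt_of_le_of_ne (hf.1 f.natDegree) (Ne.symm hA)
  have hB' : 0 < g.leadingCoeff := lt_of_le_of_ne (hg.1 g.natDegree) (Ne.symm hB)
  set A := f.leadingCoeff with hAdef
  set B := g.leadingCoeff with hBdef
  -- r 0 ≤ 0
  have hr0 : r 0 ≤ 0 := by
    by_contra hpos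
    push_neg at hpos
    have heval : f.eval (r 0) = A * ∏ i, (r 0 - r i) := by
      rw [hfact]; simp [Polynomial.eval_prod]
    have hzero : (∏ i : Fin (n+1), (r 0 - r i)) = 0 :=
      Finset.prod_eq_zero (Finset.mem_univ (0 : Fin (n+1))) (sub_self _)
    rw [hzero, mul_zero] at heval
    have := eval_pos_of_nonneg_coeff f hf.1 hA' hpos
    linarith
  by_cases hD : r 0 = 0 ∧ ∀ i : Fin n, r i.succ = s i
  · -- degenerate : f = C A * X * ∏ (X - C (s i))
    obtain ⟨hD1, hD2⟩ := hD
    have hfact2 : f = Polynomial.C A *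
        (Polynomial.X * ∏ i : Fin n, (Polynomial.X - Polynomial.C (s i))) := by
      rw [hfact, Fin.prod_univ_succ, hD1]
      simp [hD2]
    have hFeq : F = Polynomial.X * ((∏ i : Fin n, (Polynomial.X - Polynomial.C (s i))) *
        (Polynomial.C (a*A + c*B) * Polynomial.X + Polynomial.C (b*A + d*B))) := by
      rw [hFdef, hfact2, hgact]
      simp only [Polynomial.C_add, Polynomial.C_mul]
      ring
    rw [hFeq]
    exact realRooted_mul' (realRooted_deg_le_one Polynomial.natDegree_X_le)
      (realRooted_mul' (realRooted_prod' _ _)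
        (realRooted_deg_le_one Polynomial.natDegree_linear_le))
  · by_cases hF0 : F = 0
    · rw [hF0]; exact realRooted_zero'
    apply realRooted_of_forall_im F.natDegree F le_rfl
    intro z0 hz0root
    by_contra him0
    -- get a root in upper half plane
    have hcase : ∃ z : ℂ, 0 < z.im ∧ Polynomial.aeval z F = 0 := by
      rcases lt_or_gt_of_ne him0 with hlt | hgt
      · refine ⟨(starRingEnd ℂ) z0, by simpa using hlt, ?_⟩
        have hconj := Polynomial.aeval_algHom_apply (Complex.conjAe.toAlgHom) z0 F
        simp only [AlgEquiv.toAlgHom_eq_coe, AlgEquiv.coe_algHom, Complex.conjAe_coe] at hconj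
        rw [hconj, hz0root, map_zero]
      · exact ⟨z0, hgt, hz0root⟩
    obtain ⟨z, hzim, hz⟩ := hcase
    have hz0 : z ≠ 0 := by intro hh; rw [hh] at hzim; simp at hzim
    set Rp : ℂ := ∏ i : Fin (n+1), (z - (r i : ℂ)) with hRp
    set Sp : ℂ := ∏ i : Fin n, (z - (s i : ℂ)) with hSp
    have hRpne : Rp ≠ 0 := Finset.prod_ne_zero_iff.mpr fun i _ => sub_real_ne hzim _
    have hSpne : Sp ≠ 0 := Finset.prod_ne_zero_iff.mpr fun i _ => sub_real_ne hzim _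
    have hfz : Polynomial.aeval z f = (A:ℂ) * Rp := by
      rw [hfact]
      simp [map_prod, Complex.coe_algebraMap, hRp]
    have hgz : Polynomial.aeval z g = (B:ℂ) * Sp := by
      rw [hgact]
      simp [map_prod, Complex.coe_algebraMap, hSp]
    have hE : ((a:ℂ)*z + b) * ((A:ℂ) * Rp) + z * ((c:ℂ)*z + d) * ((B:ℂ) * Sp) = 0 := by
      have hz' := hz
      rw [hFdef] at hz'
      simp only [map_add, map_mul, Polynomial.aeval_X, Polynomial.aeval_C,
        Complex.coe_algebraMap, hfz, hgz] at hz'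
      exact hz'
    -- set up ℕ-indexed roots
    set rr : ℕ → ℝ := fun i => r ⟨min i n, Nat.lt_succ_of_le (Nat.min_le_right i n)⟩ with hrr
    set ss : ℕ → ℝ := fun i => if hh : i < n then s ⟨i, hh⟩ else 0 with hss
    have hrreq : ∀ (i : ℕ) (hi : i < n + 1), rr i = r ⟨i, hi⟩ := fun i hi =>
      congrArg r (Fin.ext (by simp only []; omega))
    have hchain : ∀ i, i < n → rr (i+1) ≤ ss i ∧ ss i ≤ rr i := by
      intro i hi
      have h1 := hrs ⟨i, hi⟩
      have e1 : rr (i+1) = r (Fin.succ ⟨i, hi⟩) := hrreq (i+1) (by omega)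
      have e2 : rr i = r (Fin.castSucc ⟨i, hi⟩) := hrreq i (by omega)
      have e3 : ss i = s ⟨i, hi⟩ := by simp [hss, hi]
      rw [e1, e2, e3]
      exact h1
    have hrr0 : rr 0 ≤ 0 := by
      rw [hrreq 0 (Nat.succ_pos n), Fin.mk_zero]
      exact hr0
    -- identify products
    have hRprw : (∏ i ∈ Finset.range (n+1), (z - (rr i : ℂ))) = Rp := by
      rw [hRp, ← Fin.prod_univ_eq_prod_range (fun i => z - (rr i : ℂ)) (n+1)]
      apply Finset.prod_congr rfl
      intro i _
      rw [hrreq i.1 i.2]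
    have hSprw : (∏ i ∈ Finset.range n, (z - (ss i : ℂ))) = Sp := by
      rw [hSp, ← Fin.prod_univ_eq_prod_range (fun i => z - (ss i : ℂ)) n]
      apply Finset.prod_congr rfl
      intro i _
      have : ss i.1 = s i := by simp [hss, i.2]
      rw [this]
    have hKEY := key_lemma hzim rr ss hrr0 n hchain
    rw [hRprw, hSprw] at hKEY
    -- nondegeneracy gives strictness
    have hND : rr 0 < 0 ∨ ∃ j, j < n ∧ rr (j+1) < ss j := by
      rcases not_and_or.mp hD with h1 | h2
      · left
        rw [hrreq 0 (Nat.succ_pos n), Fin.mk_zero]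
        cases lt_or_eq_of_le hr0 with
        | inl hh => exact hh
        | inr hh => exact absurd hh h1
      · right
        push_neg at h2
        obtain ⟨i, hi⟩ := h2
        refine ⟨i.1, i.2, ?_⟩
        have e1 : rr (i.1+1) = r (Fin.succ i) := by
          rw [hrreq (i.1+1) (by omega)]
          exact congrArg r (Fin.ext rfl)
        have e3 : ss i.1 = s i := by simp [hss, i.2]
        rw [e1, e3]
        exact lt_of_le_of_ne (hrs i).1 hi
    set u := (z * Sp) / Rp with hu
    have hune : u ≠ 0 := div_ne_zero (mul_ne_zero hz0 hSpne) hRpne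
    have huarg : 0 < u.arg := hKEY.2.2 hND
    have huarglt : u.arg < Real.pi := by
      have h1 := hKEY.2.1
      have h2 : 0 < (z - ((rr n : ℝ):ℂ)).arg := arg_pos_of_im (by simp [Complex.sub_im, hzim])
      have h3 : z.arg < Real.pi := arg_lt_pi_of_im hzim
      linarith
    have huim : 0 < u.im := im_pos_of_arg hune huarg huarglt
    -- w = z * Sp * conj Rp has positive imaginary part
    have hw : z * Sp * (starRingEnd ℂ) Rp = u * ((Complex.normSq Rp : ℝ) : ℂ) := by
      rw [hu, ← Complex.mul_conj Rp]
      field_simp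
    have hwim : 0 < (z * Sp * (starRingEnd ℂ) Rp).im := by
      rw [hw]
      have : (u * ((Complex.normSq Rp : ℝ) : ℂ)).im = u.im * Complex.normSq Rp := by
        simp [Complex.mul_im]
      rw [this]
      exact mul_pos huim (Complex.normSq_pos.mpr hRpne)
    -- final contradiction
    set L := (a:ℂ)*z + b with hL
    set M := (c:ℂ)*z + d with hM
    have hLM : (L * (starRingEnd ℂ) M).im = (a*d - b*c) * z.im := by
      simp only [hL, hM, map_add, map_mul, Complex.conj_ofReal, Complex.mul_im, Complex.add_im,
        Complex.add_re, Complex.mul_re, Complex.conj_re, Complex.conj_im,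
        Complex.ofReal_re, Complex.ofReal_im]
      ring
    have h1 := Complex.mul_conj Rp
    have h2 := Complex.mul_conj M
    have hE2 : (A:ℂ) * (L * (starRingEnd ℂ) M) * ((Complex.normSq Rp : ℝ):ℂ)
        = -(((B:ℂ) * ((Complex.normSq M : ℝ):ℂ)) * (z * Sp * (starRingEnd ℂ) Rp)) := by
      linear_combination ((starRingEnd ℂ) M * (starRingEnd ℂ) Rp) * hE
        - ((A:ℂ) * L * (starRingEnd ℂ) M) * h1 - ((B:ℂ) * z * Sp * (starRingEnd ℂ) Rp) * h2
    have hIm := congrArg Complex.im hE2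
    have hImL : ((A:ℂ) * (L * (starRingEnd ℂ) M) * ((Complex.normSq Rp : ℝ):ℂ)).im
        = A * ((a*d - b*c) * z.im) * Complex.normSq Rp := by
      rw [show ((A:ℂ) * (L * (starRingEnd ℂ) M) * ((Complex.normSq Rp : ℝ):ℂ)).im
          = A * (L * (starRingEnd ℂ) M).im * Complex.normSq Rp by
        simp [Complex.mul_im, Complex.ofReal_re, Complex.ofReal_im]
        try ring]
      rw [hLM]
    have hImR : (-(((B:ℂ) * ((Complex.normSq M : ℝ):ℂ)) * (z * Sp * (starRingEnd ℂ) Rp))).im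
        = -(B * Complex.normSq M * (z * Sp * (starRingEnd ℂ) Rp).im) := by
      simp [Complex.mul_im, Complex.ofReal_re, Complex.ofReal_im]
      try ring
    rw [hImL, hImR] at hIm
    have hKr : 0 < Complex.normSq Rp := Complex.normSq_pos.mpr hRpne
    have hKm : Complex.normSq M = 0 := by
      by_contra hne
      have hKmpos : 0 < Complex.normSq M := lt_of_le_of_ne (Complex.normSq_nonneg M) (Ne.symm hne)
      have hlhs : 0 ≤ A * ((a*d - b*c) * z.im) * Complex.normSq Rp :=
        mul_nonneg (mul_nonneg hA'.le (mul_nonneg (by linarith) hzim.le)) hKr.le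
      have hrhs : 0 < B * Complex.normSq M * (z * Sp * (starRingEnd ℂ) Rp).im :=
        mul_pos (mul_pos hB' hKmpos) hwim
      linarith
    have hM0 : M = 0 := Complex.normSq_eq_zero.mp hKm
    have hc0 : c = 0 := by
      have := congrArg Complex.im hM0
      simp only [hM, Complex.add_im, Complex.mul_im, Complex.ofReal_re, Complex.ofReal_im,
        Complex.zero_im] at this
      have hcz : c * z.im = 0 := by linarith
      rcases mul_eq_zero.mp hcz with hh | hh
      · exact hh
      · linarith
    have hd0 : d = 0 := by
      have := congrArg Complex.re hM0
      simp only [hM, Complex.add_re, Complex.mul_re, Complex.ofReal_re, Complex.ofReal_im,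
        Complex.zero_re, hc0] at this
      linarith
    have hL0 : L = 0 := by
      have hEE : L * ((A:ℂ) * Rp) = 0 := by
        have := hE
        rw [hM0] at this
        simpa using this
      rcases mul_eq_zero.mp hEE with hh | hh
      · exact hh
      · rcases mul_eq_zero.mp hh with hh2 | hh2
        · exact absurd hh2 (by exact_mod_cast hA'.ne')
        · exact absurd hh2 hRpne
    have ha0 : a = 0 := by
      have := congrArg Complex.im hL0
      simp only [hL, Complex.add_im, Complex.mul_im, Complex.ofReal_re, Complex.ofReal_im,
        Complex.zero_im] at this
      have haz : a * z.im = 0 := by linarith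
      rcases mul_eq_zero.mp haz with hh | hh
      · exact hh
      · linarith
    have hb0 : b = 0 := by
      have := congrArg Complex.re hL0
      simp only [hL, Complex.add_re, Complex.mul_re, Complex.ofReal_re, Complex.ofReal_im,
        Complex.zero_re, ha0] at this
      linarith
    apply hF0
    rw [hFdef, ha0, hb0, hc0, hd0]
    simp
end

section
/- Let {P_n(x)} be a sequence of polynomials with nonnegative coefficients and deg P_n = deg P_{n−1} + 1, satisfying P_n(x) = (a_n x + b_n) P_{n−1}(x) + x(c_n x + d_n) P'_{n−1}(x) with a_n, b_n ∈ ℝ, c_n ≤ 0, d_n ≥ 0, and P_0 real-rooted. Then every P_n has only real zeros and P_{n−1} ⪯ P_n for all n (the sequence is a generalized Sturm sequence). -/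
open Polynomial Finset

namespace SturmAux

/-- weak interleaving of two lists of reals (in nonincreasing order),
`u` has one more element than `t`. -/
inductive IL : List ℝ → List ℝ → Prop
  | single (u₀ : ℝ) : IL [] [u₀]
  | step {ts us : List ℝ} {t₀ u₀ u₁ : ℝ} :
      t₀ ≤ u₀ → u₁ ≤ t₀ → IL ts (u₁ :: us) → IL (t₀ :: ts) (u₀ :: u₁ :: us)

lemma IL.len {t u : List ℝ} (h : IL t u) : u.length = t.length + 1 := by
  induction h with
  | single => simp
  | step h1 h2 h3 ih => simp at ih ⊢; omega

lemma IL.replace_head {ts v : List ℝ} {x y : ℝ} (h : IL ts (x :: v))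
    (hy : ∀ z ∈ ts, z ≤ y) : IL ts (y :: v) := by
  cases h with
  | single => exact IL.single y
  | step h1 h2 h3 => exact IL.step (hy _ (by simp)) h2 h3

lemma IL.tail_le {ts u : List ℝ} {y : ℝ} (h : IL ts u) (hs : u.Pairwise (· ≥ ·))
    (hts : ∀ z ∈ ts, z ≤ y) : ∀ x ∈ u.tail, x ≤ y := by
  cases h with
  | single => simp
  | @step ts' us' t₀' u₀' u₁' h1 h2 h3 =>
    intro x hx
    simp only [List.tail_cons, List.mem_cons] at hx
    have ht₀' : t₀' ≤ y := hts _ (by simp)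
    rcases hx with rfl | hx
    · exact h2.trans ht₀'
    · have : u₁' ≥ x := List.rel_of_pairwise_cons (hs.of_cons) hx
      linarith [h2]

lemma IL.getD_bounds {t u : List ℝ} (h : IL t u) :
    ∀ i : ℕ, i < t.length →
      u.getD (i+1) 0 ≤ t.getD i 0 ∧ t.getD i 0 ≤ u.getD i 0 := by
  induction h with
  | single => intro i hi; simp at hi
  | step hle1 hle2 h3 ih =>
    intro i hi
    cases i with
    | zero => simpa using ⟨hle2, hle1⟩
    | succ j =>
      simp only [List.length_cons] at hi
      simpa only [List.getD_cons_succ] using ih j (by omega)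

lemma eval_pos_of_nonneg_coeff {p : ℝ[X]} (hp : ∀ i, 0 ≤ p.coeff i)
    (hlead : 0 < p.leadingCoeff) {x : ℝ} (hx : 0 < x) : 0 < p.eval x := by
  rw [Polynomial.eval_eq_sum_range]
  have h1 : p.coeff p.natDegree * x ^ p.natDegree ≤
      ∑ i ∈ Finset.range (p.natDegree + 1), p.coeff i * x ^ i :=
    Finset.single_le_sum (fun i _ => mul_nonneg (hp i) (pow_nonneg hx.le i))
      (Finset.self_mem_range_succ _)
  have h2 : 0 < p.coeff p.natDegree * x ^ p.natDegree :=
    mul_pos hlead (pow_pos hx _)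
  linarith

lemma peel {G : ℝ[X]} {ρ : ℝ} (h : G.eval ρ = 0) (hG : G ≠ 0) :
    ∃ G₁ : ℝ[X], G = (X - C ρ) * G₁ ∧ G₁.leadingCoeff = G.leadingCoeff ∧
      G₁.natDegree + 1 = G.natDegree := by
  obtain ⟨G₁, hG₁⟩ := Polynomial.dvd_iff_isRoot.mpr h
  have hG₁0 : G₁ ≠ 0 := by rintro rfl; rw [mul_zero] at hG₁; exact hG hG₁
  refine ⟨G₁, hG₁, ?_, ?_⟩
  · rw [hG₁, Polynomial.leadingCoeff_mul, Polynomial.leadingCoeff_X_sub_C, one_mul]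
  · rw [hG₁, Polynomial.natDegree_mul (Polynomial.X_sub_C_ne_zero ρ) hG₁0,
      Polynomial.natDegree_X_sub_C]
    omega

lemma transfer {G G₁ Q : ℝ[X]} {ρ v : ℝ} {m : ℕ} (hv : v < ρ)
    (hG : G = (X - C ρ) * G₁) (hQ : G = (X - C v) ^ m * Q) :
    ∃ Q', G₁ = (X - C v) ^ m * Q' ∧ Q.eval v = (v - ρ) * Q'.eval v := by
  have hQρ : Q.eval ρ = 0 := by
    have e1 : G.eval ρ = 0 := by rw [hG]; simp
    rw [hQ] at e1
    simp only [Polynomial.eval_mul, Polynomial.eval_pow, Polynomial.eval_sub,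
      Polynomial.eval_X, Polynomial.eval_C] at e1
    rcases mul_eq_zero.mp e1 with h' | h'
    · have := (pow_eq_zero_iff'.mp h').1
      have : v = ρ := by linarith [sub_eq_zero.mp this]
      exact absurd this (ne_of_lt hv)
    · exact h'
  obtain ⟨Q', hQ'⟩ := Polynomial.dvd_iff_isRoot.mpr hQρ
  refine ⟨Q', ?_, ?_⟩
  · have e2 : (X - C ρ) * G₁ = (X - C ρ) * ((X - C v) ^ m * Q') := by
      rw [← hG, hQ, hQ']; ring
    exact mul_left_cancel₀ (Polynomial.X_sub_C_ne_zero ρ) e2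
  · rw [hQ']; simp

lemma sign_flip {A q' v ρ : ℝ} (hv : v < ρ) (h : 0 ≤ A * -1 * ((v - ρ) * q')) :
    0 ≤ A * q' := by nlinarith

/-- The main interlacing construction lemma. -/
lemma main : ∀ (k : ℕ) (t : List ℝ) (G : Polynomial ℝ), t.length = k →
    t.Pairwise (· ≥ ·) → G.natDegree = k + 1 → 0 < G.leadingCoeff →
    (∀ v ∈ t, ∃ Q, G = (X - C v) ^ (t.count v - 1) * Q ∧
      0 ≤ (-1 : ℝ) ^ (t.countP (fun x => decide (v < x)) + 1) * Q.eval v) →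
    ∃ u : List ℝ, u.length = k + 1 ∧ u.Pairwise (· ≥ ·) ∧
      G = C G.leadingCoeff * (u.map (fun x => X - C x)).prod ∧ IL t u := by
  intro k
  induction k with
  | zero =>
    intro t G ht _ hdeg hlead _
    rw [List.length_eq_zero_iff] at ht; subst ht
    have h3 : G.leadingCoeff ≠ 0 := ne_of_gt hlead
    refine ⟨[-(G.coeff 0) / G.leadingCoeff], rfl, by simp, ?_, IL.single _⟩
    have h1 : G = C (G.coeff 1) * X + C (G.coeff 0) :=
      Polynomial.eq_X_add_C_of_natDegree_le_one (by omega)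
    have h2 : G.coeff 1 = G.leadingCoeff := by rw [Polynomial.leadingCoeff, hdeg]
    have h4 : G.leadingCoeff * (-(G.coeff 0) / G.leadingCoeff) = -(G.coeff 0) := by
      field_simp
    rw [List.map_singleton, List.prod_singleton, mul_sub, ← Polynomial.C_mul, h4]
    nth_rewrite 1 [h1]
    rw [h2, map_neg]
    ring
  | succ k ih =>
    intro t G htlen hsort hdeg hlead H
    obtain ⟨t₀, ts, rfl⟩ : ∃ t₀ ts, t = t₀ :: ts := by
      cases t with
      | nil => simp at htlen
      | cons a l => exact ⟨a, l, rfl⟩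
    simp only [List.length_cons, Nat.succ.injEq] at htlen
    have hG0 : G ≠ 0 := fun h => by simp [h] at hdeg
    have hsort' : ts.Pairwise (· ≥ ·) := hsort.of_cons
    have hts_le : ∀ z ∈ ts, z ≤ t₀ := fun z hz => List.rel_of_pairwise_cons hsort hz
    have hcountP₀ : ∀ l : List ℝ, (∀ z ∈ l, z ≤ t₀) →
        l.countP (fun x => decide (t₀ < x)) = 0 := by
      intro l hl
      rw [List.countP_eq_zero]
      intro x hx
      simp only [decide_eq_true_eq]
      exact not_lt.mpr (hl x hx)
    have hmemle : ∀ z ∈ t₀ :: ts, z ≤ t₀ := by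
      intro z hz
      rcases List.mem_cons.mp hz with rfl | h
      · exact le_refl _
      · exact hts_le z h
    obtain ⟨Q₀, hQ₀, hs₀⟩ := H t₀ (by simp)
    rw [hcountP₀ (t₀ :: ts) hmemle] at hs₀
    by_cases hroot : G.eval t₀ = 0
    · -- Case A : peel t₀
      obtain ⟨G₁, hG₁, hlc₁, hnd₁⟩ := peel hroot hG0
      have hlead₁ : 0 < G₁.leadingCoeff := hlc₁ ▸ hlead
      have H' : ∀ v ∈ ts, ∃ Q, G₁ = (X - C v) ^ (ts.count v - 1) * Q ∧
          0 ≤ (-1 : ℝ) ^ (ts.countP (fun x => decide (v < x)) + 1) * Q.eval v := by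
        intro v hv
        obtain ⟨Q, hQ, hs⟩ := H v (by simp [hv])
        by_cases hvt : v = t₀
        · subst hvt
          have hcnt : (v :: ts).count v = ts.count v + 1 := by simp [List.count_cons]
          have hcnt1 : 1 ≤ ts.count v := List.count_pos_iff.mpr hv
          rw [hcnt] at hQ
          have hQ' : (X - C v) * G₁ = (X - C v) * ((X - C v) ^ (ts.count v - 1) * Q) := by
            rw [← hG₁, hQ]
            have : ts.count v + 1 - 1 = (ts.count v - 1) + 1 := by omega
            rw [this, pow_succ]
            ring
          refine ⟨Q, mul_left_cancel₀ (Polynomial.X_sub_C_ne_zero v) hQ', ?_⟩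
          rw [hcountP₀ ts hts_le]
          rw [hcountP₀ (v :: ts) hmemle] at hs
          exact hs
        · have hvlt : v < t₀ := lt_of_le_of_ne (hts_le v hv) hvt
          have hcnt : (t₀ :: ts).count v = ts.count v := by
            simp [List.count_cons, hvt, Ne.symm hvt]
          have hcp : (t₀ :: ts).countP (fun x => decide (v < x)) =
              ts.countP (fun x => decide (v < x)) + 1 := by
            rw [List.countP_cons]
            simp [hvlt]
          rw [hcnt] at hQ
          obtain ⟨Q', hQ', hev⟩ := transfer hvlt hG₁ hQ
          refine ⟨Q', hQ', ?_⟩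
          rw [hcp, hev] at hs
          rw [pow_succ] at hs
          exact sign_flip hvlt hs
      obtain ⟨u', hu'len, hu'sort, hu'eq, hu'IL⟩ :=
        ih ts G₁ htlen hsort' (by omega) hlead₁ H'
      obtain ⟨u'h, u't, rfl⟩ : ∃ x l, u' = x :: l := by
        cases u' with
        | nil => simp at hu'len
        | cons a l => exact ⟨a, l, rfl⟩
      rw [hlc₁] at hu'eq
      have htail_le : ∀ x ∈ u't, x ≤ t₀ :=
        hu'IL.tail_le hu'sort hts_le
      by_cases hcmp : u'h ≤ t₀
      · refine ⟨t₀ :: u'h :: u't, by simp at hu'len ⊢; omega, ?_, ?_, ?_⟩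
        · rw [List.pairwise_cons]
          refine ⟨?_, hu'sort⟩
          intro b hb
          rcases List.mem_cons.mp hb with rfl | hb
          · exact hcmp
          · exact htail_le b hb
        · conv_lhs => rw [hG₁, hu'eq]
          simp only [List.map_cons, List.prod_cons]
          ring
        · exact IL.step le_rfl hcmp hu'IL
      · push_neg at hcmp
        refine ⟨u'h :: t₀ :: u't, by simp at hu'len ⊢; omega, ?_, ?_, ?_⟩
        · rw [List.pairwise_cons]
          constructor
          · intro b hb
            rcases List.mem_cons.mp hb with rfl | hb
            · exact le_of_lt hcmp
            · exact le_trans (htail_le b hb) (le_of_lt hcmp)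
          · rw [List.pairwise_cons]
            exact ⟨htail_le, hu'sort.of_cons⟩
        · conv_lhs => rw [hG₁, hu'eq]
          simp only [List.map_cons, List.prod_cons]
          ring
        · exact IL.step (le_of_lt hcmp) le_rfl (hu'IL.replace_head hts_le)
    · -- Case B : G(t₀) < 0, find a root above t₀
      have hcnt₀ : (t₀ :: ts).count t₀ - 1 = 0 := by
        by_contra h
        have h1 : 1 ≤ (t₀ :: ts).count t₀ - 1 := by omega
        apply hroot
        rw [hQ₀]
        simp only [Polynomial.eval_mul, Polynomial.eval_pow, Polynomial.eval_sub,
          Polynomial.eval_X, Polynomial.eval_C, sub_self]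
        rw [zero_pow (by omega)]
        ring
      rw [hcnt₀, pow_zero, one_mul] at hQ₀
      rw [← hQ₀] at hs₀
      have hle : G.eval t₀ ≤ 0 := by simpa using hs₀
      have hneg : G.eval t₀ < 0 := lt_of_le_of_ne hle hroot
      have hdegpos : 0 < G.degree := Polynomial.natDegree_pos_iff_degree_pos.mp (by omega)
      have htend := Polynomial.tendsto_atTop_of_leadingCoeff_nonneg G hdegpos hlead.le
      obtain ⟨M, hM1, hM2⟩ :=
        ((Filter.eventually_ge_atTop t₀).and (htend.eventually_ge_atTop 1)).exists
      have h0mem : (0:ℝ) ∈ Set.Icc (G.eval t₀) (G.eval M) := ⟨le_of_lt hneg, by linarith⟩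
      obtain ⟨u₀, hu₀mem, hu₀⟩ :=
        intermediate_value_Icc hM1 (G.continuous.continuousOn) h0mem
      have hu₀root : G.eval u₀ = 0 := hu₀
      have ht₀u₀ : t₀ < u₀ :=
        lt_of_le_of_ne hu₀mem.1 (fun h => hroot (h ▸ hu₀root))
      obtain ⟨G₁, hG₁, hlc₁, hnd₁⟩ := peel hu₀root hG0
      have hlead₁ : 0 < G₁.leadingCoeff := hlc₁ ▸ hlead
      have ht₀nmem : t₀ ∉ ts := by
        intro h
        have : 1 ≤ ts.count t₀ := List.count_pos_iff.mpr h
        have : (t₀ :: ts).count t₀ = ts.count t₀ + 1 := by simp [List.count_cons]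
        omega
      have H' : ∀ v ∈ ts, ∃ Q, G₁ = (X - C v) ^ (ts.count v - 1) * Q ∧
          0 ≤ (-1 : ℝ) ^ (ts.countP (fun x => decide (v < x)) + 1) * Q.eval v := by
        intro v hv
        obtain ⟨Q, hQ, hs⟩ := H v (by simp [hv])
        have hvt : v ≠ t₀ := fun h => ht₀nmem (h ▸ hv)
        have hvlt : v < t₀ := lt_of_le_of_ne (hts_le v hv) hvt
        have hvu : v < u₀ := lt_trans hvlt ht₀u₀
        have hcnt : (t₀ :: ts).count v = ts.count v := by
          simp [List.count_cons, hvt, Ne.symm hvt]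
        have hcp : (t₀ :: ts).countP (fun x => decide (v < x)) =
            ts.countP (fun x => decide (v < x)) + 1 := by
          rw [List.countP_cons]; simp [hvlt]
        rw [hcnt] at hQ
        obtain ⟨Q', hQ', hev⟩ := transfer hvu hG₁ hQ
        refine ⟨Q', hQ', ?_⟩
        rw [hcp, hev] at hs
        rw [pow_succ] at hs
        exact sign_flip hvu hs
      obtain ⟨u', hu'len, hu'sort, hu'eq, hu'IL⟩ :=
        ih ts G₁ htlen hsort' (by omega) hlead₁ H'
      obtain ⟨u'h, u't, rfl⟩ : ∃ x l, u' = x :: l := by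
        cases u' with
        | nil => simp at hu'len
        | cons a l => exact ⟨a, l, rfl⟩
      rw [hlc₁] at hu'eq
      have htail_le : ∀ x ∈ u't, x ≤ t₀ := hu'IL.tail_le hu'sort hts_le
      have hu'le : u'h ≤ t₀ := by
        by_contra hgt
        push_neg at hgt
        have hev : G.eval t₀ = (t₀ - u₀) * (G.leadingCoeff *
            ((t₀ - u'h) * ((u't.map (fun x => t₀ - x)).prod))) := by
          conv_lhs => rw [hG₁, hu'eq]
          simp only [Polynomial.eval_mul, Polynomial.eval_sub, Polynomial.eval_X,
            Polynomial.eval_C, Polynomial.eval_list_prod, List.map_cons, List.prod_cons,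
            List.map_map, Function.comp_def]
        have hprod : 0 ≤ (u't.map (fun x => t₀ - x)).prod := by
          apply List.prod_nonneg
          intro a ha
          obtain ⟨x, hx, rfl⟩ := List.mem_map.mp ha
          linarith [htail_le x hx]
        have h1 : 0 < (t₀ - u₀) * (t₀ - u'h) :=
          mul_pos_of_neg_of_neg (by linarith) (by linarith)
        have h2 : 0 ≤ G.leadingCoeff * ((t₀ - u₀) * (t₀ - u'h)) *
            ((u't.map (fun x => t₀ - x)).prod) := mul_nonneg (mul_pos hlead h1).le hprod
        rw [hev] at hneg
        nlinarith [h2, hneg]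
      refine ⟨u₀ :: u'h :: u't, by simp at hu'len ⊢; omega, ?_, ?_, ?_⟩
      · rw [List.pairwise_cons]
        refine ⟨?_, hu'sort⟩
        intro b hb
        rcases List.mem_cons.mp hb with rfl | hb
        · linarith
        · linarith [htail_le b hb]
      · conv_lhs => rw [hG₁, hu'eq]
        simp only [List.map_cons, List.prod_cons]
        ring
      · exact IL.step (le_of_lt ht₀u₀) hu'le hu'IL

lemma sorted_prefix_replicate {v : ℝ} :
    ∀ l : List ℝ, l.Pairwise (· ≥ ·) → (∀ x ∈ l, x ≤ v) →
      ∃ B, l = List.replicate (l.count v) v ++ B ∧ ∀ x ∈ B, x < v := by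
  intro l
  induction l with
  | nil => intro _ _; exact ⟨[], by simp, by simp⟩
  | cons x l' ih =>
    intro hs hle
    by_cases hx : x = v
    · subst hx
      obtain ⟨B, hB, hBlt⟩ := ih hs.of_cons (fun y hy => hle y (by simp [hy]))
      refine ⟨B, ?_, hBlt⟩
      rw [List.count_cons_self, List.replicate_succ, List.cons_append, ← hB]
    · have hxv : x < v := lt_of_le_of_ne (hle x (by simp)) hx
      have hall : ∀ y ∈ x :: l', y < v := by
        intro y hy
        rcases List.mem_cons.mp hy with rfl | hy'
        · exact hxv
        · exact lt_of_le_of_lt (List.rel_of_pairwise_cons hs hy') hxv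
      have hcnt : (x :: l').count v = 0 := by
        rw [List.count_eq_zero]
        intro hmem
        exact absurd rfl (ne_of_lt (hall v hmem))
      exact ⟨x :: l', by rw [hcnt]; simp, hall⟩

lemma sorted_split {v : ℝ} :
    ∀ l : List ℝ, l.Pairwise (· ≥ ·) → v ∈ l →
      ∃ A B, l = A ++ List.replicate (l.count v) v ++ B ∧
        (∀ x ∈ A, v < x) ∧ (∀ x ∈ B, x < v) := by
  intro l
  induction l with
  | nil => intro _ h; simp at h
  | cons x l' ih =>
    intro hs hv
    by_cases hx : x = v
    · subst hx
      have hle : ∀ y ∈ l', y ≤ x := fun y hy => List.rel_of_pairwise_cons hs hy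
      obtain ⟨B, hB, hBlt⟩ := sorted_prefix_replicate l' hs.of_cons hle
      refine ⟨[], B, ?_, by simp, hBlt⟩
      rw [List.count_cons_self, List.replicate_succ, List.nil_append,
        List.cons_append, ← hB]
    · have hv' : v ∈ l' := by
        rcases List.mem_cons.mp hv with h | h
        · exact absurd h.symm hx
        · exact h
      have hvx : v < x :=
        lt_of_le_of_ne (List.rel_of_pairwise_cons hs hv') (Ne.symm hx)
      obtain ⟨A, B, hAB, hAgt, hBlt⟩ := ih hs.of_cons hv'
      have hcnt : (x :: l').count v = l'.count v := by
        simp [List.count_cons, hx, Ne.symm hx]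
      refine ⟨x :: A, B, ?_, ?_, hBlt⟩
      · rw [hcnt, List.cons_append, List.cons_append, ← hAB]
      · intro y hy
        rcases List.mem_cons.mp hy with rfl | hy'
        · exact hvx
        · exact hAgt y hy'

lemma neg_prod_sign : ∀ l : List ℝ, (∀ y ∈ l, y < 0) → 0 < (-1:ℝ) ^ l.length * l.prod := by
  intro l
  induction l with
  | nil => simp
  | cons y l' ih =>
    intro h
    have h1 := ih (fun z hz => h z (by simp [hz]))
    have h2 : y < 0 := h y (by simp)
    simp only [List.length_cons, List.prod_cons, pow_succ]
    nlinarith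

lemma hyp_verify {f : ℝ[X]} {s : List ℝ} (hsort : s.Pairwise (· ≥ ·)) (hneg : ∀ x ∈ s, x ≤ 0)
    (hlead : 0 < f.leadingCoeff)
    (hf : f = C f.leadingCoeff * (s.map (fun x => X - C x)).prod)
    {a b c d : ℝ} (hc : c ≤ 0) (hd : 0 ≤ d) {g : ℝ[X]}
    (hg : g = (C a * X + C b) * f + X * (C c * X + C d) * derivative f) :
    ∀ v ∈ s, ∃ Q, g = (X - C v) ^ (s.count v - 1) * Q ∧
      0 ≤ (-1 : ℝ) ^ (s.countP (fun x => decide (v < x)) + 1) * Q.eval v := by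
  intro v hv
  obtain ⟨A, B, hAB, hAgt, hBlt⟩ := sorted_split s hsort hv
  have hv0 : v ≤ 0 := hneg v hv
  obtain ⟨ν, hν⟩ : ∃ ν, s.count v = ν + 1 :=
    ⟨s.count v - 1, by have := List.count_pos_iff.mpr hv; omega⟩
  set L := f.leadingCoeff with hL
  set h := C L * ((A ++ B).map (fun x => X - C x)).prod with hh
  have hfact : f = (X - C v) ^ (ν + 1) * h := by
    conv_lhs => rw [hf, hAB]
    rw [hν]
    simp only [List.map_append, List.prod_append, List.map_replicate,
      List.prod_replicate, hh, List.map_append, List.prod_append]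
    ring
  have hderiv : derivative f = C ((ν:ℝ) + 1) * (X - C v) ^ ν * h +
      (X - C v) ^ (ν + 1) * derivative h := by
    rw [hfact, derivative_mul, derivative_pow, derivative_X_sub_C]
    simp only [Nat.add_sub_cancel, Nat.cast_add, Nat.cast_one, mul_one]
  set Q : ℝ[X] := (C a * X + C b) * ((X - C v) * h) +
      X * (C c * X + C d) * (C ((ν:ℝ) + 1) * h + (X - C v) * derivative h) with hQdef
  refine ⟨Q, ?_, ?_⟩
  · rw [hν]
    simp only [Nat.add_sub_cancel]
    rw [hg, hderiv, hfact, hQdef]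
    ring
  · have hQev : Q.eval v = v * (c * v + d) * (((ν:ℝ) + 1) * h.eval v) := by
      rw [hQdef]
      simp only [eval_add, eval_mul, eval_sub, eval_X, eval_C, sub_self, zero_mul,
        mul_zero, add_zero, zero_add]
      try ring
    have hhev : h.eval v = L * ((A.map (fun x => v - x)).prod * (B.map (fun x => v - x)).prod) := by
      rw [hh]
      simp only [eval_mul, eval_C, eval_list_prod, List.map_append, List.map_map,
        List.prod_append, Function.comp_def, eval_sub, eval_X]
    have hcp : s.countP (fun x => decide (v < x)) = A.length := by
      conv_lhs => rw [hAB]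
      rw [List.countP_append, List.countP_append]
      have e1 : A.countP (fun x => decide (v < x)) = A.length :=
        List.countP_eq_length.mpr (fun x hx => by simpa using hAgt x hx)
      have e2 : (List.replicate (s.count v) v).countP (fun x => decide (v < x)) = 0 :=
        List.countP_eq_zero.mpr (fun x hx => by
          rw [List.eq_of_mem_replicate hx]; simp)
      have e3 : B.countP (fun x => decide (v < x)) = 0 :=
        List.countP_eq_zero.mpr (fun x hx => by simp [not_lt.mpr (le_of_lt (hBlt x hx))])
      omega
    have hPA := neg_prod_sign (A.map (fun x => v - x)) (by
      intro y hy
      obtain ⟨x, hx, rfl⟩ := List.mem_map.mp hy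
      have := hAgt x hx
      linarith)
    rw [List.length_map] at hPA
    have hPB : 0 < (B.map (fun x => v - x)).prod := by
      apply List.prod_pos
      intro y hy
      obtain ⟨x, hx, rfl⟩ := List.mem_map.mp hy
      have := hBlt x hx
      linarith
    have hw : v * (c * v + d) ≤ 0 :=
      mul_nonpos_of_nonpos_of_nonneg hv0 (by nlinarith)
    have hν1 : (0:ℝ) < (ν:ℝ) + 1 := by positivity
    rw [hQev, hhev, hcp, pow_succ]
    set E := (-1:ℝ) ^ A.length * (A.map (fun x => v - x)).prod with hE
    set PB := (B.map (fun x => v - x)).prod with hPBdef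
    have key : 0 ≤ (-(v * (c * v + d))) * (((ν:ℝ) + 1) * (L * (E * PB))) := by
      apply mul_nonneg (by linarith)
      apply mul_nonneg (by linarith)
      apply mul_nonneg (by linarith)
      exact mul_nonneg (le_of_lt hPA) (le_of_lt hPB)
    nlinarith [key]

lemma list_prod_fin {l : List ℝ} {n : ℕ} (hl : l.length = n) (F : ℝ → ℝ[X]) :
    (l.map F).prod = ∏ i : Fin n, F (l.getD i 0) := by
  subst hl
  conv_lhs => rw [← List.ofFn_get l]
  rw [List.map_ofFn, List.prod_ofFn]
  apply Finset.prod_congr rfl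
  intro i _
  simp [List.getD_eq_getElem, List.get_eq_getElem]

lemma realrooted_of_fact {p : ℝ[X]} {u : List ℝ} (hlc : p.leadingCoeff ≠ 0)
    (hlen : u.length = p.natDegree)
    (heq : p = C p.leadingCoeff * (u.map (fun x => X - C x)).prod) : RealRooted p := by
  have h1 : (u.map (fun x => X - C x)).prod =
      ((↑u : Multiset ℝ).map (fun x => X - C x)).prod := by
    rw [Multiset.map_coe, Multiset.prod_coe]
  have hr : p.roots = ↑u := by
    conv_lhs => rw [heq, h1]
    rw [Polynomial.roots_C_mul _ hlc, Polynomial.roots_multiset_prod_X_sub_C]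
  show p.roots.card = p.natDegree
  rw [hr, Multiset.coe_card, hlen]

lemma entries_nonpos {p : ℝ[X]} {u : List ℝ} (hnn : ∀ i, 0 ≤ p.coeff i)
    (hlead : 0 < p.leadingCoeff)
    (heq : p = C p.leadingCoeff * (u.map (fun x => X - C x)).prod) :
    ∀ x ∈ u, x ≤ 0 := by
  intro x hx
  by_contra hpos
  push_neg at hpos
  have hroot : p.eval x = 0 := by
    conv_lhs => rw [heq]
    simp only [eval_mul, eval_C, eval_list_prod, List.map_map, Function.comp_def,
      eval_sub, eval_X]
    have hmem : (0:ℝ) ∈ u.map (fun y => x - y) := List.mem_map.mpr ⟨x, hx, by ring⟩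
    rw [List.prod_eq_zero hmem, mul_zero]
  have := eval_pos_of_nonneg_coeff hnn hlead hpos
  linarith

lemma good_step {f g : ℝ[X]} {s : List ℝ} {a b c d : ℝ}
    (hc : c ≤ 0) (hd : 0 ≤ d)
    (hsort : s.Pairwise (· ≥ ·)) (hsneg : ∀ x ∈ s, x ≤ 0)
    (hslen : s.length = f.natDegree)
    (hfeq : f = C f.leadingCoeff * (s.map (fun x => X - C x)).prod)
    (hflead : 0 < f.leadingCoeff)
    (hgnn : ∀ i, 0 ≤ g.coeff i)
    (hgdeg : g.natDegree = f.natDegree + 1)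
    (hgrec : g = (C a * X + C b) * f + X * (C c * X + C d) * derivative f) :
    ∃ u : List ℝ, u.Pairwise (· ≥ ·) ∧ (∀ x ∈ u, x ≤ 0) ∧ u.length = g.natDegree ∧
      g = C g.leadingCoeff * (u.map (fun x => X - C x)).prod ∧ IL s u := by
  have hg0 : g ≠ 0 := by intro h; rw [h] at hgdeg; simp at hgdeg
  have hglead : 0 < g.leadingCoeff := by
    have h1 : 0 ≤ g.leadingCoeff := by rw [Polynomial.leadingCoeff]; exact hgnn _
    exact lt_of_le_of_ne h1 (Ne.symm (Polynomial.leadingCoeff_ne_zero.mpr hg0))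
  obtain ⟨u, hulen, husort, hueq, huIL⟩ := main s.length s g rfl hsort (by omega) hglead
    (hyp_verify hsort hsneg hflead hfeq hc hd hgrec)
  exact ⟨u, husort, entries_nonpos hgnn hglead hueq, by omega, hueq, huIL⟩

end SturmAux

open SturmAux in
theorem generalized_sturm_derivative (P : ℕ → Polynomial ℝ) (a b c d : ℕ → ℝ)
    (hnonneg : ∀ n i, 0 ≤ (P n).coeff i)
    (hdeg : ∀ n, 1 ≤ n → (P n).natDegree = (P (n - 1)).natDegree + 1)
    (hc : ∀ n, c n ≤ 0) (hd : ∀ n, 0 ≤ d n)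
    (hrec : ∀ n, 1 ≤ n →
      P n = (Polynomial.C (a n) * Polynomial.X + Polynomial.C (b n)) * P (n - 1) +
            Polynomial.X * (Polynomial.C (c n) * Polynomial.X + Polynomial.C (d n)) *
              Polynomial.derivative (P (n - 1)))
    (h0 : RealRooted (P 0)) :
    (∀ n, RealRooted (P n)) ∧ (∀ n, 1 ≤ n → Prec (P (n - 1)) (P n)) := by
  classical
  have hP0ne : P 0 ≠ 0 := by
    intro h
    have h1 := hrec 1 le_rfl
    have h2 := hdeg 1 le_rfl
    rw [show (1:ℕ) - 1 = 0 from rfl, h] at h1 h2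
    simp only [mul_zero, derivative_zero, add_zero, zero_add] at h1
    rw [h1] at h2
    simp at h2
  have hPne : ∀ n, P n ≠ 0 := by
    intro n
    cases n with
    | zero => exact hP0ne
    | succ m =>
      intro h
      have h2 := hdeg (m+1) (by omega)
      rw [h] at h2
      simp at h2
  have hlead : ∀ n, 0 < (P n).leadingCoeff := by
    intro n
    have h1 : 0 ≤ (P n).leadingCoeff := by
      rw [Polynomial.leadingCoeff]; exact hnonneg n _
    exact lt_of_le_of_ne h1 (Ne.symm (Polynomial.leadingCoeff_ne_zero.mpr (hPne n)))
  -- base data for P 0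
  have hGood0 : ∃ u : List ℝ, u.Pairwise (· ≥ ·) ∧ (∀ x ∈ u, x ≤ 0) ∧
      u.length = (P 0).natDegree ∧
      P 0 = Polynomial.C (P 0).leadingCoeff * (u.map (fun x => X - Polynomial.C x)).prod := by
    have hfac := Polynomial.C_leadingCoeff_mul_prod_multiset_X_sub_C h0
    refine ⟨Multiset.sort (P 0).roots (· ≥ ·), Multiset.pairwise_sort _ _, ?_, ?_, ?_⟩
    · intro x hx
      rw [Multiset.mem_sort] at hx
      have hroot : (P 0).eval x = 0 := (Polynomial.mem_roots hP0ne).mp hx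
      by_contra hpos
      push_neg at hpos
      have := eval_pos_of_nonneg_coeff (hnonneg 0) (hlead 0) hpos
      linarith
    · rw [Multiset.length_sort, h0]
    · conv_lhs => rw [← hfac]
      congr 1
      rw [← Multiset.sort_eq (P 0).roots (· ≥ ·), Multiset.map_coe, Multiset.prod_coe]
      rw [Multiset.sort_eq]
  have hGoods : ∀ n, ∃ u : List ℝ, u.Pairwise (· ≥ ·) ∧ (∀ x ∈ u, x ≤ 0) ∧
      u.length = (P n).natDegree ∧
      P n = Polynomial.C (P n).leadingCoeff * (u.map (fun x => X - Polynomial.C x)).prod := by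
    intro n
    induction n with
    | zero => exact hGood0
    | succ m ih =>
      obtain ⟨s, h1, h2, h3, h4⟩ := ih
      have hdeg' : (P (m+1)).natDegree = (P m).natDegree + 1 := by
        simpa using hdeg (m+1) (by omega)
      have hrec' := hrec (m+1) (by omega)
      simp only [Nat.add_sub_cancel] at hrec'
      obtain ⟨u, a1, a2, a3, a4, _⟩ := good_step (hc (m+1)) (hd (m+1)) h1 h2 h3 h4
        (hlead m) (hnonneg (m+1)) hdeg' hrec'
      exact ⟨u, a1, a2, a3, a4⟩
  constructor
  · intro n
    obtain ⟨u, _, _, h3, h4⟩ := hGoods n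
    exact realrooted_of_fact (ne_of_gt (hlead n)) h3 h4
  · intro n hn
    obtain ⟨s, h1, h2, h3, h4⟩ := hGoods (n-1)
    have hdeg' := hdeg n hn
    have hrec' := hrec n hn
    obtain ⟨u, a1, a2, a3, a4, aIL⟩ := good_step (hc n) (hd n) h1 h2 h3 h4
      (hlead (n-1)) (hnonneg n) hdeg' hrec'
    right
    have hul : u.length = s.length + 1 := aIL.len
    refine ⟨s.length, fun i => u.getD i 0, fun i => s.getD i 0, ?_, ?_, ?_⟩
    · conv_lhs => rw [a4]
      rw [list_prod_fin hul]
    · conv_lhs => rw [h4]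
      rw [list_prod_fin rfl]
    · intro i
      have hb := aIL.getD_bounds i.1 i.isLt
      exact ⟨hb.1, hb.2⟩
end

section
/- The polynomial u(x) = 8(10 + 339x + 2855x² + 2736x³ + 972x⁴) does not have all real zeros. -/
open Polynomial Finset

private lemma multiset_card_eq_four {α : Type*} [DecidableEq α] {s : Multiset α} (h : Multiset.card s = 4) :
    ∃ a b c d : α, s = {a, b, c, d} := by
  obtain ⟨a, ha⟩ := Multiset.card_pos_iff_exists_mem.mp (by omega : 0 < Multiset.card s)
  have h3 : Multiset.card (s.erase a) = 3 := by
    rw [Multiset.card_erase_of_mem ha, h]; rfl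
  obtain ⟨b, c, d, hbcd⟩ := Multiset.card_eq_three.mp h3
  exact ⟨a, b, c, d, by rw [← Multiset.cons_erase ha, hbcd]; rfl⟩

theorem stahl_counterexample :
    ¬ RealRooted (Polynomial.C (8 : ℝ) *
      (Polynomial.C 10 + Polynomial.C 339 * Polynomial.X +
       Polynomial.C 2855 * Polynomial.X ^ 2 + Polynomial.C 2736 * Polynomial.X ^ 3 +
       Polynomial.C 972 * Polynomial.X ^ 4)) := by
  intro h
  set f : Polynomial ℝ := Polynomial.C (8 : ℝ) *
      (Polynomial.C 10 + Polynomial.C 339 * Polynomial.X +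
       Polynomial.C 2855 * Polynomial.X ^ 2 + Polynomial.C 2736 * Polynomial.X ^ 3 +
       Polynomial.C 972 * Polynomial.X ^ 4) with hf
  have hdeg : f.natDegree = 4 := by
    rw [hf]; compute_degree!
  have hlc : f.leadingCoeff = 7776 := by
    rw [Polynomial.leadingCoeff, hdeg, hf]
    simp [Polynomial.coeff_add, Polynomial.coeff_C_mul, Polynomial.coeff_X_pow,
      Polynomial.coeff_C, Polynomial.coeff_X]
    norm_num
  have hsplits : f.Splits := Polynomial.splits_iff_card_roots.mpr h
  have hcard : Multiset.card f.roots = 4 := by rw [h, hdeg]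
  obtain ⟨a, b, c, d, habcd⟩ := multiset_card_eq_four hcard
  have hprod := Polynomial.Splits.eq_prod_roots hsplits
  rw [habcd, hlc] at hprod
  have hprod' : f = Polynomial.C (7776 : ℝ) *
      ((Polynomial.X - Polynomial.C a) * ((Polynomial.X - Polynomial.C b) *
      ((Polynomial.X - Polynomial.C c) * (Polynomial.X - Polynomial.C d)))) := by
    rw [hprod]
    simp [Multiset.insert_eq_cons, Multiset.map_cons, Multiset.prod_cons, mul_assoc]
  have Ev : ∀ x : ℝ, 8 * (10 + 339*x + 2855*x^2 + 2736*x^3 + 972*x^4)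
      = 7776 * ((x - a) * ((x - b) * ((x - c) * (x - d)))) := by
    intro x
    have := congrArg (Polynomial.eval x) hprod'
    rw [hf] at this
    simpa using this
  have E1 := Ev 1
  have Em1 := Ev (-1)
  have E2 := Ev 2
  have Em2 := Ev (-2)
  have h1 : a + b + c + d = -76/27 := by
    linear_combination (-1/46656) * E1 + (1/46656) * Em1 + (1/93312) * E2 + (-1/93312) * Em2
  have h2 : a*b + a*c + a*d + b*c + b*d + c*d = 2855/972 := by
    linear_combination (1/46656) * E1 + (1/46656) * Em1 + (-1/46656) * E2 + (-1/46656) * Em2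
  have h3 : a*b*c + a*b*d + a*c*d + b*c*d = -113/324 := by
    linear_combination (1/11664) * E1 + (-1/11664) * Em1 + (-1/93312) * E2 + (1/93312) * Em2
  have h4 : a*b*c*d = 5/486 := by
    linear_combination (-1/11664) * E1 + (-1/11664) * Em1 + (1/46656) * E2 + (1/46656) * Em2
  have hp2 : a^2 + b^2 + c^2 + d^2 = 2987/1458 := by
    linear_combination (a + b + c + d - 76/27) * h1 - 2 * h2
  have hp3 : a^3 + b^3 + c^3 + d^3 = 114539/78732 := by
    linear_combination (a + b + c + d) * hp2 + (2987/1458 - 2855/972) * h1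
      - (a + b + c + d) * h2 + 3 * h3
  have hp4 : a^4 + b^4 + c^4 + d^4 = -38994775/4251528 := by
    linear_combination (a + b + c + d) * hp3
      + (114539/78732 + (a*b*c + a*b*d + a*c*d + b*c*d)) * h1
      - (a*b + a*c + a*d + b*c + b*d + c*d) * hp2 - (2987/1458) * h2
      + (-76/27) * h3 - 4 * h4
  nlinarith [sq_nonneg (a^2), sq_nonneg (b^2), sq_nonneg (c^2), sq_nonneg (d^2), hp4]
end
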